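/- arXiv:math/0510024 — 8 statements merged into one kernel-verified Lean document; each statement's English description precedes it below -/
import Mathlib

section
/- The Paving Conjecture for finite matrices is equivalent to the Paving Conjecture for bounded operators on ℓ₂: i.e., (for all ε>0 there exists r such that every zero-diagonal operator T on ℓ₂ⁿ for any n admits a partition {A_j}_{j=1}^r of {1,...,n} with ‖Q_{A_j} T Q_{A_j}‖ ≤ ε‖T‖) if and only if (for all ε>0 there exists r such that every zero-diagonal bounded operator T on ℓ₂(ℕ) admits a partition {A_j}_{j=1}^r of ℕ with ‖Q_{A_j} T Q_{A_j}‖ ≤ ε‖T‖). -/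
/- The Paving Conjecture for finite matrices is equivalent to the Paving Conjecture for
bounded operators on `ℓ₂(ℕ)`. -/

noncomputable section

open scoped ENNReal

/-- Truncation of an `ℓ²` sequence to a set of coordinates. -/
def truncSeq {I : Type*} (A : Set I) (f : lp (fun _ : I => ℂ) 2) : lp (fun _ : I => ℂ) 2 :=
  ⟨A.indicator f, by
    apply memℓp_gen
    refine Summable.of_nonneg_of_le (fun i => by positivity) (fun i => ?_)
      ((lp.memℓp f).summable (by norm_num))
    exact Real.rpow_le_rpow (norm_nonneg _) (norm_indicator_le_norm_self _ _) (by norm_num)⟩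

/-- The diagonal projection `Q_A` on `ℓ₂(I)`. -/
def Qop {I : Type*} (A : Set I) : lp (fun _ : I => ℂ) 2 →L[ℂ] lp (fun _ : I => ℂ) 2 :=
  LinearMap.mkContinuous
    { toFun := truncSeq A
      map_add' := fun f g => lp.ext (funext fun i => by
        show A.indicator (⇑(f + g)) i = A.indicator (⇑f) i + A.indicator (⇑g) i
        by_cases h : i ∈ A
        · rw [Set.indicator_of_mem h, Set.indicator_of_mem h, Set.indicator_of_mem h]; rfl
        · rw [Set.indicator_of_notMem h, Set.indicator_of_notMem h, Set.indicator_of_notMem h,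
            add_zero])
      map_smul' := fun c f => lp.ext (funext fun i => by
        by_cases h : i ∈ A <;>
          simp [truncSeq, h, lp.coeFn_smul, Set.indicator_of_mem, Set.indicator_of_notMem]) }
    1 (fun f => by
      rw [one_mul]
      refine lp.norm_le_of_tsum_le (p := 2) (by norm_num) (norm_nonneg f) ?_
      have h1 : ‖f‖ ^ (2 : ℝ≥0∞).toReal = ∑' i, ‖f i‖ ^ (2 : ℝ≥0∞).toReal :=
        lp.norm_rpow_eq_tsum (by norm_num) f
      rw [h1]
      refine Summable.tsum_le_tsum (fun i => ?_) ?_ ((lp.memℓp f).summable (by norm_num))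
      · exact Real.rpow_le_rpow (norm_nonneg _) (norm_indicator_le_norm_self _ _) (by norm_num)
      · refine Summable.of_nonneg_of_le (fun i => by positivity) (fun i => ?_)
          ((lp.memℓp f).summable (by norm_num))
        exact Real.rpow_le_rpow (norm_nonneg _) (norm_indicator_le_norm_self _ _) (by norm_num))

/-- The diagonal projection `Q_A` on `ℓ₂ⁿ`. -/
def Qfin {n : ℕ} (A : Finset (Fin n)) :
    EuclideanSpace ℂ (Fin n) →L[ℂ] EuclideanSpace ℂ (Fin n) :=
  LinearMap.toContinuousLinearMap
    { toFun := fun f => WithLp.toLp 2 (fun i => if i ∈ A then f i else 0)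
      map_add' := fun f g => by
        ext i
        by_cases h : i ∈ A <;> simp [h, PiLp.add_apply]
      map_smul' := fun c f => by
        ext i
        by_cases h : i ∈ A <;> simp [h, PiLp.smul_apply] }


section Aux

open scoped ComplexConjugate

local notation "H₂" => lp (fun _ : ℕ => ℂ) 2

lemma Qop_apply {I : Type*} (A : Set I) (f : lp (fun _ : I => ℂ) 2) :
    ⇑(Qop A f) = A.indicator ⇑f := rfl

lemma Qop_norm_le {I : Type*} (A : Set I) : ‖Qop (I := I) A‖ ≤ 1 :=
  LinearMap.mkContinuous_norm_le _ zero_le_one _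

lemma Qop_norm_apply_le {I : Type*} (A : Set I) (f : lp (fun _ : I => ℂ) 2) :
    ‖Qop A f‖ ≤ ‖f‖ := by
  calc ‖Qop A f‖ ≤ ‖Qop (I := I) A‖ * ‖f‖ := (Qop A).le_opNorm f
  _ ≤ 1 * ‖f‖ := by gcongr; exact Qop_norm_le A
  _ = ‖f‖ := one_mul _

lemma Qop_comp {I : Type*} (A B : Set I) :
    (Qop (I := I) A).comp (Qop B) = Qop (A ∩ B) := by
  refine ContinuousLinearMap.ext fun f => lp.ext (funext fun i => ?_)
  simp only [ContinuousLinearMap.comp_apply, Qop_apply]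
  rw [Set.indicator_indicator]

lemma Qfin_apply {n : ℕ} (A : Finset (Fin n)) (f : EuclideanSpace ℂ (Fin n)) (i : Fin n) :
    Qfin A f i = if i ∈ A then f i else 0 := rfl

lemma Qfin_comp {n : ℕ} (A B : Finset (Fin n)) :
    (Qfin A).comp (Qfin B) = Qfin (A ∩ B) := by
  refine ContinuousLinearMap.ext fun f => PiLp.ext fun i => ?_
  simp only [ContinuousLinearMap.comp_apply, Qfin_apply, Finset.mem_inter]
  by_cases hA : i ∈ A <;> by_cases hB : i ∈ B <;> simp [hA, hB]

lemma Qfin_norm_apply_le {n : ℕ} (A : Finset (Fin n)) (f : EuclideanSpace ℂ (Fin n)) :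
    ‖Qfin A f‖ ≤ ‖f‖ := by
  rw [EuclideanSpace.norm_eq, EuclideanSpace.norm_eq]
  apply Real.sqrt_le_sqrt
  refine Finset.sum_le_sum fun i _ => ?_
  rw [Qfin_apply]
  by_cases h : i ∈ A
  · simp [h]
  · simp [h]
  -- positivity fallback
  
lemma Qfin_norm_le {n : ℕ} (A : Finset (Fin n)) : ‖Qfin A‖ ≤ 1 :=
  ContinuousLinearMap.opNorm_le_bound _ zero_le_one fun f => by
    rw [one_mul]; exact Qfin_norm_apply_le A f

end Aux
section Aux2

local notation "H₂" => lp (fun _ : ℕ => ℂ) 2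

/-- Extension by zero of a finite vector into `ℓ₂(ℕ)`, as a function. -/
def extSeq (n : ℕ) (f : EuclideanSpace ℂ (Fin n)) : H₂ :=
  ⟨fun i => if h : i < n then f ⟨i, h⟩ else 0, by
    apply memℓp_gen
    apply summable_of_ne_finset_zero (s := Finset.range n)
    intro i hi
    rw [dif_neg (by simpa using hi)]
    simp [Real.zero_rpow (by norm_num : (2 : ℝ≥0∞).toReal ≠ 0)]⟩

lemma extSeq_apply (n : ℕ) (f : EuclideanSpace ℂ (Fin n)) (i : ℕ) :
    (extSeq n f : ∀ _ : ℕ, ℂ) i = if h : i < n then f ⟨i, h⟩ else 0 := rfl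

lemma extSeq_apply_fin (n : ℕ) (f : EuclideanSpace ℂ (Fin n)) (i : Fin n) :
    (extSeq n f : ∀ _ : ℕ, ℂ) i = f i := by
  rw [extSeq_apply, dif_pos i.isLt]

lemma norm_extSeq (n : ℕ) (f : EuclideanSpace ℂ (Fin n)) : ‖extSeq n f‖ ≤ ‖f‖ := by
  refine lp.norm_le_of_tsum_le (by norm_num) (norm_nonneg f) ?_
  have h1 : ∑' i : ℕ, ‖(extSeq n f : ∀ _ : ℕ, ℂ) i‖ ^ (2 : ℝ≥0∞).toReal
      = ∑ i ∈ Finset.range n, ‖(extSeq n f : ∀ _ : ℕ, ℂ) i‖ ^ (2 : ℝ≥0∞).toReal := by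
    refine tsum_eq_sum fun i hi => ?_
    rw [extSeq_apply, dif_neg (by simpa using hi)]
    simp [Real.zero_rpow (by norm_num : (2 : ℝ≥0∞).toReal ≠ 0)]
  have h2 : ∑ i ∈ Finset.range n, ‖(extSeq n f : ∀ _ : ℕ, ℂ) i‖ ^ (2 : ℝ≥0∞).toReal
      = ∑ i : Fin n, ‖f i‖ ^ (2 : ℝ≥0∞).toReal := by
    rw [← Fin.sum_univ_eq_sum_range (fun i => ‖(extSeq n f : ∀ _ : ℕ, ℂ) i‖ ^ (2 : ℝ≥0∞).toReal) n]
    exact Finset.sum_congr rfl fun i _ => by rw [extSeq_apply_fin]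
  have h3 : ‖f‖ ^ (2 : ℝ≥0∞).toReal = ∑ i : Fin n, ‖f i‖ ^ (2 : ℝ≥0∞).toReal := by
    have : (2 : ℝ≥0∞).toReal = ((2 : ℕ) : ℝ) := by norm_num
    rw [this]
    simp_rw [Real.rpow_natCast]
    rw [EuclideanSpace.norm_eq, Real.sq_sqrt (Finset.sum_nonneg fun i _ => by positivity)]
  rw [h1, h2, h3]

/-- The isometric embedding `ℓ₂ⁿ → ℓ₂(ℕ)`. -/
def Jop (n : ℕ) : EuclideanSpace ℂ (Fin n) →L[ℂ] H₂ :=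
  LinearMap.mkContinuous
    { toFun := extSeq n
      map_add' := fun f g => lp.ext (funext fun i => by
        by_cases h : i < n <;>
          simp [extSeq_apply, h, lp.coeFn_add, PiLp.add_apply])
      map_smul' := fun c f => lp.ext (funext fun i => by
        by_cases h : i < n <;>
          simp [extSeq_apply, h, lp.coeFn_smul, PiLp.smul_apply]) }
    1 (fun f => by rw [one_mul]; exact norm_extSeq n f)

lemma Jop_apply (n : ℕ) (f : EuclideanSpace ℂ (Fin n)) (i : ℕ) :
    (Jop n f : ∀ _ : ℕ, ℂ) i = if h : i < n then f ⟨i, h⟩ else 0 := rfl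

lemma Jop_norm_le (n : ℕ) : ‖Jop n‖ ≤ 1 :=
  LinearMap.mkContinuous_norm_le _ zero_le_one _

/-- The coordinate projection `ℓ₂(ℕ) → ℓ₂ⁿ`. -/
def Pop (n : ℕ) : H₂ →L[ℂ] EuclideanSpace ℂ (Fin n) :=
  LinearMap.mkContinuous
    { toFun := fun f => WithLp.toLp 2 (fun i : Fin n => f i)
      map_add' := fun f g => PiLp.ext fun i => by simp [lp.coeFn_add]
      map_smul' := fun c f => PiLp.ext fun i => by simp [lp.coeFn_smul] }
    1 (fun f => by
      rw [one_mul, EuclideanSpace.norm_eq]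
      have key : ∑ i : Fin n, ‖(f : ∀ _ : ℕ, ℂ) (i : ℕ)‖ ^ 2 ≤ ‖f‖ ^ 2 := by
        have h2 : ∑ i : Fin n, ‖(f : ∀ _ : ℕ, ℂ) (i : ℕ)‖ ^ 2
            = ∑ i ∈ Finset.range n, ‖(f : ∀ _ : ℕ, ℂ) i‖ ^ 2 :=
          Fin.sum_univ_eq_sum_range (fun i => ‖(f : ∀ _ : ℕ, ℂ) i‖ ^ 2) n
        have h3 := lp.sum_rpow_le_norm_rpow (by norm_num : 0 < (2 : ℝ≥0∞).toReal) f
          (Finset.range n)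
        have h4 : (2 : ℝ≥0∞).toReal = ((2 : ℕ) : ℝ) := by norm_num
        rw [h4] at h3
        simp_rw [Real.rpow_natCast] at h3
        rw [h2]; exact h3
      calc Real.sqrt (∑ i : Fin n, ‖(f : ∀ _ : ℕ, ℂ) (i : ℕ)‖ ^ 2)
          ≤ Real.sqrt (‖f‖ ^ 2) := Real.sqrt_le_sqrt key
        _ = ‖f‖ := by rw [Real.sqrt_sq (norm_nonneg f)])

lemma Pop_apply (n : ℕ) (f : H₂) (i : Fin n) : Pop n f i = f i := rfl

lemma Pop_norm_le (n : ℕ) : ‖Pop n‖ ≤ 1 :=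
  LinearMap.mkContinuous_norm_le _ zero_le_one _

/-- Norm of a conjugation `P ∘ S ∘ J` by contractions is at most `‖S‖`. -/
lemma opNorm_conj_le {X Y : Type*} [NormedAddCommGroup X] [NormedSpace ℂ X]
    [NormedAddCommGroup Y] [NormedSpace ℂ Y]
    (P : X →L[ℂ] Y) (S : X →L[ℂ] X) (J : Y →L[ℂ] X) (hP : ‖P‖ ≤ 1) (hJ : ‖J‖ ≤ 1) :
    ‖P.comp (S.comp J)‖ ≤ ‖S‖ := by
  calc ‖P.comp (S.comp J)‖ ≤ ‖P‖ * ‖S.comp J‖ := ContinuousLinearMap.opNorm_comp_le _ _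
    _ ≤ ‖P‖ * (‖S‖ * ‖J‖) := by gcongr; exact ContinuousLinearMap.opNorm_comp_le _ _
    _ ≤ 1 * (‖S‖ * 1) := by gcongr
    _ = ‖S‖ := by ring

end Aux2
section Aux3

open Classical in
/-- The finite trace of a set of naturals on `Fin n`. -/
def finOf (n : ℕ) (A : Set ℕ) : Finset (Fin n) :=
  Finset.univ.filter (fun i => (i : ℕ) ∈ A)

lemma mem_finOf {n : ℕ} {A : Set ℕ} {i : Fin n} : i ∈ finOf n A ↔ (i : ℕ) ∈ A := by
  simp [finOf]

/-- Compression of `Qop A` to `ℓ₂ⁿ` is `Qfin (finOf n A)`. -/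
lemma Pop_Qop_Jop (n : ℕ) (A : Set ℕ) :
    (Pop n).comp ((Qop A).comp (Jop n)) = Qfin (finOf n A) := by
  refine ContinuousLinearMap.ext fun f => PiLp.ext fun i => ?_
  simp only [ContinuousLinearMap.comp_apply, Qfin_apply, Pop_apply, Qop_apply]
  by_cases h : (i : ℕ) ∈ A
  · rw [Set.indicator_of_mem h, Jop_apply, dif_pos i.isLt, if_pos (mem_finOf.2 h), Fin.eta]
  · rw [Set.indicator_of_notMem h, if_neg (fun hc => h (mem_finOf.1 hc))]

/-- A diagonal projection onto a set contained in `[0, n)` factors through `ℓ₂ⁿ`. -/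
lemma Qop_eq_Jop_Qfin_Pop (n : ℕ) (B : Set ℕ) (hB : ∀ i ∈ B, i < n) :
    Qop B = (Jop n).comp ((Qfin (finOf n B)).comp (Pop n)) := by
  refine ContinuousLinearMap.ext fun f => lp.ext (funext fun i => ?_)
  simp only [ContinuousLinearMap.comp_apply, Qop_apply, Jop_apply]
  by_cases h : i ∈ B
  · rw [Set.indicator_of_mem h, dif_pos (hB i h)]
    rw [Qfin_apply, if_pos (mem_finOf.2 h), Pop_apply]
  · rw [Set.indicator_of_notMem h]
    by_cases hn : i < n
    · rw [dif_pos hn, Qfin_apply, if_neg (fun hc => h (mem_finOf.1 hc))]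
    · rw [dif_neg hn]

end Aux3
section Aux4

open scoped ComplexConjugate

local notation "H₂" => lp (fun _ : ℕ => ℂ) 2

lemma lp_single_apply' (i j : ℕ) (a : ℂ) :
    (lp.single 2 i a : ∀ _ : ℕ, ℂ) j = if j = i then a else 0 := by
  rcases eq_or_ne j i with h | h
  · subst h; rw [lp.single_apply_self, if_pos rfl]
  · rw [lp.single_apply_ne _ _ _ h, if_neg h]

lemma Jop_single (n : ℕ) (i : Fin n) :
    Jop n (EuclideanSpace.single i 1) = lp.single 2 (i : ℕ) 1 := by
  refine lp.ext (funext fun k => ?_)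
  rw [Jop_apply, lp.single_apply, Pi.single_apply]
  by_cases h : k = (i : ℕ)
  · subst h
    rw [dif_pos i.isLt, if_pos rfl, EuclideanSpace.single_apply, if_pos (Fin.ext rfl)]
  · rw [if_neg h]
    by_cases hn : k < n
    · rw [dif_pos hn, EuclideanSpace.single_apply,
        if_neg (fun hc => h (congrArg Fin.val hc))]
    · rw [dif_neg hn]

lemma Pop_single_of_lt (n : ℕ) (i : ℕ) (h : i < n) :
    Pop n (lp.single 2 i (1 : ℂ)) = EuclideanSpace.single (⟨i, h⟩ : Fin n) 1 := by
  refine PiLp.ext fun k => ?_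
  rw [Pop_apply, lp_single_apply', EuclideanSpace.single_apply]
  by_cases hk : (k : ℕ) = i
  · rw [if_pos hk, if_pos (Fin.ext hk)]
  · rw [if_neg hk, if_neg (fun hc => hk (congrArg Fin.val hc))]

/-- Zero diagonal in the `ℓ₂(ℕ)` sense means vanishing diagonal entries. -/
lemma diag_entry_eq_zero_l2 {T : H₂ →L[ℂ] H₂}
    (hT : ∀ i : ℕ, (inner ℂ (T (lp.single 2 i 1)) (lp.single 2 i 1) : ℂ) = 0) (i : ℕ) :
    (T (lp.single 2 i 1) : ∀ _ : ℕ, ℂ) i = 0 := by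
  have h := hT i
  rw [lp.inner_single_right, RCLike.inner_apply', mul_one] at h
  simpa using congrArg (starRingEnd ℂ) h

lemma diag_entry_eq_zero_fin {n : ℕ}
    {T : EuclideanSpace ℂ (Fin n) →L[ℂ] EuclideanSpace ℂ (Fin n)}
    (hT : ∀ i : Fin n,
      (inner ℂ (T (EuclideanSpace.single i 1)) (EuclideanSpace.single i 1) : ℂ) = 0) (i : Fin n) :
    T (EuclideanSpace.single i 1) i = 0 := by
  have h := hT i
  rw [EuclideanSpace.inner_single_right, one_mul] at h
  simpa using congrArg (starRingEnd ℂ) h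

end Aux4
section Aux5

open Filter

local notation "H₂" => lp (fun _ : ℕ => ℂ) 2

lemma Qop_sub_self_normsq (g : H₂) (m : ℕ) :
    ‖Qop {i | i < m} g - g‖ ^ 2
      = ∑' i : { x : ℕ // x ∉ Finset.range m }, ‖(g : ∀ _ : ℕ, ℂ) ↑i‖ ^ 2 := by
  have h0 : ∀ h : H₂, ‖h‖ ^ 2 = ∑' i : ℕ, ‖(h : ∀ _ : ℕ, ℂ) i‖ ^ 2 := by
    intro h
    have := lp.norm_rpow_eq_tsum (p := 2) (by norm_num) h
    have h4 : (2 : ℝ≥0∞).toReal = ((2 : ℕ) : ℝ) := by norm_num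
    rw [h4] at this
    simp_rw [Real.rpow_natCast] at this
    exact_mod_cast this
  rw [h0]
  refine Eq.trans ?_
    (tsum_subtype {x : ℕ | x ∉ Finset.range m} (fun i => ‖(g : ∀ _ : ℕ, ℂ) i‖ ^ 2)).symm
  refine tsum_congr fun i => ?_
  have hcoe : ((Qop {i | i < m} g - g : H₂) : ∀ _ : ℕ, ℂ) i
      = Set.indicator {i : ℕ | i < m} (⇑g) i - (g : ∀ _ : ℕ, ℂ) i := by
    rw [lp.coeFn_sub, Pi.sub_apply, Qop_apply]
  rw [hcoe]
  by_cases h : i < m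
  · rw [Set.indicator_of_mem (show i ∈ {i : ℕ | i < m} from h), sub_self,
      Set.indicator_of_notMem (show i ∉ {x : ℕ | x ∉ Finset.range m} by simpa using h)]
    simp
  · rw [Set.indicator_of_notMem (show i ∉ {i : ℕ | i < m} from h), zero_sub, norm_neg,
      Set.indicator_of_mem (show i ∈ {x : ℕ | x ∉ Finset.range m} by simpa using h)]

lemma tendsto_Qop_Iio (g : H₂) :
    Tendsto (fun m => Qop {i | i < m} g) atTop (nhds g) := by
  rw [tendsto_iff_norm_sub_tendsto_zero]
  have h1 : Tendsto (fun m => ‖Qop {i | i < m} g - g‖ ^ 2) atTop (nhds 0) := by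
    simp_rw [Qop_sub_self_normsq g]
    exact (tendsto_tsum_compl_atTop_zero
      (fun i : ℕ => ‖(g : ∀ _ : ℕ, ℂ) i‖ ^ 2)).comp tendsto_finset_range
  have h2 := (Real.continuous_sqrt.tendsto 0).comp h1
  simp only [Function.comp_def, Real.sqrt_zero] at h2
  refine h2.congr fun m => ?_
  rw [Real.sqrt_sq (norm_nonneg _)]

lemma opNorm_le_of_trunc (S : H₂ →L[ℂ] H₂) (c : ℝ)
    (h : ∀ m : ℕ, ‖(Qop {i | i < m}).comp (S.comp (Qop {i | i < m}))‖ ≤ c) : ‖S‖ ≤ c := by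
  have hc : 0 ≤ c := le_trans (norm_nonneg _) (h 0)
  refine ContinuousLinearMap.opNorm_le_bound S hc fun f => ?_
  have hlim : Tendsto (fun m => Qop {i | i < m} (S (Qop {i | i < m} f))) atTop (nhds (S f)) := by
    rw [tendsto_iff_norm_sub_tendsto_zero]
    have hSf : Tendsto (fun m => ‖S (Qop {i | i < m} f) - S f‖) atTop (nhds 0) := by
      have := (S.continuous.tendsto f).comp (tendsto_Qop_Iio f)
      rw [tendsto_iff_norm_sub_tendsto_zero] at this
      simpa [Function.comp_def] using this
    have hQSf : Tendsto (fun m => ‖Qop {i | i < m} (S f) - S f‖) atTop (nhds 0) := by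
      have := tendsto_Qop_Iio (S f)
      rwa [tendsto_iff_norm_sub_tendsto_zero] at this
    have hsum := hSf.add hQSf
    rw [add_zero] at hsum
    refine squeeze_zero (fun m => norm_nonneg _) (fun m => ?_) hsum
    calc ‖Qop {i | i < m} (S (Qop {i | i < m} f)) - S f‖
        = ‖Qop {i | i < m} (S (Qop {i | i < m} f) - S f) + (Qop {i | i < m} (S f) - S f)‖ := by
          rw [map_sub]; congr 1; abel
      _ ≤ ‖Qop {i | i < m} (S (Qop {i | i < m} f) - S f)‖ + ‖Qop {i | i < m} (S f) - S f‖ :=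
          norm_add_le _ _
      _ ≤ ‖S (Qop {i | i < m} f) - S f‖ + ‖Qop {i | i < m} (S f) - S f‖ := by
          gcongr; exact Qop_norm_apply_le _ _
  have hev : ∀ m : ℕ, ‖Qop {i | i < m} (S (Qop {i | i < m} f))‖ ≤ c * ‖f‖ := by
    intro m
    have : Qop {i | i < m} (S (Qop {i | i < m} f))
        = ((Qop {i | i < m}).comp (S.comp (Qop {i | i < m}))) f := rfl
    rw [this]
    calc ‖((Qop {i | i < m}).comp (S.comp (Qop {i | i < m}))) f‖
        ≤ ‖(Qop {i | i < m}).comp (S.comp (Qop {i | i < m}))‖ * ‖f‖ :=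
          ContinuousLinearMap.le_opNorm _ _
      _ ≤ c * ‖f‖ := by gcongr; exact h m
  exact le_of_tendsto' hlim.norm hev
  
end Aux5
theorem paving_finite_iff_paving_l2 :
    -- Paving Conjecture for matrices on `ℓ₂ⁿ`
    (∀ ε : ℝ, 0 < ε → ∃ r : ℕ,
      ∀ (n : ℕ) (T : EuclideanSpace ℂ (Fin n) →L[ℂ] EuclideanSpace ℂ (Fin n)),
        (∀ i : Fin n, (inner ℂ (T (EuclideanSpace.single i 1)) (EuclideanSpace.single i 1) : ℂ) = 0) →
        ∃ A : Fin r → Finset (Fin n),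
          (∀ j k, j ≠ k → Disjoint (A j) (A k)) ∧
          (Finset.univ.biUnion A = Finset.univ) ∧
          ∀ j, ‖(Qfin (A j)).comp (T.comp (Qfin (A j)))‖ ≤ ε * ‖T‖)
    ↔
    -- Paving Conjecture for bounded operators on `ℓ₂(ℕ)`
    (∀ ε : ℝ, 0 < ε → ∃ r : ℕ,
      ∀ T : lp (fun _ : ℕ => ℂ) 2 →L[ℂ] lp (fun _ : ℕ => ℂ) 2,
        (∀ i : ℕ, (inner ℂ (T (lp.single 2 i 1)) (lp.single 2 i 1) : ℂ) = 0) →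
        ∃ A : Fin r → Set ℕ,
          (∀ j k, j ≠ k → Disjoint (A j) (A k)) ∧
          (⋃ j, A j) = Set.univ ∧
          ∀ j, ‖(Qop (A j)).comp (T.comp (Qop (A j)))‖ ≤ ε * ‖T‖) := by
  have hQ : ∀ (C D : Set ℕ) (x : lp (fun _ : ℕ => ℂ) 2),
      Qop C (Qop D x) = Qop (C ∩ D) x := by
    intro C D x
    have := ContinuousLinearMap.ext_iff.1 (Qop_comp C D) x
    simpa using this
  constructor
  · -- finite paving implies paving on ℓ₂(ℕ)
    intro hfin ε hε
    obtain ⟨r, hr⟩ := hfin ε hε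
    refine ⟨r, fun T hT => ?_⟩
    set Tn : ∀ n : ℕ, EuclideanSpace ℂ (Fin n) →L[ℂ] EuclideanSpace ℂ (Fin n) :=
      fun n => (Pop n).comp (T.comp (Jop n)) with hTndef
    have hTn_norm : ∀ n, ‖Tn n‖ ≤ ‖T‖ :=
      fun n => opNorm_conj_le _ _ _ (Pop_norm_le n) (Jop_norm_le n)
    have hTn_diag : ∀ n (i : Fin n),
        (inner ℂ (Tn n (EuclideanSpace.single i 1)) (EuclideanSpace.single i 1) : ℂ) = 0 := by
      intro n i
      rw [EuclideanSpace.inner_single_right, one_mul]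
      have h1 : Tn n (EuclideanSpace.single i 1) i = 0 := by
        show (Pop n (T (Jop n (EuclideanSpace.single i 1)))) i = 0
        rw [Jop_single, Pop_apply]
        exact diag_entry_eq_zero_l2 hT i
      rw [h1, map_zero]
    choose 𝒜 hdisj hcover hbound using fun n => hr n (Tn n) (hTn_diag n)
    have hcol' : ∀ n (i : Fin n), ∃ j, i ∈ 𝒜 n j := by
      intro n i
      have h1 : i ∈ Finset.univ.biUnion (𝒜 n) := by
        rw [hcover n]; exact Finset.mem_univ i
      obtain ⟨j, _, hj⟩ := Finset.mem_biUnion.1 h1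
      exact ⟨j, hj⟩
    choose col hcol using hcol'
    set U : Ultrafilter ℕ := Ultrafilter.of Filter.atTop with hUdef
    have hU : ∀ m : ℕ, {n : ℕ | m ≤ n} ∈ U :=
      fun m => Ultrafilter.of_le Filter.atTop (Filter.mem_atTop m)
    have hex : ∀ i : ℕ, ∃ j : Fin r, {n : ℕ | ∃ h : i < n, col n ⟨i, h⟩ = j} ∈ U := by
      intro i
      by_contra hcon
      push_neg at hcon
      have hcompl : (⋂ j : Fin r, {n : ℕ | ∃ h : i < n, col n ⟨i, h⟩ = j}ᶜ) ∈ U :=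
        Filter.iInter_mem.2 fun j => (Ultrafilter.compl_mem_iff_notMem).2 (hcon j)
      obtain ⟨n, hn⟩ := Ultrafilter.nonempty_of_mem (Filter.inter_mem (hU (i + 1)) hcompl)
      obtain ⟨hn1, hn2⟩ := hn
      have hin : i < n := Nat.lt_of_lt_of_le (Nat.lt_succ_self i) hn1
      have := Set.mem_iInter.1 hn2 (col n ⟨i, hin⟩)
      exact this ⟨hin, rfl⟩
    choose c hc using hex
    refine ⟨fun j => {i | c i = j}, ?_, ?_, ?_⟩
    · intro j k hjk
      refine Set.disjoint_left.2 fun i hij hik => hjk ?_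
      rw [← hij, ← hik]
    · refine Set.eq_univ_of_forall fun i => Set.mem_iUnion.2 ⟨c i, rfl⟩
    · intro j
      apply opNorm_le_of_trunc
      intro m
      set B : Set ℕ := {i | c i = j} ∩ {i | i < m} with hBdef
      have hcomp : (Qop {i | i < m}).comp
            (((Qop {i | c i = j}).comp (T.comp (Qop {i | c i = j}))).comp (Qop {i | i < m}))
          = (Qop B).comp (T.comp (Qop B)) := by
        refine ContinuousLinearMap.ext fun f => ?_
        simp only [ContinuousLinearMap.comp_apply]
        rw [hQ, hQ, Set.inter_comm {i | i < m} {i | c i = j}]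
      rw [hcomp]
      -- choose a large n whose coloring agrees with c below m
      have hW : ({n : ℕ | m ≤ n} ∩
          ⋂ i ∈ Finset.range m, {n : ℕ | ∃ h : i < n, col n ⟨i, h⟩ = c i}) ∈ U :=
        Filter.inter_mem (hU m) ((Filter.biInter_finset_mem _).2 fun i _ => hc i)
      obtain ⟨n, hn⟩ := Ultrafilter.nonempty_of_mem hW
      obtain ⟨hmn, hagree'⟩ := hn
      have hagree : ∀ i ∈ Finset.range m, ∃ h : i < n, col n ⟨i, h⟩ = c i :=
        fun i hi => Set.mem_iInter₂.1 hagree' i hi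
      have hBlt : ∀ i ∈ B, i < n := fun i hi => lt_of_lt_of_le hi.2 hmn
      rw [Qop_eq_Jop_Qfin_Pop n B hBlt]
      have hre : ((Jop n).comp ((Qfin (finOf n B)).comp (Pop n))).comp
            (T.comp ((Jop n).comp ((Qfin (finOf n B)).comp (Pop n))))
          = (Jop n).comp
              (((Qfin (finOf n B)).comp ((Tn n).comp (Qfin (finOf n B)))).comp (Pop n)) := by
        refine ContinuousLinearMap.ext fun f => ?_
        simp only [hTndef, ContinuousLinearMap.comp_apply]
      rw [hre]
      have hsub : finOf n B ⊆ 𝒜 n j := by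
        intro i hi
        have hiB : (i : ℕ) ∈ B := mem_finOf.1 hi
        obtain ⟨hlt, hcoleq⟩ := hagree i (Finset.mem_range.2 hiB.2)
        have h2 := hcol n ⟨(i : ℕ), hlt⟩
        rw [hcoleq, hiB.1] at h2
        have h3 : (⟨(i : ℕ), hlt⟩ : Fin n) = i := Fin.ext rfl
        rwa [h3] at h2
      have hQf : ∀ x, Qfin (𝒜 n j) (Qfin (finOf n B) x) = Qfin (finOf n B) x := by
        intro x
        have := ContinuousLinearMap.ext_iff.1 (Qfin_comp (𝒜 n j) (finOf n B)) x
        simpa [Finset.inter_eq_right.2 hsub] using this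
      have hQf' : ∀ x, Qfin (finOf n B) (Qfin (𝒜 n j) x) = Qfin (finOf n B) x := by
        intro x
        have := ContinuousLinearMap.ext_iff.1 (Qfin_comp (finOf n B) (𝒜 n j)) x
        simpa [Finset.inter_eq_left.2 hsub] using this
      have hmid : (Qfin (finOf n B)).comp ((Tn n).comp (Qfin (finOf n B)))
          = (Qfin (finOf n B)).comp
              (((Qfin (𝒜 n j)).comp ((Tn n).comp (Qfin (𝒜 n j)))).comp (Qfin (finOf n B))) := by
        refine ContinuousLinearMap.ext fun f => ?_
        simp only [ContinuousLinearMap.comp_apply]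
        rw [hQf, hQf']
      calc ‖(Jop n).comp
            (((Qfin (finOf n B)).comp ((Tn n).comp (Qfin (finOf n B)))).comp (Pop n))‖
          ≤ ‖(Qfin (finOf n B)).comp ((Tn n).comp (Qfin (finOf n B)))‖ :=
            opNorm_conj_le _ _ _ (Jop_norm_le n) (Pop_norm_le n)
        _ = ‖(Qfin (finOf n B)).comp
              (((Qfin (𝒜 n j)).comp ((Tn n).comp (Qfin (𝒜 n j)))).comp (Qfin (finOf n B)))‖ := by
            rw [← hmid]
        _ ≤ ‖(Qfin (𝒜 n j)).comp ((Tn n).comp (Qfin (𝒜 n j)))‖ :=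
            opNorm_conj_le _ _ _ (Qfin_norm_le _) (Qfin_norm_le _)
        _ ≤ ε * ‖Tn n‖ := hbound n j
        _ ≤ ε * ‖T‖ := mul_le_mul_of_nonneg_left (hTn_norm n) hε.le
  · -- paving on ℓ₂(ℕ) implies finite paving
    intro hinf ε hε
    obtain ⟨r, hr⟩ := hinf ε hε
    refine ⟨r, fun n T hT => ?_⟩
    set Tt : lp (fun _ : ℕ => ℂ) 2 →L[ℂ] lp (fun _ : ℕ => ℂ) 2 :=
      (Jop n).comp (T.comp (Pop n)) with hTtdef
    have hTt_norm : ‖Tt‖ ≤ ‖T‖ := opNorm_conj_le _ _ _ (Jop_norm_le n) (Pop_norm_le n)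
    have hTt_diag : ∀ i : ℕ, (inner ℂ (Tt (lp.single 2 i 1)) (lp.single 2 i 1) : ℂ) = 0 := by
      intro i
      rw [lp.inner_single_right, RCLike.inner_apply', mul_one]
      have h1 : (Tt (lp.single 2 i 1) : ∀ _ : ℕ, ℂ) i = 0 := by
        show (Jop n (T (Pop n (lp.single 2 i 1))) : ∀ _ : ℕ, ℂ) i = 0
        by_cases h : i < n
        · rw [Pop_single_of_lt n i h, Jop_apply, dif_pos h]
          exact diag_entry_eq_zero_fin hT ⟨i, h⟩
        · rw [Jop_apply, dif_neg h]
      rw [h1, map_zero]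
    obtain ⟨A, hdisj, hcover, hbound⟩ := hr Tt hTt_diag
    refine ⟨fun j => finOf n (A j), ?_, ?_, ?_⟩
    · intro j k hjk
      refine Finset.disjoint_left.2 fun i hij hik => ?_
      exact (Set.disjoint_left.1 (hdisj j k hjk)) (mem_finOf.1 hij) (mem_finOf.1 hik)
    · refine Finset.eq_univ_of_forall fun i => ?_
      have h1 : (i : ℕ) ∈ ⋃ j, A j := by rw [hcover]; trivial
      obtain ⟨j, hj⟩ := Set.mem_iUnion.1 h1
      exact Finset.mem_biUnion.2 ⟨j, Finset.mem_univ j, mem_finOf.2 hj⟩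
    · intro j
      have key : (Qfin (finOf n (A j))).comp (T.comp (Qfin (finOf n (A j))))
          = (Pop n).comp (((Qop (A j)).comp (Tt.comp (Qop (A j)))).comp (Jop n)) := by
        have e : ∀ x, Pop n (Qop (A j) (Jop n x)) = Qfin (finOf n (A j)) x := by
          intro x
          have := ContinuousLinearMap.ext_iff.1 (Pop_Qop_Jop n (A j)) x
          simpa using this
        refine ContinuousLinearMap.ext fun f => ?_
        simp only [hTtdef, ContinuousLinearMap.comp_apply]
        rw [← e, ← e]
      rw [key]
      calc ‖(Pop n).comp (((Qop (A j)).comp (Tt.comp (Qop (A j)))).comp (Jop n))‖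
          ≤ ‖(Qop (A j)).comp (Tt.comp (Qop (A j)))‖ :=
            opNorm_conj_le _ _ _ (Pop_norm_le n) (Jop_norm_le n)
        _ ≤ ε * ‖Tt‖ := hbound j
        _ ≤ ε * ‖T‖ := mul_le_mul_of_nonneg_left hTt_norm hε.le
end
end

section
/- Let {f_i}_{i∈I} and {g_i}_{i∈I} be frames for a Hilbert space H with analysis operators T₁* and T₂* (equivalently, synthesis operators T₁, T₂ with T₁e_i = f_i, T₂e_i = g_i). Then the frames are equivalent (there exists an invertible bounded operator L on H with L f_i = g_i for all i) if and only if ker T₁ = ker T₂. -/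
open ContinuousLinearMap in
private lemma frame_adjoint_apply {H : Type*} [NormedAddCommGroup H] [InnerProductSpace ℂ H]
    [CompleteSpace H] {I : Type*} [DecidableEq I]
    (T : lp (fun _ : I => ℂ) 2 →L[ℂ] H) (x : H) (i : I) :
    (ContinuousLinearMap.adjoint T x) i = inner ℂ (T (lp.single 2 i 1)) x := by
  have h := lp.inner_single_left (𝕜 := ℂ) i (1:ℂ) (ContinuousLinearMap.adjoint T x)
  rw [ContinuousLinearMap.adjoint_inner_right] at h
  simpa using h.symm

private lemma lp_norm_sq {I : Type*} (a : lp (fun _ : I => ℂ) 2) :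
    ‖a‖ ^ 2 = ∑' i, ‖a i‖ ^ 2 := by
  have h := lp.norm_rpow_eq_tsum (p := 2) (by norm_num) a
  simpa [Real.rpow_natCast] using h

private lemma frame_adjoint_norm_sq {H : Type*} [NormedAddCommGroup H] [InnerProductSpace ℂ H]
    [CompleteSpace H] {I : Type*} [DecidableEq I]
    (T : lp (fun _ : I => ℂ) 2 →L[ℂ] H) (f : I → H)
    (hf : ∀ i, T (lp.single 2 i 1) = f i) (x : H) :
    ‖ContinuousLinearMap.adjoint T x‖ ^ 2 = ∑' i, ‖(inner ℂ x (f i) : ℂ)‖ ^ 2 := by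
  rw [lp_norm_sq]
  congr 1
  ext i
  rw [frame_adjoint_apply, hf, ← inner_conj_symm (f i) x, RCLike.norm_conj]

private lemma frame_synthesis_surjective {H : Type*} [NormedAddCommGroup H]
    [InnerProductSpace ℂ H] [CompleteSpace H] {I : Type*} [DecidableEq I]
    (T : lp (fun _ : I => ℂ) 2 →L[ℂ] H) (f : I → H)
    (hf : ∀ i, T (lp.single 2 i 1) = f i) (A : ℝ) (hA : 0 < A)
    (hlow : ∀ x : H, A * ‖x‖ ^ 2 ≤ ∑' i, ‖(inner ℂ x (f i) : ℂ)‖ ^ 2) :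
    Function.Surjective T := by
  set S : H →L[ℂ] H := T ∘L ContinuousLinearMap.adjoint T with hS
  have hkey : ∀ x : H, A * ‖x‖ ^ 2 ≤ RCLike.re (inner ℂ x (S x) : ℂ) := by
    intro x
    have h1 : (inner ℂ (ContinuousLinearMap.adjoint T x) (ContinuousLinearMap.adjoint T x) : ℂ)
        = inner ℂ x (S x) := ContinuousLinearMap.adjoint_inner_left T _ x
    have h2 : RCLike.re (inner ℂ x (S x) : ℂ) = ‖ContinuousLinearMap.adjoint T x‖ ^ 2 := by
      rw [← h1, inner_self_eq_norm_sq]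
    rw [h2, frame_adjoint_norm_sq T f hf]
    exact hlow x
  have hbound : ∀ x : H, A * ‖x‖ ≤ ‖S x‖ := by
    intro x
    rcases eq_or_ne x 0 with rfl | hx
    · simp
    · have h1 := hkey x
      have h2 : RCLike.re (inner ℂ x (S x) : ℂ) ≤ ‖x‖ * ‖S x‖ := by
        calc RCLike.re (inner ℂ x (S x) : ℂ) ≤ ‖(inner ℂ x (S x) : ℂ)‖ := RCLike.re_le_norm _
          _ ≤ ‖x‖ * ‖S x‖ := norm_inner_le_norm x (S x)
      have hx' : 0 < ‖x‖ := norm_pos_iff.mpr hx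
      nlinarith [h1, h2]
  have hanti : AntilipschitzWith (A⁻¹).toNNReal S := by
    apply S.antilipschitz_of_bound
    intro x
    have h := hbound x
    rw [Real.coe_toNNReal _ (by positivity)]
    rw [inv_mul_eq_div, le_div_iff₀ hA, mul_comm]
    exact h
  have hclosed : IsClosed (Set.range S) := hanti.isClosed_range S.uniformContinuous
  have hbot : (LinearMap.range (S : H →ₗ[ℂ] H))ᗮ = ⊥ := by
    rw [Submodule.eq_bot_iff]
    intro y hy
    have h0 : (inner ℂ (S y) y : ℂ) = 0 := hy (S y) ⟨y, rfl⟩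
    have h1 : (inner ℂ y (S y) : ℂ) = 0 := by
      rw [← inner_conj_symm, h0, map_zero]
    have h2 := hkey y
    rw [h1] at h2
    simp only [map_zero] at h2
    by_contra h
    have hpos : 0 < ‖y‖ := norm_pos_iff.mpr h
    nlinarith [mul_pos hA (mul_pos hpos hpos)]
  have htop : LinearMap.range (S : H →ₗ[ℂ] H) = ⊤ := by
    have hc : IsClosed ((LinearMap.range (S : H →ₗ[ℂ] H) : Submodule ℂ H) : Set H) := by
      have : ((LinearMap.range (S : H →ₗ[ℂ] H) : Submodule ℂ H) : Set H) = Set.range S := by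
        ext z; simp [LinearMap.mem_range]
      rw [this]; exact hclosed
    have := Submodule.topologicalClosure_eq_top_iff.mpr hbot
    rwa [hc.submodule_topologicalClosure_eq] at this
  intro y
  obtain ⟨x, hx⟩ := LinearMap.range_eq_top.mp htop y
  exact ⟨ContinuousLinearMap.adjoint T x, hx⟩

private lemma dense_span_lp_single {I : Type*} [DecidableEq I] :
    Dense ((Submodule.span ℂ (Set.range fun i : I => lp.single 2 i (1:ℂ)) :
      Submodule ℂ (lp (fun _ : I => ℂ) 2)) : Set (lp (fun _ : I => ℂ) 2)) := by
  rw [Submodule.dense_iff_topologicalClosure_eq_top, Submodule.topologicalClosure_eq_top_iff]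
  rw [Submodule.eq_bot_iff]
  intro y hy
  have hz : ∀ i : I, y i = 0 := by
    intro i
    have hmem : lp.single 2 i (1:ℂ) ∈ Submodule.span ℂ (Set.range fun i : I => lp.single 2 i (1:ℂ)) :=
      Submodule.subset_span ⟨i, rfl⟩
    have h0 : (inner ℂ (lp.single 2 i (1:ℂ)) y : ℂ) = 0 := hy _ hmem
    rw [lp.inner_single_left] at h0
    simpa using h0
  ext i
  simp [hz i]

/-- Two frames `{f_i}` and `{g_i}` with synthesis operators `T₁, T₂` are equivalent
(there is an invertible bounded operator `L` with `L f_i = g_i`) if and only if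
`ker T₁ = ker T₂`. -/
theorem frames_equivalent_iff_ker_eq
    {H : Type*} [NormedAddCommGroup H] [InnerProductSpace ℂ H] [CompleteSpace H]
    {I : Type*} [DecidableEq I]
    (T₁ T₂ : lp (fun _ : I => ℂ) 2 →L[ℂ] H) (f g : I → H)
    (hf : ∀ i, T₁ (lp.single 2 i 1) = f i)
    (hg : ∀ i, T₂ (lp.single 2 i 1) = g i)
    (A₁ B₁ : ℝ) (hA₁ : 0 < A₁) (hB₁ : A₁ ≤ B₁)
    (hframe₁ : ∀ x : H,
      Summable (fun i => ‖(inner ℂ x (f i) : ℂ)‖ ^ 2) ∧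
      A₁ * ‖x‖ ^ 2 ≤ ∑' i, ‖(inner ℂ x (f i) : ℂ)‖ ^ 2 ∧
      ∑' i, ‖(inner ℂ x (f i) : ℂ)‖ ^ 2 ≤ B₁ * ‖x‖ ^ 2)
    (A₂ B₂ : ℝ) (hA₂ : 0 < A₂) (hB₂ : A₂ ≤ B₂)
    (hframe₂ : ∀ x : H,
      Summable (fun i => ‖(inner ℂ x (g i) : ℂ)‖ ^ 2) ∧
      A₂ * ‖x‖ ^ 2 ≤ ∑' i, ‖(inner ℂ x (g i) : ℂ)‖ ^ 2 ∧
      ∑' i, ‖(inner ℂ x (g i) : ℂ)‖ ^ 2 ≤ B₂ * ‖x‖ ^ 2) :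
    (∃ L : H ≃L[ℂ] H, ∀ i, L (f i) = g i) ↔
      LinearMap.ker (T₁ : lp (fun _ : I => ℂ) 2 →ₗ[ℂ] H) =
        LinearMap.ker (T₂ : lp (fun _ : I => ℂ) 2 →ₗ[ℂ] H) := by
  constructor
  · rintro ⟨L, hL⟩
    have hT : T₂ = (L : H →L[ℂ] H).comp T₁ := by
      refine ContinuousLinearMap.ext_on (dense_span_lp_single (I := I)) ?_
      rintro _ ⟨i, rfl⟩
      simp [hf i, hg i, hL i]
    rw [hT]
    ext x
    simp only [LinearMap.mem_ker, ContinuousLinearMap.comp_apply,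
      ContinuousLinearMap.coe_coe]
    constructor
    · intro h; simp [h]
    · intro h
      have := L.injective (by simpa using h)
      simpa using this
  · intro hker
    have hsurj₁ : Function.Surjective T₁ :=
      frame_synthesis_surjective T₁ f hf A₁ hA₁ (fun x => (hframe₁ x).2.1)
    have hsurj₂ : Function.Surjective T₂ :=
      frame_synthesis_surjective T₂ g hg A₂ hA₂ (fun x => (hframe₂ x).2.1)
    set K : Submodule ℂ (lp (fun _ : I => ℂ) 2) := LinearMap.ker (T₁ : lp (fun _ : I => ℂ) 2 →ₗ[ℂ] H) with hKdef
    have hK₂ : LinearMap.ker (T₂ : lp (fun _ : I => ℂ) 2 →ₗ[ℂ] H) = K := hker.symm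
    have hKclosed : IsClosed (K : Set (lp (fun _ : I => ℂ) 2)) :=
      ContinuousLinearMap.isClosed_ker T₁
    haveI : CompleteSpace K := hKclosed.completeSpace_coe
    -- kernel and range of the restricted operators
    have hker' : ∀ T : lp (fun _ : I => ℂ) 2 →L[ℂ] H, LinearMap.ker (T : lp (fun _ : I => ℂ) 2 →ₗ[ℂ] H) = K →
        LinearMap.ker ((T.comp Kᗮ.subtypeL : Kᗮ →L[ℂ] H) : Kᗮ →ₗ[ℂ] H) = ⊥ := by
      intro T hT
      rw [Submodule.eq_bot_iff]
      intro x hx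
      have hx0 : T (x : lp (fun _ : I => ℂ) 2) = 0 := hx
      have hx1 : (x : lp (fun _ : I => ℂ) 2) ∈ K := hT.le (LinearMap.mem_ker.mpr hx0)
      have h0 : (inner ℂ (x : lp (fun _ : I => ℂ) 2) (x : lp (fun _ : I => ℂ) 2) : ℂ) = 0 :=
        Submodule.inner_right_of_mem_orthogonal hx1 x.2
      exact Subtype.ext (inner_self_eq_zero.mp h0)
    have hrange' : ∀ T : lp (fun _ : I => ℂ) 2 →L[ℂ] H, LinearMap.ker (T : lp (fun _ : I => ℂ) 2 →ₗ[ℂ] H) = K →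
        Function.Surjective T →
        LinearMap.range ((T.comp Kᗮ.subtypeL : Kᗮ →L[ℂ] H) : Kᗮ →ₗ[ℂ] H) = ⊤ := by
      intro T hT hsurj
      rw [LinearMap.range_eq_top]
      intro y
      obtain ⟨c, hc⟩ := hsurj y
      refine ⟨⟨c - (K.orthogonalProjectionOnto c : lp (fun _ : I => ℂ) 2), (by have hmem := K.sub_starProjection_mem_orthogonal c; rw [Submodule.starProjection_apply] at hmem; exact hmem)⟩, ?_⟩
      have hm : T ((K.orthogonalProjectionOnto c : lp (fun _ : I => ℂ) 2)) = 0 :=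
        LinearMap.mem_ker.mp (hT.ge (K.orthogonalProjectionOnto c).2)
      simp only [ContinuousLinearMap.coe_coe, ContinuousLinearMap.comp_apply, Submodule.subtypeL_apply, map_sub, hm,
        sub_zero]
      exact hc
    set T₁' := T₁.comp Kᗮ.subtypeL with hT₁'
    set T₂' := T₂.comp Kᗮ.subtypeL with hT₂'
    set e₁ := ContinuousLinearEquiv.ofBijective T₁' (hker' T₁ rfl) (hrange' T₁ rfl hsurj₁)
    set e₂ := ContinuousLinearEquiv.ofBijective T₂' (hker' T₂ hK₂) (hrange' T₂ hK₂ hsurj₂)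
    refine ⟨e₁.symm.trans e₂, fun i => ?_⟩
    set q : Kᗮ := ⟨lp.single 2 i 1 - (K.orthogonalProjectionOnto (lp.single 2 i 1) : lp (fun _ : I => ℂ) 2),
      (by have hmem := K.sub_starProjection_mem_orthogonal (lp.single 2 i (1:ℂ)); rw [Submodule.starProjection_apply] at hmem; exact hmem)⟩ with hq
    have hproj₁ : T₁ ((K.orthogonalProjectionOnto (lp.single 2 i 1) : lp (fun _ : I => ℂ) 2)) = 0 :=
      (K.orthogonalProjectionOnto (lp.single 2 i 1)).2
    have hproj₂ : T₂ ((K.orthogonalProjectionOnto (lp.single 2 i 1) : lp (fun _ : I => ℂ) 2)) = 0 :=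
      LinearMap.mem_ker.mp (hK₂.ge (K.orthogonalProjectionOnto (lp.single 2 i 1)).2)
    have he₁ : e₁ q = f i := by
      show T₁' q = f i
      simp only [hT₁', ContinuousLinearMap.comp_apply, Submodule.subtypeL_apply, hq, map_sub,
        hproj₁, sub_zero]
      exact hf i
    have he₂ : e₂ q = g i := by
      show T₂' q = g i
      simp only [hT₂', ContinuousLinearMap.comp_apply, Submodule.subtypeL_apply, hq, map_sub,
        hproj₂, sub_zero]
      exact hg i
    have hsymm : e₁.symm (f i) = q := by rw [← he₁, e₁.symm_apply_apply]
    rw [ContinuousLinearEquiv.trans_apply, hsymm, he₂]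
end

section
/- A family {f_i}_{i∈I} in a Hilbert space H is a Parseval frame for H if and only if there exists a Hilbert space ℓ₂(I) containing H (as a closed subspace, up to isometric identification) with orthonormal basis {e_i}_{i∈I} such that the orthogonal projection P of ℓ₂(I) onto H satisfies P e_i = f_i for all i ∈ I. -/
open scoped ENNReal

/-- Naimark's theorem: `{f_i}_{i∈I}` is a Parseval frame for `H` iff `H` embeds
isometrically into `ℓ₂(I)` in such a way that the orthogonal projection `P` of
`ℓ₂(I)` onto (the image of) `H` satisfies `P e_i = f_i` for all `i`. -/
theorem parseval_frame_iff_naimark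
    {H : Type*} [NormedAddCommGroup H] [InnerProductSpace ℂ H] [CompleteSpace H]
    {I : Type*} [DecidableEq I] (f : I → H) :
    (∀ x : H, HasSum (fun i => ‖(inner ℂ x (f i) : ℂ)‖ ^ 2) (‖x‖ ^ 2)) ↔
    ∃ (J : H →ₗᵢ[ℂ] lp (fun _ : I => ℂ) 2)
      (P : lp (fun _ : I => ℂ) 2 →L[ℂ] lp (fun _ : I => ℂ) 2),
      IsIdempotentElem P ∧ IsSelfAdjoint P ∧
      LinearMap.range P.toLinearMap = LinearMap.range J.toLinearMap ∧
      ∀ i, P (lp.single 2 i 1) = J (f i) := by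
  have hrpow : ∀ (a : ℝ), a ^ (2 : ℝ≥0∞).toReal = a ^ 2 := by
    intro a
    norm_num [ENNReal.toReal_ofNat, Real.rpow_natCast]
  constructor
  · intro h
    -- norms symmetric
    have hsym : ∀ (x : H) (i : I), ‖(inner ℂ (f i) x : ℂ)‖ = ‖(inner ℂ x (f i) : ℂ)‖ := by
      intro x i
      rw [← inner_conj_symm (f i) x]
      exact RCLike.norm_conj _
    have hmem : ∀ x : H, Memℓp (fun i => (inner ℂ (f i) x : ℂ)) 2 := by
      intro x
      apply memℓp_gen
      have := (h x).summable
      simp only [hrpow, hsym]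
      exact this
    let J₀ : H →ₗ[ℂ] lp (fun _ : I => ℂ) 2 :=
      { toFun := fun x => ⟨fun i => (inner ℂ (f i) x : ℂ), hmem x⟩
        map_add' := fun x y => by
          apply lp.ext
          funext i
          simp [inner_add_right]
          rfl
        map_smul' := fun c x => by
          apply lp.ext
          funext i
          simp [inner_smul_right] }
    have hnorm : ∀ x : H, ‖J₀ x‖ = ‖x‖ := by
      intro x
      have h1 := lp.hasSum_norm (p := 2) (by norm_num) (J₀ x)
      have h2' : HasSum (fun i => ‖(inner ℂ (f i) x : ℂ)‖ ^ 2) (‖x‖ ^ 2) := by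
        simpa only [hsym] using h x
      have h2 : HasSum (fun i => ‖(J₀ x : ∀ _ : I, ℂ) i‖ ^ (2 : ℝ≥0∞).toReal) (‖x‖ ^ 2) := by
        simp only [hrpow]
        exact h2'
      have h3 : ‖J₀ x‖ ^ (2 : ℝ≥0∞).toReal = ‖x‖ ^ 2 := h1.unique h2
      rw [hrpow] at h3
      exact (sq_eq_sq₀ (norm_nonneg _) (norm_nonneg _)).mp h3
    let J : H →ₗᵢ[ℂ] lp (fun _ : I => ℂ) 2 := ⟨J₀, hnorm⟩
    let Jc : H →L[ℂ] lp (fun _ : I => ℂ) 2 := J.toContinuousLinearMap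
    let Jadj := ContinuousLinearMap.adjoint Jc
    have hJapp : ∀ (x : H) (i : I), (Jc x : ∀ _ : I, ℂ) i = (inner ℂ (f i) x : ℂ) := fun _ _ => rfl
    have hadj_single : ∀ i : I, Jadj (lp.single 2 i 1) = f i := by
      intro i
      apply ext_inner_right ℂ
      intro y
      rw [ContinuousLinearMap.adjoint_inner_left]
      rw [lp.inner_single_left]
      simp [hJapp]
    have hadjJ : ∀ x : H, Jadj (Jc x) = x := by
      intro x
      apply ext_inner_right ℂ
      intro y
      rw [ContinuousLinearMap.adjoint_inner_left]
      exact J.inner_map_map x y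
    refine ⟨J, Jc ∘L Jadj, ?_, ?_, ?_, ?_⟩
    · show (Jc ∘L Jadj) * (Jc ∘L Jadj) = Jc ∘L Jadj
      ext z
      simp [ContinuousLinearMap.mul_apply, hadjJ]
    · rw [ContinuousLinearMap.isSelfAdjoint_iff']
      rw [ContinuousLinearMap.adjoint_comp, ContinuousLinearMap.adjoint_adjoint]
    · apply le_antisymm
      · rintro _ ⟨z, rfl⟩
        exact ⟨Jadj z, rfl⟩
      · rintro _ ⟨x, rfl⟩
        exact ⟨Jc x, by simp [hadjJ]; rfl⟩
    · intro i
      show Jc (Jadj (lp.single 2 i 1)) = J (f i)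
      rw [hadj_single]
      rfl
  · rintro ⟨J, P, hidem, hsa, hrange, hP⟩
    intro x
    have hPfix : ∀ y : lp (fun _ : I => ℂ) 2, y ∈ LinearMap.range P.toLinearMap → P y = y := by
      rintro _ ⟨z, rfl⟩
      have := congrArg (fun Q => Q z) hidem
      simpa [ContinuousLinearMap.mul_apply] using this
    have hPJ : P (J x) = J x := by
      apply hPfix
      rw [hrange]
      exact ⟨x, rfl⟩
    have hadj : ContinuousLinearMap.adjoint P = P :=
      ContinuousLinearMap.isSelfAdjoint_iff'.mp hsa
    have key : ∀ i : I, (inner ℂ x (f i) : ℂ) = starRingEnd ℂ ((J x : ∀ _ : I, ℂ) i) := by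
      intro i
      rw [← J.inner_map_map x (f i), ← hP i]
      calc (inner ℂ (J x) (P (lp.single 2 i 1)) : ℂ)
          = inner ℂ (ContinuousLinearMap.adjoint P (J x)) (lp.single 2 i 1) := by
            rw [ContinuousLinearMap.adjoint_inner_left]
        _ = inner ℂ (J x) (lp.single 2 i 1) := by rw [hadj, hPJ]
        _ = starRingEnd ℂ ((J x : ∀ _ : I, ℂ) i) := by
            rw [lp.inner_single_right]
            simp [RCLike.inner_apply]
    have h1 := lp.hasSum_norm (p := 2) (by norm_num) (J x)
    rw [J.norm_map] at h1
    simp only [hrpow] at h1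
    convert h1 using 2 with i
    rw [key i, RCLike.norm_conj]
end

section
/- Let H be an n-dimensional Hilbert space with orthonormal basis {g_i}_{i=1}^n, and let T: H → H be a linear operator with ‖T‖ = 1. Then there is a Hilbert space ℓ₂^{2n-1} containing H with orthonormal basis {e_i}_{i=1}^{2n-1} such that the orthogonal projection P of ℓ₂^{2n-1} onto H satisfies P e_i = T g_i for all i = 1,...,n. -/
open scoped InnerProductSpace ComplexConjugate

/-- Fundamental Principle II: every norm-one operator `T` on an `n`-dimensional
Hilbert space `H` with orthonormal basis `{g_i}` is a "piece" of a projection: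
`H` embeds isometrically into `ℓ₂^{2n-1}` (realized as `ℓ₂(Fin n ⊕ Fin (n-1))`)
so that the orthogonal projection `P` onto (the image of) `H` satisfies
`P e_i = T g_i` for `i = 1,…,n`. -/
theorem fundamental_principle_II
    {H : Type*} [NormedAddCommGroup H] [InnerProductSpace ℂ H]
    (n : ℕ) (g : OrthonormalBasis (Fin n) ℂ H)
    (T : H →L[ℂ] H) (hT : ‖T‖ = 1) :
    ∃ (J : H →ₗᵢ[ℂ] EuclideanSpace ℂ (Fin n ⊕ Fin (n - 1)))
      (P : EuclideanSpace ℂ (Fin n ⊕ Fin (n - 1)) →L[ℂ]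
        EuclideanSpace ℂ (Fin n ⊕ Fin (n - 1))),
      IsIdempotentElem P ∧ IsSelfAdjoint P ∧
      LinearMap.range P.toLinearMap = LinearMap.range J.toLinearMap ∧
      ∀ i : Fin n, P (EuclideanSpace.single (Sum.inl i) 1) = J (T (g i)) := by
  classical
  haveI : FiniteDimensional ℂ H := g.toBasis.finiteDimensional_of_finite
  have hfr : Module.finrank ℂ H = n := by
    rw [Module.finrank_eq_card_basis g.toBasis, Fintype.card_fin]
  have hn0 : n ≠ 0 := by
    rintro rfl
    haveI : Subsingleton H := Module.finrank_zero_iff.mp hfr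
    have hT0 : T = 0 := by ext x; exact Subsingleton.elim _ _
    rw [hT0, norm_zero] at hT
    norm_num at hT
  -- the adjoint
  set A : H →L[ℂ] H := ContinuousLinearMap.adjoint T with hA
  have hAadj : ContinuousLinearMap.adjoint A = T := ContinuousLinearMap.adjoint_adjoint T
  have hAnorm : ‖A‖ = 1 := by
    rw [hA]
    calc ‖(ContinuousLinearMap.adjoint T : H →L[ℂ] H)‖
        = ‖T‖ := LinearIsometryEquiv.norm_map ContinuousLinearMap.adjoint T
      _ = 1 := hT
  -- the positive operator M = 1 - T T*
  set M : H →L[ℂ] H := 1 - ContinuousLinearMap.comp T A with hMdef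
  have hMapp : ∀ x, M x = x - T (A x) := fun x => rfl
  have hTA : ∀ x y : H, ⟪x, T (A y)⟫_ℂ = ⟪A x, A y⟫_ℂ := by
    intro x y
    conv_lhs => rw [← hAadj]
    exact ContinuousLinearMap.adjoint_inner_right A x (A y)
  have hTA' : ∀ x y : H, ⟪T (A x), y⟫_ℂ = ⟪A x, A y⟫_ℂ := by
    intro x y
    conv_lhs => rw [← hAadj]
    exact ContinuousLinearMap.adjoint_inner_left A y (A x)
  have hMsym : LinearMap.IsSymmetric (M : H →ₗ[ℂ] H) := by
    intro x y
    show ⟪M x, y⟫_ℂ = ⟪x, M y⟫_ℂ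
    rw [hMapp, hMapp, inner_sub_left, inner_sub_right, hTA, hTA']
  have hIP : ∀ x : H, ⟪x, M x⟫_ℂ = ((‖x‖ ^ 2 - ‖A x‖ ^ 2 : ℝ) : ℂ) := by
    intro x
    rw [hMapp, inner_sub_right, hTA, inner_self_eq_norm_sq_to_K,
      inner_self_eq_norm_sq_to_K]
    norm_cast
  -- eigenbasis of M
  set b := hMsym.eigenvectorBasis hfr with hb
  set μ := hMsym.eigenvalues hfr with hμ
  have hMb : ∀ j, M (b j) = (μ j : ℂ) • b j := fun j =>
    hMsym.apply_eigenvectorBasis hfr j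
  have hreprM : ∀ (x : H) (j : Fin n), b.repr (M x) j = (μ j : ℂ) * b.repr x j := by
    intro x j
    rw [b.repr_apply_apply, b.repr_apply_apply]
    have h := (hMsym (b j) x).symm
    simp only [ContinuousLinearMap.coe_coe] at h
    rw [hMb j, inner_smul_left, Complex.conj_ofReal] at h
    exact h
  -- Parseval
  have parseval : ∀ (c : OrthonormalBasis (Fin n) ℂ H) (x : H),
      ∑ j, ‖c.repr x j‖ ^ 2 = ‖x‖ ^ 2 := by
    intro c x
    have h0 : ⟪x, x⟫_ℂ = ∑ j, conj (c.repr x j) * c.repr x j := by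
      rw [← c.repr.inner_map_map x x, PiLp.inner_apply]
      simp [RCLike.inner_apply, RCLike.conj_mul]
    rw [inner_self_eq_norm_sq_to_K] at h0
    simp only [RCLike.conj_mul] at h0
    exact_mod_cast h0.symm
  -- the quadratic form of M in the eigenbasis
  have hsum : ∀ x : H, ⟪x, M x⟫_ℂ = ((∑ j, μ j * ‖b.repr x j‖ ^ 2 : ℝ) : ℂ) := by
    intro x
    rw [← b.repr.inner_map_map x (M x), PiLp.inner_apply, Complex.ofReal_sum]
    refine Finset.sum_congr rfl fun j _ => ?_
    rw [RCLike.inner_apply, hreprM]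
    have h := RCLike.conj_mul (K := ℂ) (b.repr x j)
    calc (μ j : ℂ) * b.repr x j * conj (b.repr x j)
        = (μ j : ℂ) * (conj (b.repr x j) * b.repr x j) := by ring
      _ = ((μ j * ‖b.repr x j‖ ^ 2 : ℝ) : ℂ) := by
          rw [h, show ∀ r : ℝ, (RCLike.ofReal r : ℂ) = Complex.ofReal r from fun _ => rfl]
          push_cast
          ring
  have key : ∀ x : H, ‖A x‖ ^ 2 = ‖x‖ ^ 2 - ∑ j, μ j * ‖b.repr x j‖ ^ 2 := by
    intro x
    have h1 := (hIP x).symm.trans (hsum x)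
    have h2 : (‖x‖ ^ 2 - ‖A x‖ ^ 2 : ℝ) = ∑ j, μ j * ‖b.repr x j‖ ^ 2 := by
      exact_mod_cast h1
    linarith
  -- eigenvalues are nonnegative
  have hμ0 : ∀ j, 0 ≤ μ j := by
    intro j
    have hb1 : ‖b j‖ = 1 := b.orthonormal.1 j
    have h1 := hIP (b j)
    rw [hMb, inner_smul_right, inner_self_eq_norm_sq_to_K, hb1] at h1
    have h2 : ((μ j : ℝ) : ℂ) = ((1 - ‖A (b j)‖ ^ 2 : ℝ) : ℂ) := by
      push_cast
      push_cast at h1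
      linear_combination h1
    have h3 : μ j = 1 - ‖A (b j)‖ ^ 2 := by exact_mod_cast h2
    have h4 : ‖A (b j)‖ ≤ 1 := by
      calc ‖A (b j)‖ ≤ ‖A‖ * ‖b j‖ := A.le_opNorm _
        _ = 1 := by rw [hAnorm, hb1, one_mul]
    nlinarith [norm_nonneg (A (b j))]
  -- some eigenvalue is zero
  have hex : ∃ j, μ j = 0 := by
    by_contra hcon
    push_neg at hcon
    have hpos : ∀ j, 0 < μ j := fun j => lt_of_le_of_ne (hμ0 j) (Ne.symm (hcon j))
    haveI : Nonempty (Fin n) := ⟨⟨0, Nat.pos_of_ne_zero hn0⟩⟩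
    obtain ⟨j₁, -, hj₁⟩ :=
      Finset.exists_min_image Finset.univ μ ⟨Classical.arbitrary (Fin n), Finset.mem_univ _⟩
    set c := μ j₁ with hc
    have hc0 : 0 < c := hpos j₁
    have hbound : ∀ x : H, ‖A x‖ ≤ Real.sqrt (1 - c) * ‖x‖ := by
      intro x
      have h2 : c * ∑ j, ‖b.repr x j‖ ^ 2 ≤ ∑ j, μ j * ‖b.repr x j‖ ^ 2 := by
        rw [Finset.mul_sum]
        refine Finset.sum_le_sum fun j _ => ?_
        exact mul_le_mul_of_nonneg_right (hj₁ j (Finset.mem_univ j)) (sq_nonneg _)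
      rw [parseval b x] at h2
      have h1 : ‖A x‖ ^ 2 ≤ (1 - c) * ‖x‖ ^ 2 := by
        have := key x
        nlinarith
      calc ‖A x‖ = Real.sqrt (‖A x‖ ^ 2) := (Real.sqrt_sq (norm_nonneg _)).symm
        _ ≤ Real.sqrt ((1 - c) * ‖x‖ ^ 2) := Real.sqrt_le_sqrt h1
        _ = Real.sqrt (1 - c) * ‖x‖ := by
            rw [Real.sqrt_mul' _ (sq_nonneg _), Real.sqrt_sq (norm_nonneg _)]
    have h5 : ‖A‖ ≤ Real.sqrt (1 - c) :=
      A.opNorm_le_bound (Real.sqrt_nonneg _) hbound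
    rw [hAnorm] at h5
    have h6 : Real.sqrt (1 - c) < 1 := by
      rw [Real.sqrt_lt' one_pos]
      nlinarith
    linarith
  obtain ⟨j₀, hj₀⟩ := hex
  -- skipping index j₀
  have hnm : n - 1 + 1 = n := Nat.succ_pred_eq_of_pos (Nat.pos_of_ne_zero hn0)
  set j₀' : Fin (n - 1 + 1) := Fin.cast hnm.symm j₀ with hj₀'
  set skip : Fin (n - 1) → Fin n := fun k => Fin.cast hnm (j₀'.succAbove k) with hskip
  have hsum_skip : ∀ {R : Type} [AddCommMonoid R] (f : Fin n → R),
      ∑ j, f j = f j₀ + ∑ k, f (skip k) := by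
    intro R _ f
    rw [← Equiv.sum_comp (finCongr hnm) f, Fin.sum_univ_succAbove
      (fun j => f (finCongr hnm j)) j₀']
    have e1 : finCongr hnm j₀' = j₀ := by simp [hj₀']
    rw [e1]
    simp only [hskip, finCongr_apply]
  -- the isometry J
  set v : Fin n ⊕ Fin (n - 1) → H :=
    Sum.elim (fun i => T (g i))
      (fun k => ((Real.sqrt (μ (skip k)) : ℝ) : ℂ) • b (skip k)) with hv
  set L : H →ₗ[ℂ] EuclideanSpace ℂ (Fin n ⊕ Fin (n - 1)) :=
    { toFun := fun x => (WithLp.toLp 2 (fun p => ⟪v p, x⟫_ℂ) : EuclideanSpace ℂ (Fin n ⊕ Fin (n - 1)))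
      map_add' := by intro x y; ext p; simp [inner_add_right]
      map_smul' := by intro c x; ext p; simp [inner_smul_right] } with hL
  have hLapp : ∀ (x : H) (p : Fin n ⊕ Fin (n - 1)), L x p = ⟪v p, x⟫_ℂ := fun _ _ => rfl
  have hLnorm : ∀ x : H, ‖L x‖ = ‖x‖ := by
    intro x
    have hsq : ∑ p, ‖L x p‖ ^ 2 = ‖x‖ ^ 2 := by
      rw [Fintype.sum_sum_type]
      have h1 : ∀ i : Fin n, ‖L x (Sum.inl i)‖ ^ 2 = ‖g.repr (A x) i‖ ^ 2 := by
        intro i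
        rw [hLapp, g.repr_apply_apply]
        congr 2
        show ⟪T (g i), x⟫_ℂ = ⟪g i, A x⟫_ℂ
        conv_lhs => rw [← hAadj]
        exact ContinuousLinearMap.adjoint_inner_left A x (g i)
      have h2 : ∀ k : Fin (n - 1),
          ‖L x (Sum.inr k)‖ ^ 2 = μ (skip k) * ‖b.repr x (skip k)‖ ^ 2 := by
        intro k
        rw [hLapp]
        show ‖⟪((Real.sqrt (μ (skip k)) : ℝ) : ℂ) • b (skip k), x⟫_ℂ‖ ^ 2 = _
        rw [inner_smul_left, Complex.conj_ofReal, norm_mul, mul_pow,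
          Complex.norm_real, Real.norm_eq_abs, abs_of_nonneg (Real.sqrt_nonneg _),
          Real.sq_sqrt (hμ0 _), b.repr_apply_apply]
      rw [Finset.sum_congr rfl fun i _ => h1 i, Finset.sum_congr rfl fun k _ => h2 k,
        parseval g (A x)]
      have h3 : ∑ k, μ (skip k) * ‖b.repr x (skip k)‖ ^ 2
          = ∑ j, μ j * ‖b.repr x j‖ ^ 2 := by
        rw [hsum_skip (fun j => μ j * ‖b.repr x j‖ ^ 2), hj₀]
        simp
      rw [h3, key x]
      ring
    rw [EuclideanSpace.norm_eq, hsq, Real.sqrt_sq (norm_nonneg _)]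
  set J : H →ₗᵢ[ℂ] EuclideanSpace ℂ (Fin n ⊕ Fin (n - 1)) := ⟨L, hLnorm⟩ with hJ
  set Jc := J.toContinuousLinearMap with hJc
  have h1 : ContinuousLinearMap.adjoint Jc ∘L Jc = 1 :=
    (ContinuousLinearMap.inner_map_map_iff_adjoint_comp_self Jc).mp
      (fun x y => J.inner_map_map x y)
  have h1' : ∀ y : H, ContinuousLinearMap.adjoint Jc (Jc y) = y := by
    intro y
    have := congrArg (fun (S : H →L[ℂ] H) => S y) h1
    simpa using this
  refine ⟨J, Jc ∘L ContinuousLinearMap.adjoint Jc, ?_, ?_, ?_, ?_⟩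
  · -- idempotent
    refine ContinuousLinearMap.ext fun x => ?_
    show Jc (ContinuousLinearMap.adjoint Jc (Jc (ContinuousLinearMap.adjoint Jc x)))
        = Jc (ContinuousLinearMap.adjoint Jc x)
    rw [h1']
  · -- self-adjoint
    rw [IsSelfAdjoint, ContinuousLinearMap.star_eq_adjoint,
      ContinuousLinearMap.adjoint_comp, ContinuousLinearMap.adjoint_adjoint]
  · -- range
    apply le_antisymm
    · rintro z ⟨x, rfl⟩
      exact ⟨ContinuousLinearMap.adjoint Jc x, rfl⟩
    · rintro z ⟨y, rfl⟩
      refine ⟨Jc y, ?_⟩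
      show Jc (ContinuousLinearMap.adjoint Jc (Jc y)) = J y
      rw [h1']
      rfl
  · -- the projection relation
    intro i
    have hadj : ContinuousLinearMap.adjoint Jc (EuclideanSpace.single (Sum.inl i) 1)
        = T (g i) := by
      apply ext_inner_right ℂ
      intro y
      rw [ContinuousLinearMap.adjoint_inner_left, EuclideanSpace.inner_single_left]
      simp only [map_one, one_mul]
      rfl
    show Jc (ContinuousLinearMap.adjoint Jc (EuclideanSpace.single (Sum.inl i) 1))
        = J (T (g i))
    rw [hadj]
    rfl
end

section
/- Suppose λ₁,...,λ_N are distinct real numbers with |λ_m - λ_n| ≥ δ > 0 for m ≠ n. Then for any complex coefficients a₁,...,a_N and any T > 0, ∫₀^T |Σ_{n=1}^N a_n e^{2πiλ_n t}|² dt = (T + θ/δ) Σ_{n=1}^N |a_n|² for some θ with -1 ≤ θ ≤ 1. -/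
open scoped Real

open scoped ComplexConjugate

lemma mv_max_ge {δ : ℝ} (hδ : 0 < δ) :
    ∀ n (F : Finset ℝ), F.card = n → (∀ x ∈ F, δ ≤ x) →
    (∀ x ∈ F, ∀ y ∈ F, x ≠ y → δ ≤ |x - y|) →
    ∀ hF : F.Nonempty, (n : ℝ) * δ ≤ F.max' hF := by
  intro n
  induction n with
  | zero => intro F hc _ _ hF; simp [Finset.card_eq_zero] at hc; simp [hc] at hF
  | succ n ih =>
    intro F hc h1 h2 hF
    set M := F.max' hF with hM
    have hMF : M ∈ F := F.max'_mem hF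
    rcases Nat.eq_zero_or_pos n with h0 | hn
    · subst h0; simpa using le_trans (by linarith [h1 M hMF]) (le_refl M)
    · have hF' : (F.erase M).Nonempty := by
        rw [← Finset.card_pos, Finset.card_erase_of_mem hMF, hc]; omega
      have hc' : (F.erase M).card = n := by rw [Finset.card_erase_of_mem hMF, hc]; omega
      have ih' := ih (F.erase M) hc' (fun x hx => h1 x (Finset.mem_of_mem_erase hx))
        (fun x hx y hy hxy => h2 x (Finset.mem_of_mem_erase hx) y (Finset.mem_of_mem_erase hy) hxy) hF'
      set M' := (F.erase M).max' hF' with hM'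
      have hM'F : M' ∈ F.erase M := (F.erase M).max'_mem hF'
      have hne : M' ≠ M := Finset.ne_of_mem_erase hM'F
      have hle : M' ≤ M := F.le_max' M' (Finset.mem_of_mem_erase hM'F)
      have hsep := h2 M hMF M' (Finset.mem_of_mem_erase hM'F) (Ne.symm hne)
      rw [abs_of_nonneg (by linarith)] at hsep
      push_cast
      linarith

lemma mv_sum_inv_sq {δ : ℝ} (hδ : 0 < δ) (F : Finset ℝ)
    (h1 : ∀ x ∈ F, δ ≤ x) (h2 : ∀ x ∈ F, ∀ y ∈ F, x ≠ y → δ ≤ |x - y|) :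
    ∑ x ∈ F, (x ^ 2)⁻¹ ≤ π ^ 2 / 6 / δ ^ 2 := by
  have key : ∀ n (F : Finset ℝ), F.card = n → (∀ x ∈ F, δ ≤ x) →
      (∀ x ∈ F, ∀ y ∈ F, x ≠ y → δ ≤ |x - y|) →
      ∑ x ∈ F, (x ^ 2)⁻¹ ≤ ∑ i ∈ Finset.range n, ((((i : ℝ) + 1) * δ) ^ 2)⁻¹ := by
    intro n
    induction n with
    | zero => intro F hc _ _; simp [Finset.card_eq_zero] at hc; simp [hc]
    | succ n ih =>
      intro F hc h1 h2
      have hF : F.Nonempty := by rw [← Finset.card_pos, hc]; omega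
      set M := F.max' hF with hM
      have hMF : M ∈ F := F.max'_mem hF
      have hMge : ((n : ℝ) + 1) * δ ≤ M := by
        have := mv_max_ge hδ (n+1) F hc h1 h2 hF
        push_cast at this ⊢; linarith
      have hc' : (F.erase M).card = n := by rw [Finset.card_erase_of_mem hMF, hc]; omega
      have ih' := ih (F.erase M) hc' (fun x hx => h1 x (Finset.mem_of_mem_erase hx))
        (fun x hx y hy hxy => h2 x (Finset.mem_of_mem_erase hx) y (Finset.mem_of_mem_erase hy) hxy)
      have hsum : ∑ x ∈ F, (x ^ 2)⁻¹ = (M ^ 2)⁻¹ + ∑ x ∈ F.erase M, (x ^ 2)⁻¹ :=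
        (Finset.add_sum_erase F _ hMF).symm
      rw [hsum, Finset.sum_range_succ]
      have hMpos : (0:ℝ) < ((n : ℝ) + 1) * δ := by positivity
      have : (M ^ 2)⁻¹ ≤ ((((n : ℝ) + 1) * δ) ^ 2)⁻¹ := by
        apply inv_anti₀ (by positivity)
        exact pow_le_pow_left₀ (le_of_lt hMpos) hMge 2
      linarith [ih']
  have h := key F.card F rfl h1 h2
  refine h.trans ?_
  have hb : ∑ i ∈ Finset.range F.card, ((((i : ℝ) + 1) * δ) ^ 2)⁻¹
      = (δ ^ 2)⁻¹ * ∑ i ∈ Finset.range F.card, (1 : ℝ) / ((i : ℝ) + 1) ^ 2 := by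
    rw [Finset.mul_sum]
    refine Finset.sum_congr rfl fun i _ => ?_
    field_simp
  rw [hb]
  have hsum2 : ∑ i ∈ Finset.range F.card, (1 : ℝ) / ((i : ℝ) + 1) ^ 2 ≤ π ^ 2 / 6 := by
    have h0 : ∑ i ∈ Finset.range F.card, (1 : ℝ) / ((i : ℝ) + 1) ^ 2
        = ∑ i ∈ Finset.range (F.card + 1), (1 : ℝ) / (i : ℝ) ^ 2 := by
      rw [Finset.sum_range_succ' (fun i => (1 : ℝ) / (i : ℝ) ^ 2)]
      push_cast
      simp
    rw [h0]
    exact sum_le_hasSum _ (fun i _ => by positivity) hasSum_zeta_two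
  calc (δ ^ 2)⁻¹ * ∑ i ∈ Finset.range F.card, (1 : ℝ) / ((i : ℝ) + 1) ^ 2
      ≤ (δ ^ 2)⁻¹ * (π ^ 2 / 6) := by
        apply mul_le_mul_of_nonneg_left hsum2 (by positivity)
    _ = π ^ 2 / 6 / δ ^ 2 := by field_simp

lemma mv_Q_bound {N : ℕ} (lam : Fin N → ℝ) {δ : ℝ} (hδ : 0 < δ)
    (hsep : ∀ m n : Fin N, m ≠ n → δ ≤ |lam m - lam n|) (s : Fin N) :
    ∑ r ∈ Finset.univ.erase s, ((lam r - lam s) ^ 2)⁻¹ ≤ π ^ 2 / 3 / δ ^ 2 := by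
  classical
  have hinj : Function.Injective lam := by
    intro x y hxy
    by_contra h
    have := hsep x y h
    rw [hxy] at this
    simp at this
    linarith
  set P := (Finset.univ.erase s).filter (fun r => lam s < lam r) with hP
  set Q := (Finset.univ.erase s).filter (fun r => lam r < lam s) with hQ
  have hunion : Finset.univ.erase s = P ∪ Q := by
    ext r
    simp only [hP, hQ, Finset.mem_union, Finset.mem_filter, Finset.mem_erase, Finset.mem_univ,
      and_true, true_and]
    constructor
    · intro hr
      have hne : lam r ≠ lam s := fun h => hr (hinj h)
      rcases lt_or_gt_of_ne hne with h | h
      · exact Or.inr ⟨hr, h⟩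
      · exact Or.inl ⟨hr, h⟩
    · rintro (⟨h, _⟩ | ⟨h, _⟩) <;> exact h
  have hdisj : Disjoint P Q := by
    rw [Finset.disjoint_filter]
    intro r _ h1 h2
    linarith
  rw [hunion, Finset.sum_union hdisj]
  -- bound for P
  have hPbound : ∑ r ∈ P, ((lam r - lam s) ^ 2)⁻¹ ≤ π ^ 2 / 6 / δ ^ 2 := by
    have himg : ∑ r ∈ P, ((lam r - lam s) ^ 2)⁻¹
        = ∑ x ∈ P.image (fun r => lam r - lam s), (x ^ 2)⁻¹ := by
      rw [Finset.sum_image]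
      intro x _ y _ hxy
      exact hinj (by linarith)
    rw [himg]
    apply mv_sum_inv_sq hδ
    · intro x hx
      simp only [Finset.mem_image] at hx
      obtain ⟨r, hr, rfl⟩ := hx
      simp only [hP, Finset.mem_filter, Finset.mem_erase] at hr
      have := hsep r s hr.1.1
      rw [abs_of_pos (by linarith [hr.2])] at this
      exact this
    · intro x hx y hy hxy
      simp only [Finset.mem_image] at hx hy
      obtain ⟨r, hr, rfl⟩ := hx
      obtain ⟨r', hr', rfl⟩ := hy
      have hrr' : r ≠ r' := fun h => hxy (by rw [h])
      have := hsep r r' hrr'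
      convert this using 2
      ring
  have hQbound : ∑ r ∈ Q, ((lam r - lam s) ^ 2)⁻¹ ≤ π ^ 2 / 6 / δ ^ 2 := by
    have himg : ∑ r ∈ Q, ((lam r - lam s) ^ 2)⁻¹
        = ∑ x ∈ Q.image (fun r => lam s - lam r), (x ^ 2)⁻¹ := by
      rw [Finset.sum_image]
      · apply Finset.sum_congr rfl
        intro r _
        congr 1
        ring
      · intro x _ y _ hxy
        exact hinj (by linarith)
    rw [himg]
    apply mv_sum_inv_sq hδ
    · intro x hx
      simp only [Finset.mem_image] at hx
      obtain ⟨r, hr, rfl⟩ := hx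
      simp only [hQ, Finset.mem_filter, Finset.mem_erase] at hr
      have := hsep s r (Ne.symm hr.1.1)
      rw [abs_of_pos (by linarith [hr.2])] at this
      exact this
    · intro x hx y hy hxy
      simp only [Finset.mem_image] at hx hy
      obtain ⟨r, hr, rfl⟩ := hx
      obtain ⟨r', hr', rfl⟩ := hy
      have hrr' : r ≠ r' := fun h => hxy (by rw [h])
      have := hsep r r' hrr'
      rw [abs_sub_comm]
      convert this using 2
      ring
  have : π ^ 2 / 6 / δ ^ 2 + π ^ 2 / 6 / δ ^ 2 = π ^ 2 / 3 / δ ^ 2 := by ring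
  linarith

lemma mv_eigen_bound {N : ℕ} (lam : Fin N → ℝ) {δ : ℝ} (hδ : 0 < δ)
    (hsep : ∀ m n : Fin N, m ≠ n → δ ≤ |lam m - lam n|) (μ : ℝ) (z : Fin N → ℂ)
    (hz : z ≠ 0)
    (heig : ∀ r : Fin N, ∑ s : Fin N,
      ((if r = s then 0 else (lam r - lam s)⁻¹ : ℝ) : ℂ) * z s = -(Complex.I * μ) * z r) :
    |μ| ≤ π / δ := by
  classical
  set A : Fin N → Fin N → ℝ := fun r s => if r = s then 0 else (lam r - lam s)⁻¹ with hA
  have hAanti : ∀ r s, A s r = -A r s := by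
    intro r s
    by_cases h : r = s
    · simp [hA, h]
    · simp [hA, h, Ne.symm h]
      rw [neg_inv, neg_sub]
  have hne : ∀ {r s : Fin N}, r ≠ s → lam r - lam s ≠ 0 := by
    intro r s h
    have := hsep r s h
    intro h0
    rw [h0] at this
    simp at this
    linarith
  set n : Fin N → ℝ := fun s => Complex.normSq (z s) with hn
  set Q : Fin N → ℝ := fun s => ∑ r ∈ Finset.univ.erase s, ((lam r - lam s) ^ 2)⁻¹ with hQ
  set R : Fin N → ℝ := fun s => ∑ r, A r s with hR
  -- row sums with conjugates
  have hrow : ∀ r : Fin N, ∑ s : Fin N, (A r s : ℂ) * z s = -(Complex.I * μ) * z r := heig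
  have hrowconj : ∀ r : Fin N, ∑ s : Fin N, (A r s : ℂ) * conj (z s)
      = (Complex.I * μ) * conj (z r) := by
    intro r
    have := congrArg conj (hrow r)
    rw [map_sum] at this
    simp only [map_mul, Complex.conj_ofReal, map_neg, Complex.conj_I] at this
    convert this using 2
    ring
  have hcol : ∀ t : Fin N, ∑ s : Fin N, (A s t : ℂ) * z s = (Complex.I * μ) * z t := by
    intro t
    have : ∑ s : Fin N, (A s t : ℂ) * z s = -∑ s : Fin N, (A t s : ℂ) * z s := by
      rw [← Finset.sum_neg_distrib]
      apply Finset.sum_congr rfl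
      intro s _
      rw [hAanti s t]
      push_cast
      ring
    rw [this, hrow t]
    ring
  -- step 1: μ² Σ n = Σ_r normSq(row r)
  have step1 : (μ : ℂ)^2 * ∑ s, (n s : ℂ)
      = ∑ r, (∑ s, (A r s : ℂ) * z s) * (∑ t, (A r t : ℂ) * conj (z t)) := by
    rw [Finset.mul_sum]
    apply Finset.sum_congr rfl
    intro r _
    rw [hrow r, hrowconj r]
    have : (n r : ℂ) = z r * conj (z r) := by
      rw [hn]; simp [Complex.mul_conj]
    rw [this]
    have hI : Complex.I * Complex.I = -1 := Complex.I_mul_I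
    ring_nf
    rw [Complex.I_sq]
    ring
  -- step 2: expand into C s t
  set C : Fin N → Fin N → ℝ := fun s t => ∑ r, A r s * A r t with hC
  have step2 : (∑ r, (∑ s, (A r s : ℂ) * z s) * (∑ t, (A r t : ℂ) * conj (z t)))
      = ∑ s, ∑ t, (z s * conj (z t)) * ((C s t : ℝ) : ℂ) := by
    have h1 : ∀ r, (∑ s, (A r s : ℂ) * z s) * (∑ t, (A r t : ℂ) * conj (z t))
        = ∑ s, ∑ t, (z s * conj (z t)) * (((A r s * A r t : ℝ)) : ℂ) := by
      intro r
      rw [Finset.sum_mul_sum]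
      apply Finset.sum_congr rfl; intro s _
      apply Finset.sum_congr rfl; intro t _
      push_cast; ring
    rw [Finset.sum_congr rfl (fun r _ => h1 r)]
    rw [Finset.sum_comm]
    apply Finset.sum_congr rfl; intro s _
    rw [Finset.sum_comm]
    apply Finset.sum_congr rfl; intro t _
    rw [← Finset.mul_sum]
    congr 1
    rw [hC]
    push_cast
    rfl
  -- diagonal of C is Q
  have hCdiag : ∀ s, C s s = Q s := by
    intro s
    rw [hC, hQ]
    simp only
    rw [← Finset.add_sum_erase _ _ (Finset.mem_univ s)]
    have h0 : A s s * A s s = 0 := by simp [hA]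
    rw [h0, zero_add]
    apply Finset.sum_congr rfl
    intro r hr
    have hrs : r ≠ s := Finset.ne_of_mem_erase hr
    simp only [hA, if_neg hrs]
    rw [← mul_inv, ← sq]
  -- off-diagonal identity for C
  have hCoff : ∀ s t : Fin N, s ≠ t → C s t = A s t * (R s - R t) + 2 * (A s t)^2 := by
    intro s t hst
    have hsu : s ∈ Finset.univ.erase t := Finset.mem_erase.mpr ⟨hst, Finset.mem_univ s⟩
    have key : ∀ r : Fin N, r ∈ (Finset.univ.erase t).erase s →
        A r s * A r t = A s t * (A r s - A r t) := by
      intro r hr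
      have hrs : r ≠ s := Finset.ne_of_mem_erase hr
      have hrt : r ≠ t := Finset.ne_of_mem_erase (Finset.mem_of_mem_erase hr)
      have h1 : lam r - lam s ≠ 0 := hne hrs
      have h2 : lam r - lam t ≠ 0 := hne hrt
      have h3 : lam s - lam t ≠ 0 := hne hst
      simp only [hA, if_neg hrs, if_neg hrt, if_neg hst]
      field_simp
      ring
    have hCsplit : C s t = ∑ r ∈ (Finset.univ.erase t).erase s, A r s * A r t := by
      rw [hC]
      simp only
      rw [← Finset.add_sum_erase _ _ (Finset.mem_univ t), ← Finset.add_sum_erase _ _ hsu]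
      have e1 : A t s * A t t = 0 := by simp [hA]
      have e2 : A s s * A s t = 0 := by simp [hA]
      rw [e1, e2]
      ring
    rw [hCsplit, Finset.sum_congr rfl key, ← Finset.mul_sum, Finset.sum_sub_distrib]
    have hsum1 : ∑ r ∈ (Finset.univ.erase t).erase s, A r s = R s - A t s := by
      have : R s = A t s + (A s s + ∑ r ∈ (Finset.univ.erase t).erase s, A r s) := by
        rw [hR]
        simp only
        rw [← Finset.add_sum_erase _ _ (Finset.mem_univ t), ← Finset.add_sum_erase _ _ hsu]
      have e : A s s = 0 := by simp [hA]
      rw [e] at this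
      linarith
    have hsum2 : ∑ r ∈ (Finset.univ.erase t).erase s, A r t = R t - A s t := by
      have : R t = A t t + (A s t + ∑ r ∈ (Finset.univ.erase t).erase s, A r t) := by
        rw [hR]
        simp only
        rw [← Finset.add_sum_erase _ _ (Finset.mem_univ t), ← Finset.add_sum_erase _ _ hsu]
      have e : A t t = 0 := by simp [hA]
      rw [e] at this
      linarith
    rw [hsum1, hsum2, hAanti s t]
    ring
  -- vanishing of the middle term
  have hV : ∑ s, ∑ t, (z s * conj (z t)) * (((A s t * (R s - R t) : ℝ)) : ℂ) = 0 := by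
    have split : ∑ s, ∑ t, (z s * conj (z t)) * (((A s t * (R s - R t) : ℝ)) : ℂ)
        = (∑ s, ∑ t, (z s * (R s : ℂ)) * ((A s t : ℂ) * conj (z t)))
          - ∑ s, ∑ t, ((R t : ℂ) * conj (z t)) * ((A s t : ℂ) * z s) := by
      rw [← Finset.sum_sub_distrib]
      apply Finset.sum_congr rfl; intro s _
      rw [← Finset.sum_sub_distrib]
      apply Finset.sum_congr rfl; intro t _
      push_cast; ring
    rw [split]
    have e1 : (∑ s, ∑ t, (z s * (R s : ℂ)) * ((A s t : ℂ) * conj (z t)))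
        = ∑ s, (z s * (R s : ℂ)) * ((Complex.I * μ) * conj (z s)) := by
      apply Finset.sum_congr rfl; intro s _
      rw [← Finset.mul_sum, hrowconj s]
    have e2 : (∑ s, ∑ t, ((R t : ℂ) * conj (z t)) * ((A s t : ℂ) * z s))
        = ∑ t, ((R t : ℂ) * conj (z t)) * ((Complex.I * μ) * z t) := by
      rw [Finset.sum_comm]
      apply Finset.sum_congr rfl; intro t _
      rw [← Finset.mul_sum, hcol t]
    rw [e1, e2, ← Finset.sum_sub_distrib]
    apply Finset.sum_eq_zero
    intro s _
    ring
  -- the main identity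
  set W : ℂ := ∑ s, ∑ t, (z s * conj (z t)) * ((((A s t)^2 : ℝ)) : ℂ) with hW
  have main : ((μ^2 * ∑ s, n s : ℝ) : ℂ) = ((∑ s, Q s * n s : ℝ) : ℂ) + 2 * W := by
    have lhs : ((μ^2 * ∑ s, n s : ℝ) : ℂ) = (μ:ℂ)^2 * ∑ s, (n s : ℂ) := by push_cast; ring
    rw [lhs, step1, step2]
    have diag : ∀ s : Fin N, ∑ t, (z s * conj (z t)) * ((C s t : ℝ) : ℂ)
        = (z s * conj (z s)) * ((Q s : ℝ) : ℂ)
          + ∑ t ∈ Finset.univ.erase s, (z s * conj (z t)) * ((C s t : ℝ) : ℂ) := by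
      intro s
      rw [← Finset.add_sum_erase _ _ (Finset.mem_univ s), hCdiag s]
    rw [Finset.sum_congr rfl fun s _ => diag s, Finset.sum_add_distrib]
    have part1 : ∑ s, (z s * conj (z s)) * ((Q s : ℝ) : ℂ) = ((∑ s, Q s * n s : ℝ) : ℂ) := by
      push_cast
      apply Finset.sum_congr rfl
      intro s _
      rw [Complex.mul_conj]
      push_cast
      ring
    have part2 : ∑ s, ∑ t ∈ Finset.univ.erase s, (z s * conj (z t)) * ((C s t : ℝ) : ℂ)
        = 2 * W := by
      have e1 : ∀ s : Fin N, ∀ t ∈ Finset.univ.erase s,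
          (z s * conj (z t)) * ((C s t : ℝ) : ℂ)
          = (z s * conj (z t)) * (((A s t * (R s - R t) : ℝ)) : ℂ)
            + 2 * ((z s * conj (z t)) * ((((A s t)^2 : ℝ)) : ℂ)) := by
        intro s t ht
        have hst : s ≠ t := (Finset.ne_of_mem_erase ht).symm
        rw [hCoff s t hst]
        push_cast
        ring
      rw [Finset.sum_congr rfl fun s _ => Finset.sum_congr rfl (e1 s)]
      have e2 : ∀ s : Fin N, ∑ t ∈ Finset.univ.erase s,
          ((z s * conj (z t)) * (((A s t * (R s - R t) : ℝ)) : ℂ)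
            + 2 * ((z s * conj (z t)) * ((((A s t)^2 : ℝ)) : ℂ)))
          = (∑ t, (z s * conj (z t)) * (((A s t * (R s - R t) : ℝ)) : ℂ))
            + 2 * ∑ t, (z s * conj (z t)) * ((((A s t)^2 : ℝ)) : ℂ) := by
        intro s
        rw [Finset.sum_add_distrib]
        congr 1
        · exact Finset.sum_erase _ (by simp [hA])
        · rw [← Finset.mul_sum]
          congr 1
          exact Finset.sum_erase _ (by simp [hA])
      rw [Finset.sum_congr rfl fun s _ => e2 s, Finset.sum_add_distrib, hV, zero_add,
        ← Finset.mul_sum]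
    rw [part1, part2]
  -- row/column sums of squares of A
  have hQcol : ∀ t : Fin N, ∑ s, (A s t)^2 = Q t := by
    intro t
    rw [hQ]
    simp only
    rw [← Finset.add_sum_erase _ _ (Finset.mem_univ t)]
    have h0 : (A t t)^2 = 0 := by simp [hA]
    rw [h0, zero_add]
    apply Finset.sum_congr rfl
    intro s hs
    have hst : s ≠ t := Finset.ne_of_mem_erase hs
    simp only [hA, if_neg hst]
    exact inv_pow _ 2
  have hQrow : ∀ s : Fin N, ∑ t, (A s t)^2 = Q s := by
    intro s
    have : ∀ t : Fin N, (A s t)^2 = (A t s)^2 := by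
      intro t
      rw [hAanti t s, neg_sq]
    rw [Finset.sum_congr rfl fun t _ => this t]
    exact hQcol s
  -- bound on the real part of W
  have hReW : |W.re| ≤ ∑ s, Q s * n s := by
    have h1 : W.re = ∑ s, ∑ t, (z s * conj (z t)).re * (A s t)^2 := by
      rw [hW, Complex.re_sum]
      apply Finset.sum_congr rfl; intro s _
      rw [Complex.re_sum]
      apply Finset.sum_congr rfl; intro t _
      simp only [Complex.mul_re, Complex.ofReal_re, Complex.ofReal_im]
      ring
    rw [h1]
    have h2 : ∀ s t : Fin N, |(z s * conj (z t)).re * (A s t)^2|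
        ≤ (n s / 2 + n t / 2) * (A s t)^2 := by
      intro s t
      rw [abs_mul, abs_of_nonneg (sq_nonneg (A s t))]
      apply mul_le_mul_of_nonneg_right _ (sq_nonneg _)
      have hre := Complex.abs_re_le_norm (z s * conj (z t))
      rw [norm_mul, Complex.norm_conj] at hre
      have hs2 := Complex.sq_norm (z s)
      have ht2 := Complex.sq_norm (z t)
      have hb : ‖z s‖ * ‖z t‖ ≤ n s / 2 + n t / 2 := by
        have := sq_nonneg (‖z s‖ - ‖z t‖)
        rw [hn]
        simp only
        nlinarith
      linarith
    calc |∑ s, ∑ t, (z s * conj (z t)).re * (A s t)^2|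
        ≤ ∑ s, |∑ t, (z s * conj (z t)).re * (A s t)^2| := Finset.abs_sum_le_sum_abs _ _
      _ ≤ ∑ s, ∑ t, |(z s * conj (z t)).re * (A s t)^2| := by
          apply Finset.sum_le_sum
          intro s _
          exact Finset.abs_sum_le_sum_abs _ _
      _ ≤ ∑ s : Fin N, ∑ t : Fin N, (n s / 2 + n t / 2) * (A s t)^2 := by
          apply Finset.sum_le_sum; intro s _
          apply Finset.sum_le_sum; intro t _
          exact h2 s t
      _ = (∑ s : Fin N, ∑ t : Fin N, (n s / 2) * (A s t)^2)
            + ∑ s : Fin N, ∑ t : Fin N, (n t / 2) * (A s t)^2 := by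
          rw [← Finset.sum_add_distrib]
          apply Finset.sum_congr rfl; intro s _
          rw [← Finset.sum_add_distrib]
          apply Finset.sum_congr rfl; intro t _
          ring
      _ = ∑ s, Q s * n s := by
          have p1 : (∑ s : Fin N, ∑ t : Fin N, (n s / 2) * (A s t)^2)
              = ∑ s, Q s * n s / 2 := by
            apply Finset.sum_congr rfl; intro s _
            rw [← Finset.mul_sum, hQrow s]
            ring
          have p2 : (∑ s : Fin N, ∑ t : Fin N, (n t / 2) * (A s t)^2)
              = ∑ t, Q t * n t / 2 := by
            rw [Finset.sum_comm]
            apply Finset.sum_congr rfl; intro t _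
            rw [← Finset.mul_sum, hQcol t]
            ring
          rw [p1, p2, ← Finset.sum_add_distrib]
          apply Finset.sum_congr rfl; intro s _
          ring
  -- take real parts of main identity
  have hmainre : μ^2 * ∑ s, n s = (∑ s, Q s * n s) + 2 * W.re := by
    have hh := congrArg Complex.re main
    simp only [Complex.ofReal_re, Complex.add_re, Complex.mul_re, Complex.re_ofNat,
      Complex.im_ofNat, Complex.ofReal_im] at hh
    linarith [hh]
  have hnpos : 0 < ∑ s, n s := by
    obtain ⟨s, hs⟩ : ∃ s, z s ≠ 0 := by
      by_contra h; push_neg at h; exact hz (funext h)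
    apply Finset.sum_pos' (fun i _ => Complex.normSq_nonneg _)
    refine ⟨s, Finset.mem_univ s, ?_⟩
    show 0 < Complex.normSq (z s)
    exact Complex.normSq_pos.mpr hs
  have hQn : ∑ s, Q s * n s ≤ (π^2/3/δ^2) * ∑ s, n s := by
    rw [Finset.mul_sum]
    apply Finset.sum_le_sum
    intro s _
    exact mul_le_mul_of_nonneg_right (mv_Q_bound lam hδ hsep s) (Complex.normSq_nonneg _)
  have hfin : μ^2 * ∑ s, n s ≤ (π^2/δ^2) * ∑ s, n s := by
    have habs := (abs_le.mp hReW).2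
    have : μ^2 * ∑ s, n s ≤ 3 * ∑ s, Q s * n s := by linarith [neg_abs_le W.re]
    have h3 : (3:ℝ) * ((π^2/3/δ^2) * ∑ s, n s) = (π^2/δ^2) * ∑ s, n s := by ring
    linarith
  have hμ2 : μ^2 ≤ π^2/δ^2 := le_of_mul_le_mul_right (by linarith) hnpos
  have hπδ : 0 < π/δ := div_pos Real.pi_pos hδ
  have habs2 : |μ|^2 ≤ (π/δ)^2 := by
    rw [sq_abs, div_pow]
    exact hμ2
  nlinarith [abs_nonneg μ]

lemma mv_hilbert {N : ℕ} (lam : Fin N → ℝ) {δ : ℝ} (hδ : 0 < δ)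
    (hsep : ∀ m n : Fin N, m ≠ n → δ ≤ |lam m - lam n|) (u : Fin N → ℂ) :
    ‖∑ r : Fin N, ∑ s : Fin N,
        (u r * conj (u s)) * ((if r = s then 0 else (lam r - lam s)⁻¹ : ℝ) : ℂ)‖
      ≤ π / δ * ∑ s : Fin N, Complex.normSq (u s) := by
  classical
  set A : Fin N → Fin N → ℝ := fun r s => if r = s then 0 else (lam r - lam s)⁻¹ with hA
  have hAanti : ∀ r s, A s r = -A r s := by
    intro r s
    by_cases h : r = s
    · simp [hA, h]
    · simp [hA, h, Ne.symm h]
      rw [neg_inv, neg_sub]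
  -- the linear operator
  set T : EuclideanSpace ℂ (Fin N) →ₗ[ℂ] EuclideanSpace ℂ (Fin N) :=
  { toFun := fun z => WithLp.toLp 2 (fun r => ∑ s, (Complex.I * (A r s : ℂ)) * z s)
    map_add' := by
      intro x y
      ext r
      show ∑ s, (Complex.I * (A r s : ℂ)) * (x s + y s)
          = (∑ s, (Complex.I * (A r s : ℂ)) * x s) + ∑ s, (Complex.I * (A r s : ℂ)) * y s
      rw [← Finset.sum_add_distrib]
      apply Finset.sum_congr rfl
      intro s _
      ring
    map_smul' := by
      intro c x
      ext r
      show ∑ s, (Complex.I * (A r s : ℂ)) * (c * x s) = c * ∑ s, (Complex.I * (A r s : ℂ)) * x s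
      rw [Finset.mul_sum]
      apply Finset.sum_congr rfl
      intro s _
      ring } with hT
  have hTapp : ∀ (z : EuclideanSpace ℂ (Fin N)) (r : Fin N),
      T z r = ∑ s, (Complex.I * (A r s : ℂ)) * z s := fun z r => rfl
  have hsymm : T.IsSymmetric := by
    intro x y
    rw [PiLp.inner_apply, PiLp.inner_apply]
    simp only [RCLike.inner_apply']
    have lhs : ∑ r, conj (T x r) * y r
        = ∑ r, ∑ s, (conj (Complex.I * (A r s : ℂ)) * conj (x s)) * y r := by
      apply Finset.sum_congr rfl
      intro r _
      rw [hTapp, map_sum, Finset.sum_mul]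
      apply Finset.sum_congr rfl
      intro s _
      rw [map_mul]
    rw [lhs, Finset.sum_comm]
    apply Finset.sum_congr rfl
    intro s _
    rw [hTapp, Finset.mul_sum]
    apply Finset.sum_congr rfl
    intro r _
    have hconj : conj (Complex.I * (A r s : ℂ)) = Complex.I * (A s r : ℂ) := by
      rw [map_mul, Complex.conj_I, Complex.conj_ofReal, hAanti r s]
      push_cast
      ring
    rw [hconj]
    ring
  have hdim : Module.finrank ℂ (EuclideanSpace ℂ (Fin N)) = N := by
    simp [finrank_euclideanSpace]
  set b := hsymm.eigenvectorBasis hdim with hb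
  set μ : Fin N → ℝ := hsymm.eigenvalues hdim with hμ
  have heigen : ∀ i, T (b i) = (μ i : ℂ) • b i := fun i => hsymm.apply_eigenvectorBasis hdim i
  have hμbound : ∀ i, |μ i| ≤ π / δ := by
    intro i
    apply mv_eigen_bound lam hδ hsep (μ i) (fun r => b i r)
    · intro h0
      have : b i = 0 := by
        apply PiLp.ext
        intro r
        exact congrFun h0 r
      exact (b.toBasis.ne_zero i) (by simpa using this)
    · intro r
      have := congrFun (congrArg (fun (v : EuclideanSpace ℂ (Fin N)) => (v : Fin N → ℂ)) (heigen i)) r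
      have h2 : T (b i) r = (μ i : ℂ) * b i r := this
      rw [hTapp] at h2
      have h3 : ∑ s, ((A r s : ℝ) : ℂ) * b i s
          = -Complex.I * ∑ s, (Complex.I * (A r s : ℂ)) * b i s := by
        rw [Finset.mul_sum]
        apply Finset.sum_congr rfl
        intro s _
        have : -Complex.I * (Complex.I * (A r s : ℂ)) = (A r s : ℂ) := by
          rw [neg_mul, ← mul_assoc, Complex.I_mul_I]
          ring
        rw [← mul_assoc, this]
      rw [h3, h2]
      ring
  -- quadratic form bound via the eigenbasis
  have hquad : ∀ z : EuclideanSpace ℂ (Fin N),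
      ‖(inner ℂ z (T z) : ℂ)‖ ≤ π / δ * ∑ i, Complex.normSq (z i) := by
    intro z
    have hexp : (inner ℂ z (T z) : ℂ)
        = ∑ i, (μ i : ℂ) * ((Complex.normSq (inner ℂ z (b i) : ℂ) : ℝ) : ℂ) := by
      rw [← b.sum_inner_mul_inner z (T z)]
      apply Finset.sum_congr rfl
      intro i _
      have h1 : (inner ℂ (b i) (T z) : ℂ) = (μ i : ℂ) * inner ℂ (b i) z := by
        rw [← hsymm (b i) z, heigen i, inner_smul_left]
        simp [Complex.conj_ofReal]
      rw [h1]
      have h2 : (inner ℂ (b i) z : ℂ) = conj (inner ℂ z (b i) : ℂ) :=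
        (inner_conj_symm (b i) z).symm
      rw [h2]
      set x := (inner ℂ z (b i) : ℂ) with hx
      calc x * ((μ i : ℂ) * conj x) = (μ i : ℂ) * (x * conj x) := by ring
        _ = (μ i : ℂ) * ((Complex.normSq x : ℝ) : ℂ) := by rw [Complex.mul_conj]
    have parseval : ∑ i, Complex.normSq (inner ℂ z (b i) : ℂ) = ∑ i, Complex.normSq (z i) := by
      have h1 := b.sum_inner_mul_inner z z
      have h2 : ∀ i : Fin N, (inner ℂ z (b i) : ℂ) * (inner ℂ (b i) z : ℂ)
          = ((Complex.normSq (inner ℂ z (b i) : ℂ) : ℝ) : ℂ) := by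
        intro i
        rw [show (inner ℂ (b i) z : ℂ) = conj (inner ℂ z (b i) : ℂ) from
          (inner_conj_symm (b i) z).symm, Complex.mul_conj]
      rw [Finset.sum_congr rfl fun i _ => h2 i] at h1
      have h3 : (inner ℂ z z : ℂ) = ((∑ i, Complex.normSq (z i) : ℝ) : ℂ) := by
        rw [PiLp.inner_apply]
        simp only [RCLike.inner_apply']
        push_cast
        apply Finset.sum_congr rfl
        intro i _
        rw [mul_comm, Complex.mul_conj]
      rw [h3] at h1
      have h4 := congrArg Complex.re h1
      rw [Complex.re_sum] at h4
      simpa using h4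
    rw [hexp]
    calc ‖∑ i, (μ i : ℂ) * ((Complex.normSq (inner ℂ z (b i) : ℂ) : ℝ) : ℂ)‖
        ≤ ∑ i, ‖(μ i : ℂ) * ((Complex.normSq (inner ℂ z (b i) : ℂ) : ℝ) : ℂ)‖ :=
          norm_sum_le _ _
      _ ≤ ∑ i, (π / δ) * Complex.normSq (inner ℂ z (b i) : ℂ) := by
          apply Finset.sum_le_sum
          intro i _
          rw [norm_mul, Complex.norm_real, Complex.norm_real, Real.norm_eq_abs,
            Real.norm_eq_abs, abs_of_nonneg (Complex.normSq_nonneg _)]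
          exact mul_le_mul_of_nonneg_right (hμbound i) (Complex.normSq_nonneg _)
      _ = π / δ * ∑ i, Complex.normSq (inner ℂ z (b i) : ℂ) := by rw [Finset.mul_sum]
      _ = π / δ * ∑ i, Complex.normSq (z i) := by rw [parseval]
  -- specialize to z = conj ∘ u
  set z : EuclideanSpace ℂ (Fin N) := WithLp.toLp 2 (fun s => conj (u s)) with hz
  have hzapp : ∀ s, z s = conj (u s) := fun s => rfl
  have hform : (inner ℂ z (T z) : ℂ)
      = Complex.I * ∑ r : Fin N, ∑ s : Fin N, (u r * conj (u s)) * ((A r s : ℝ) : ℂ) := by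
    rw [PiLp.inner_apply]
    simp only [RCLike.inner_apply']
    rw [Finset.mul_sum]
    apply Finset.sum_congr rfl
    intro r _
    rw [hTapp, Finset.mul_sum, Finset.mul_sum]
    apply Finset.sum_congr rfl
    intro s _
    rw [hzapp r, hzapp s, Complex.conj_conj]
    ring
  have hlast : ∑ i, Complex.normSq (z i) = ∑ i, Complex.normSq (u i) := by
    apply Finset.sum_congr rfl
    intro i _
    rw [hzapp i, Complex.normSq_conj]
  calc ‖∑ r : Fin N, ∑ s : Fin N, (u r * conj (u s)) * ((A r s : ℝ) : ℂ)‖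
      = ‖(inner ℂ z (T z) : ℂ)‖ := by rw [hform, norm_mul, Complex.norm_I, one_mul]
    _ ≤ π / δ * ∑ i, Complex.normSq (z i) := hquad z
    _ = π / δ * ∑ i, Complex.normSq (u i) := by rw [hlast]

lemma mv_integral {N : ℕ} (lam : Fin N → ℝ) (hinj : Function.Injective lam)
    (a : Fin N → ℂ) (T : ℝ) :
    ∫ t in (0 : ℝ)..T,
        ‖∑ n, a n * Complex.exp (2 * π * Complex.I * (lam n) * t)‖ ^ 2
      = (∑ m : Fin N, ∑ n : Fin N, a m * conj (a n) *
          (if m = n then (T : ℂ)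
           else (Complex.exp (2 * π * Complex.I * ((lam m : ℂ) - lam n) * T) - 1)
                  / (2 * π * Complex.I * ((lam m : ℂ) - lam n)))).re := by
  classical
  set c : Fin N → Fin N → ℂ := fun m n => 2 * π * Complex.I * ((lam m : ℂ) - lam n) with hc
  have hexpc : ∀ w : ℂ, Continuous fun t : ℝ => Complex.exp (w * t) := fun w =>
    (continuous_const.mul Complex.continuous_ofReal).cexp
  set F : ℝ → ℂ := fun t => ∑ m, ∑ n, a m * conj (a n) * Complex.exp (c m n * t) with hF
  have hpt : ∀ t : ℝ,
      (‖∑ n, a n * Complex.exp (2 * π * Complex.I * (lam n) * t)‖ ^ 2 : ℝ) = (F t).re := by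
    intro t
    set w := ∑ n, a n * Complex.exp (2 * π * Complex.I * (lam n) * t) with hw
    have h1 : F t = w * conj w := by
      rw [hw, hF, map_sum, Finset.sum_mul_sum]
      apply Finset.sum_congr rfl
      intro m _
      apply Finset.sum_congr rfl
      intro n _
      rw [map_mul, ← Complex.exp_conj]
      have hconj : conj (2 * (π : ℂ) * Complex.I * (lam n) * t)
          = -(2 * (π : ℂ) * Complex.I * (lam n) * t) := by
        simp only [map_mul, Complex.conj_I, Complex.conj_ofReal, map_ofNat]
        ring
      rw [hconj]
      have hmul : Complex.exp (2 * (π : ℂ) * Complex.I * (lam m) * t)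
            * Complex.exp (-(2 * (π : ℂ) * Complex.I * (lam n) * t))
          = Complex.exp (c m n * t) := by
        rw [← Complex.exp_add]
        congr 1
        rw [hc]
        push_cast
        ring
      calc a m * conj (a n) * Complex.exp (c m n * t)
          = a m * conj (a n) * (Complex.exp (2 * (π:ℂ) * Complex.I * (lam m) * t)
              * Complex.exp (-(2 * (π:ℂ) * Complex.I * (lam n) * t))) := by rw [hmul]
        _ = a m * Complex.exp (2 * (π:ℂ) * Complex.I * (lam m) * t)
              * (conj (a n) * Complex.exp (-(2 * (π:ℂ) * Complex.I * (lam n) * t))) := by ring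
    have h2 : (w * conj w).re = Complex.normSq w := by
      rw [Complex.mul_conj, Complex.ofReal_re]
    rw [h1, h2, ← Complex.sq_norm]
  rw [intervalIntegral.integral_congr (g := fun t => (F t).re) (fun t _ => hpt t)]
  have hFcont : Continuous F := by
    apply continuous_finset_sum
    intro m _
    apply continuous_finset_sum
    intro n _
    exact continuous_const.mul (hexpc (c m n))
  have hFint : IntervalIntegrable F MeasureTheory.volume 0 T :=
    hFcont.intervalIntegrable _ _
  have hre : (∫ t in (0:ℝ)..T, (F t).re) = (∫ t in (0:ℝ)..T, F t).re := by
    have h := Complex.reCLM.intervalIntegral_comp_comm hFint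
    simpa using h
  have hintF : (∫ t in (0:ℝ)..T, F t)
      = ∑ m : Fin N, ∑ n : Fin N, a m * conj (a n) *
          (if m = n then (T : ℂ) else (Complex.exp (c m n * T) - 1) / c m n) := by
    simp only [hF]
    rw [intervalIntegral.integral_finset_sum
      (f := fun m t => ∑ n, a m * conj (a n) * Complex.exp (c m n * t)) (fun m _ =>
      (continuous_finset_sum _ (fun n _ =>
        continuous_const.mul (hexpc (c m n)))).intervalIntegrable _ _)]
    apply Finset.sum_congr rfl
    intro m _
    rw [intervalIntegral.integral_finset_sum
      (f := fun n t => a m * conj (a n) * Complex.exp (c m n * t)) (fun n _ =>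
      (continuous_const.mul (hexpc (c m n))).intervalIntegrable _ _)]
    apply Finset.sum_congr rfl
    intro n _
    rw [intervalIntegral.integral_const_mul]
    congr 1
    by_cases hmn : m = n
    · subst hmn
      have hc0 : c m m = 0 := by rw [hc]; simp
      rw [if_pos rfl, hc0]
      simp
    · rw [if_neg hmn]
      have hl : (lam m : ℂ) ≠ (lam n : ℂ) := by
        intro h
        exact hmn (hinj (by exact_mod_cast h))
      have hcne : c m n ≠ 0 := by
        rw [hc]
        exact mul_ne_zero (mul_ne_zero (mul_ne_zero two_ne_zero
          (by exact_mod_cast Complex.ofReal_ne_zero.mpr Real.pi_ne_zero)) Complex.I_ne_zero)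
          (sub_ne_zero.mpr hl)
      rw [integral_exp_mul_complex hcne]
      simp
  rw [hre, hintF]

/-- The Montgomery–Vaughan mean value estimate: if `λ₁,…,λ_N` are real numbers
with `|λ_m - λ_n| ≥ δ > 0` for `m ≠ n`, then for any coefficients `a_n` and any
`T > 0`, `∫₀^T |Σ a_n e^{2πiλ_n t}|² dt = (T + θ/δ) Σ |a_n|²` for some `θ ∈ [-1,1]`. -/
theorem montgomery_vaughan
    (N : ℕ) (lam : Fin N → ℝ) (δ : ℝ) (hδ : 0 < δ)
    (hsep : ∀ m n : Fin N, m ≠ n → δ ≤ |lam m - lam n|)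
    (a : Fin N → ℂ) (T : ℝ) (hT : 0 < T) :
    ∃ θ : ℝ, -1 ≤ θ ∧ θ ≤ 1 ∧
      ∫ t in (0 : ℝ)..T,
          ‖∑ n, a n * Complex.exp (2 * π * Complex.I * (lam n) * t)‖ ^ 2
        = (T + θ / δ) * ∑ n, ‖a n‖ ^ 2 := by
  classical
  have hinj : Function.Injective lam := by
    intro x y hxy
    by_contra h
    have := hsep x y h
    rw [hxy] at this
    simp at this
    linarith
  by_cases hzero : ∀ n, a n = 0
  · refine ⟨0, by norm_num, by norm_num, ?_⟩
    have h1 : ∀ t : ℝ, (‖∑ n, a n * Complex.exp (2 * π * Complex.I * (lam n) * t)‖ ^ 2 : ℝ) = 0 := by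
      intro t
      simp [hzero]
    rw [intervalIntegral.integral_congr (g := fun _ => (0:ℝ)) (fun t _ => h1 t)]
    simp [hzero]
  · push_neg at hzero
    obtain ⟨n₀, hn₀⟩ := hzero
    set Sa : ℝ := ∑ n, ‖a n‖ ^ 2 with hSa
    have hSapos : 0 < Sa := by
      apply Finset.sum_pos' (fun i _ => by positivity)
      exact ⟨n₀, Finset.mem_univ _, pow_pos (norm_pos_iff.mpr hn₀) 2⟩
    set c : Fin N → Fin N → ℂ := fun m n => 2 * π * Complex.I * ((lam m : ℂ) - lam n) with hc
    set E : ℂ := ∑ m : Fin N, ∑ n : Fin N,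
      (if m = n then 0 else a m * conj (a n) * (Complex.exp (c m n * T) - 1) / c m n) with hE
    -- the integral identity
    have hX : (∑ m : Fin N, ∑ n : Fin N, a m * conj (a n) *
          (if m = n then (T : ℂ) else (Complex.exp (c m n * T) - 1) / c m n))
        = (Sa : ℂ) * T + E := by
      have hdiag : ∀ m : Fin N, (∑ n : Fin N,
          (if m = n then (a m * conj (a n) * T) else (0:ℂ))) = a m * conj (a m) * T := by
        intro m
        rw [Finset.sum_ite_eq Finset.univ m (fun n => a m * conj (a n) * T)]
        simp
      have hsplit : ∀ m : Fin N, ∑ n : Fin N, a m * conj (a n) *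
            (if m = n then (T : ℂ) else (Complex.exp (c m n * T) - 1) / c m n)
          = (∑ n : Fin N, (if m = n then (a m * conj (a n) * T) else 0))
            + ∑ n : Fin N, (if m = n then 0 else a m * conj (a n) * (Complex.exp (c m n * T) - 1) / c m n) := by
        intro m
        rw [← Finset.sum_add_distrib]
        apply Finset.sum_congr rfl
        intro n _
        by_cases hmn : m = n
        · rw [if_pos hmn, if_pos hmn, if_pos hmn, add_zero]
        · rw [if_neg hmn, if_neg hmn, if_neg hmn, zero_add]
          ring
      rw [Finset.sum_congr rfl fun m _ => hsplit m, Finset.sum_add_distrib, ← hE]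
      congr 1
      rw [Finset.sum_congr rfl fun m _ => hdiag m]
      have : ∀ m : Fin N, a m * conj (a m) * T = ((‖a m‖^2 : ℝ) : ℂ) * T := by
        intro m
        rw [Complex.mul_conj, Complex.normSq_eq_norm_sq]
      rw [Finset.sum_congr rfl fun m _ => this m, ← Finset.sum_mul, hSa]
      push_cast
      ring
    have hint : ∫ t in (0 : ℝ)..T,
          ‖∑ n, a n * Complex.exp (2 * π * Complex.I * (lam n) * t)‖ ^ 2
        = T * Sa + E.re := by
      rw [mv_integral lam hinj a T]
      have : (∑ m : Fin N, ∑ n : Fin N, a m * conj (a n) *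
          (if m = n then (T : ℂ)
           else (Complex.exp (2 * π * Complex.I * ((lam m : ℂ) - lam n) * T) - 1)
                  / (2 * π * Complex.I * ((lam m : ℂ) - lam n))))
          = (Sa : ℂ) * T + E := hX
      rw [this]
      simp [Complex.add_re, Complex.ofReal_mul]
      ring
    -- bound on E
    have hEbound : ‖E‖ ≤ Sa / δ := by
      set b : Fin N → ℂ := fun n => a n * Complex.exp (2 * π * Complex.I * (lam n) * T) with hb
      have hEeq : E = (2 * π * Complex.I)⁻¹ *
          ((∑ r : Fin N, ∑ s : Fin N,
            (b r * conj (b s)) * ((if r = s then 0 else (lam r - lam s)⁻¹ : ℝ) : ℂ))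
          - ∑ r : Fin N, ∑ s : Fin N,
            (a r * conj (a s)) * ((if r = s then 0 else (lam r - lam s)⁻¹ : ℝ) : ℂ)) := by
        rw [hE, ← Finset.sum_sub_distrib, Finset.mul_sum]
        apply Finset.sum_congr rfl
        intro m _
        rw [← Finset.sum_sub_distrib, Finset.mul_sum]
        apply Finset.sum_congr rfl
        intro n _
        by_cases hmn : m = n
        · rw [if_pos hmn, if_pos hmn]
          simp
        · rw [if_neg hmn, if_neg hmn]
          have hbb : b m * conj (b n) = a m * conj (a n) * Complex.exp (c m n * T) := by
            rw [hb]
            simp only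
            rw [map_mul, ← Complex.exp_conj]
            have hconj : conj (2 * (π : ℂ) * Complex.I * (lam n) * T)
                = -(2 * (π : ℂ) * Complex.I * (lam n) * T) := by
              simp only [map_mul, Complex.conj_I, Complex.conj_ofReal, map_ofNat]
              ring
            rw [hconj]
            have hmul : Complex.exp (2 * (π:ℂ) * Complex.I * (lam m) * T)
                  * Complex.exp (-(2 * (π:ℂ) * Complex.I * (lam n) * T))
                = Complex.exp (c m n * T) := by
              rw [← Complex.exp_add]
              congr 1
              rw [hc]
              push_cast
              ring
            rw [← hmul]
            ring
          rw [hbb]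
          have hcinv : (c m n)⁻¹ = (2 * (π:ℂ) * Complex.I)⁻¹ * (((lam m - lam n)⁻¹ : ℝ) : ℂ) := by
            rw [hc]
            simp only
            rw [mul_inv]
            congr 1
            push_cast
            rfl
          rw [div_eq_mul_inv, hcinv]
          ring
      rw [hEeq]
      have h2πI : ‖(2 * (π:ℂ) * Complex.I)⁻¹‖ = (2 * π)⁻¹ := by
        rw [norm_inv, norm_mul, norm_mul, Complex.norm_I, Complex.norm_real]
        simp [Real.norm_eq_abs, abs_of_pos Real.pi_pos]
      have hnormb : ∀ n : Fin N, Complex.normSq (b n) = Complex.normSq (a n) := by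
        intro n
        rw [hb]
        simp only
        rw [Complex.normSq_mul]
        have : Complex.normSq (Complex.exp (2 * π * Complex.I * (lam n) * T)) = 1 := by
          rw [← Complex.sq_norm, Complex.norm_exp]
          have hre : (2 * (π:ℂ) * Complex.I * (lam n) * T).re = 0 := by
            simp [Complex.mul_re, Complex.mul_im]
          rw [hre]
          simp
        rw [this, mul_one]
      have hSa' : ∀ u : Fin N → ℂ, (∀ n, Complex.normSq (u n) = Complex.normSq (a n)) →
          ∑ s : Fin N, Complex.normSq (u s) = Sa := by
        intro u hu
        rw [hSa]
        apply Finset.sum_congr rfl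
        intro s _
        rw [hu s, Complex.normSq_eq_norm_sq]
      have hHb := mv_hilbert lam hδ hsep b
      have hHa := mv_hilbert lam hδ hsep a
      rw [hSa' b hnormb] at hHb
      rw [hSa' a (fun n => rfl)] at hHa
      calc ‖(2 * (π:ℂ) * Complex.I)⁻¹ * (_ - _)‖
          = (2 * π)⁻¹ * ‖(∑ r : Fin N, ∑ s : Fin N,
            (b r * conj (b s)) * ((if r = s then 0 else (lam r - lam s)⁻¹ : ℝ) : ℂ))
          - ∑ r : Fin N, ∑ s : Fin N,
            (a r * conj (a s)) * ((if r = s then 0 else (lam r - lam s)⁻¹ : ℝ) : ℂ)‖ := by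
            rw [norm_mul, h2πI]
        _ ≤ (2 * π)⁻¹ * (π / δ * Sa + π / δ * Sa) := by
            apply mul_le_mul_of_nonneg_left _ (by positivity)
            exact le_trans (norm_sub_le _ _) (add_le_add hHb hHa)
        _ = Sa / δ := by
            field_simp
            ring
    -- conclude
    have hre : |E.re| ≤ Sa / δ := le_trans (Complex.abs_re_le_norm E)
      (by exact hEbound)
    refine ⟨E.re * δ / Sa, ?_, ?_, ?_⟩
    · rw [le_div_iff₀ hSapos]
      have h1 : -(Sa / δ) ≤ E.re := (abs_le.mp hre).1
      have h2 : -(Sa / δ) * δ = -Sa := by field_simp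
      nlinarith
    · rw [div_le_one hSapos]
      have h1 : E.re ≤ Sa / δ := (abs_le.mp hre).2
      have h2 : (Sa / δ) * δ = Sa := by field_simp
      nlinarith
    · rw [hint]
      field_simp
end

section
/- For any g ∈ L^∞([0,1]), there is an increasing sequence of natural numbers {K_n} such that (1/K_n) Σ_{k=0}^{K_n - 1} |g(t - k/K_n)|² → ‖g‖²_{L²} almost everywhere on [0,1] as n → ∞ (with translation mod 1). -/
noncomputable section

open MeasureTheory Filter
open scoped ENNReal Real Topology

instance : Fact ((0 : ℝ) < 1) := ⟨one_pos⟩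

/-- Haar (Lebesgue) probability measure on the circle `[0,1)`. -/
abbrev μ01 : Measure (AddCircle (1 : ℝ)) := AddCircle.haarAddCircle

/-- Uniform convergence of Riemann sums of (bounded) continuous functions on the circle. -/
lemma riemann_unif (φ : BoundedContinuousFunction (AddCircle (1:ℝ)) ℝ) {ε : ℝ} (hε : 0 < ε) :
    ∃ K₀ : ℕ, 1 ≤ K₀ ∧ ∀ K : ℕ, K₀ ≤ K → ∀ t : AddCircle (1:ℝ),
      |(1 / (K:ℝ)) * ∑ k ∈ Finset.range K,
          φ (t - (((k : ℝ) / (K:ℝ) : ℝ) : AddCircle (1:ℝ))) - ∫ s, φ s ∂μ01| ≤ ε := by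
  obtain ⟨δ, hδ, hmod⟩ := Metric.uniformContinuous_iff.mp
    (CompactSpace.uniformContinuous_of_continuous φ.continuous) ε hε
  refine ⟨⌈1/δ⌉₊ + 1, Nat.le_add_left 1 _, fun K hK t => ?_⟩
  have hK1 : 1 ≤ K := le_trans (Nat.le_add_left 1 _) hK
  have hK0 : (K:ℝ) ≠ 0 := by positivity
  have hKpos : 0 < (K:ℝ) := by positivity
  have hKδ : 1 / (K:ℝ) < δ := by
    have h1 : (1:ℝ)/δ < K := by
      calc (1:ℝ)/δ ≤ ⌈1/δ⌉₊ := Nat.le_ceil _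
      _ < (⌈1/δ⌉₊ + 1 : ℕ) := by exact_mod_cast Nat.lt_succ_self _
      _ ≤ K := by exact_mod_cast hK
    rw [div_lt_iff₀ hδ] at h1
    rw [div_lt_iff₀ hKpos]
    nlinarith
  -- the lift of the rotated function
  set ψ : ℝ → ℝ := fun s => φ (t - (s : AddCircle (1:ℝ))) with hψ
  have hψc : Continuous ψ := φ.continuous.comp (continuous_const.sub continuous_quotient_mk')
  have hint : ∀ (a b : ℝ), IntervalIntegrable ψ volume a b := fun a b =>
    hψc.intervalIntegrable a b
  have hv : (volume : Measure (AddCircle (1:ℝ))) = μ01 := by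
    simp [AddCircle.volume_eq_smul_haarAddCircle]
  have hI : ∫ s, φ s ∂μ01 = ∫ x in (0:ℝ)..1, ψ x := by
    rw [← integral_sub_left_eq_self (fun s => φ s) μ01 t, ← hv,
      ← AddCircle.integral_preimage (1:ℝ) 0 (fun s => φ (t - s)),
      intervalIntegral.integral_of_le (by norm_num : (0:ℝ) ≤ 1)]
    norm_num
    rfl
  set a : ℕ → ℝ := fun k => (k:ℝ) / K with ha
  have hsum : ∫ x in (0:ℝ)..1, ψ x = ∑ k ∈ Finset.range K, ∫ x in a k..a (k+1), ψ x := by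
    rw [intervalIntegral.sum_integral_adjacent_intervals (fun k _ => hint _ _)]
    simp only [ha]
    rw [Nat.cast_zero, zero_div, div_self hK0]
  have hstep : ∀ k : ℕ, a (k+1) - a k = 1 / K := by
    intro k
    simp only [ha]
    field_simp
    push_cast; ring
  -- termwise bound
  have hterm : ∀ k ∈ Finset.range K,
      |(1 / (K:ℝ)) * φ (t - (((k : ℝ) / (K:ℝ) : ℝ) : AddCircle (1:ℝ)))
        - ∫ x in a k..a (k+1), ψ x| ≤ ε / K := by
    intro k _
    have hconst : (1 / (K:ℝ)) * φ (t - (((k : ℝ) / (K:ℝ) : ℝ) : AddCircle (1:ℝ)))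
        = ∫ x in a k..a (k+1), φ (t - ((a k : ℝ) : AddCircle (1:ℝ))) := by
      rw [intervalIntegral.integral_const, hstep k, smul_eq_mul]
    rw [hconst, ← intervalIntegral.integral_sub (intervalIntegrable_const) (hint _ _)]
    have hb : ∀ x ∈ Set.uIoc (a k) (a (k+1)),
        ‖φ (t - ((a k : ℝ) : AddCircle (1:ℝ))) - ψ x‖ ≤ ε := by
      intro x hx
      have hle : a k ≤ a (k+1) := by
        have := hstep k; nlinarith [one_div_pos.mpr hKpos]
      rw [Set.uIoc_of_le hle] at hx
      have hdx : dist (t - ((a k : ℝ) : AddCircle (1:ℝ))) (t - ((x : ℝ) : AddCircle (1:ℝ))) < δ := by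
        rw [dist_sub_left]
        calc dist ((a k : ℝ) : AddCircle (1:ℝ)) ((x : ℝ) : AddCircle (1:ℝ))
            ≤ dist (a k) x := by
              rw [dist_eq_norm, dist_eq_norm, ← AddCircle.coe_sub]
              exact QuotientAddGroup.norm_mk_le_norm
          _ < δ := by
              rw [Real.dist_eq]
              have h1 := hx.1
              have h2 := hx.2
              have h3 := hstep k
              rw [abs_lt]
              constructor <;> nlinarith
      have := hmod hdx
      rw [Real.dist_eq] at this
      simpa [Real.norm_eq_abs] using this.le
    calc |∫ x in a k..a (k+1), (φ (t - ((a k : ℝ) : AddCircle (1:ℝ))) - ψ x)|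
        ≤ ε * |a (k+1) - a k| := by
          simpa [Real.norm_eq_abs] using
            intervalIntegral.norm_integral_le_of_norm_le_const hb
      _ = ε / K := by rw [hstep k]; rw [abs_of_nonneg (by positivity)]; ring
  -- assemble
  have hdecomp : (1 / (K:ℝ)) * ∑ k ∈ Finset.range K,
      φ (t - (((k : ℝ) / (K:ℝ) : ℝ) : AddCircle (1:ℝ))) - ∫ s, φ s ∂μ01
      = ∑ k ∈ Finset.range K,
        ((1 / (K:ℝ)) * φ (t - (((k : ℝ) / (K:ℝ) : ℝ) : AddCircle (1:ℝ)))
          - ∫ x in a k..a (k+1), ψ x) := by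
    rw [hI, hsum, Finset.mul_sum, Finset.sum_sub_distrib]
  rw [hdecomp]
  calc |∑ k ∈ Finset.range K, _| ≤ ∑ k ∈ Finset.range K,
        |(1 / (K:ℝ)) * φ (t - (((k : ℝ) / (K:ℝ) : ℝ) : AddCircle (1:ℝ)))
          - ∫ x in a k..a (k+1), ψ x| := Finset.abs_sum_le_sum_abs _ _
    _ ≤ ∑ _k ∈ Finset.range K, ε / K := Finset.sum_le_sum hterm
    _ = ε := by
        rw [Finset.sum_const, Finset.card_range, nsmul_eq_mul]
        field_simp
theorem avg_translates_tendsto_norm_sq (g : Lp ℂ ∞ μ01) :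
    ∃ K : ℕ → ℕ, StrictMono K ∧
      ∀ᵐ t ∂μ01,
        Tendsto (fun n : ℕ =>
            (1 / (K n : ℝ)) * ∑ k ∈ Finset.range (K n),
              ‖(g : AddCircle (1 : ℝ) → ℂ)
                  (t - (((k : ℝ) / (K n : ℝ) : ℝ) : AddCircle (1 : ℝ)))‖ ^ 2)
          atTop (𝓝 (∫ s, ‖(g : AddCircle (1 : ℝ) → ℂ) s‖ ^ 2 ∂μ01)) := by
  classical
  set F : AddCircle (1:ℝ) → ℝ := fun t => ‖(g : AddCircle (1 : ℝ) → ℂ) t‖ ^ 2 with hF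
  set c : ℝ := ∫ s, F s ∂μ01 with hc
  set A : ℕ → AddCircle (1:ℝ) → ℝ := fun K t =>
    (1 / (K : ℝ)) * ∑ k ∈ Finset.range K,
      F (t - (((k : ℝ) / (K : ℝ) : ℝ) : AddCircle (1 : ℝ))) with hA
  have hFsm : StronglyMeasurable F := by
    have h := (Lp.stronglyMeasurable g).norm
    simpa [hF, pow_two, Pi.mul_def] using h.mul h
  have hFi : Integrable F μ01 := by
    have hg2 : MemLp (g : AddCircle (1:ℝ) → ℂ) 2 μ01 :=
      (Lp.memLp g).mono_exponent le_top
    have := hg2.integrable_norm_rpow two_ne_zero ENNReal.ofNat_ne_top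
    simpa [hF, ENNReal.toReal_ofNat, Real.rpow_natCast] using this
  have hAm : ∀ K, AEStronglyMeasurable (A K) μ01 := by
    intro K
    apply AEStronglyMeasurable.const_mul
    exact (Finset.stronglyMeasurable_fun_sum _ fun k _ =>
      hFsm.comp_measurable (measurable_id.sub_const _)).aestronglyMeasurable
  -- L¹ convergence of the averages
  have hL1 : Tendsto (fun K => eLpNorm (A K - fun _ => c) 1 μ01) atTop (𝓝 0) := by
    rw [ENNReal.tendsto_nhds_zero]
    intro ε hε
    obtain ⟨r, hr0, hr⟩ : ∃ r : ℝ, 0 < r ∧ ENNReal.ofReal (r + (r + r)) ≤ ε := by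
      rcases eq_or_ne ε ⊤ with h | h
      · exact ⟨1, one_pos, by simp [h]⟩
      · have htr : 0 < ε.toReal := ENNReal.toReal_pos hε.ne' h
        refine ⟨ε.toReal / 3, by positivity, ?_⟩
        have h3 : ε.toReal / 3 + (ε.toReal / 3 + ε.toReal / 3) = ε.toReal := by ring
        rw [h3, ENNReal.ofReal_toReal h]
    obtain ⟨φ, hφr, hφi⟩ := hFi.exists_boundedContinuous_integral_sub_le hr0
    set cφ : ℝ := ∫ s, φ s ∂μ01 with hcφ
    set Aφ : ℕ → AddCircle (1:ℝ) → ℝ := fun K t =>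
      (1 / (K : ℝ)) * ∑ k ∈ Finset.range K,
        φ (t - (((k : ℝ) / (K : ℝ) : ℝ) : AddCircle (1 : ℝ))) with hAφ
    obtain ⟨K₀, hK₀1, hK₀⟩ := riemann_unif φ hr0
    rw [eventually_atTop]
    refine ⟨K₀, fun K hK => ?_⟩
    have hK1 : 1 ≤ K := le_trans hK₀1 hK
    have hKne : (K:ℝ) ≠ 0 := by positivity
    -- measurability facts
    have hφsm : StronglyMeasurable (φ : AddCircle (1:ℝ) → ℝ) := φ.continuous.stronglyMeasurable
    have hAφm : AEStronglyMeasurable (Aφ K) μ01 := by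
      apply AEStronglyMeasurable.const_mul
      exact (Finset.stronglyMeasurable_fun_sum _ fun k _ =>
        hφsm.comp_measurable (measurable_id.sub_const _)).aestronglyMeasurable
    have hDsm : StronglyMeasurable (fun t => F t - φ t) := hFsm.sub hφsm
    -- eLpNorm of F - φ
    have hDe : eLpNorm (fun t => F t - φ t) 1 μ01 ≤ ENNReal.ofReal r := by
      have hofr := ofReal_integral_norm_eq_lintegral_enorm (hFi.sub hφi)
      simp only [Pi.sub_apply] at hofr
      rw [eLpNorm_one_eq_lintegral_enorm, ← hofr]
      exact ENNReal.ofReal_le_ofReal hφr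
    -- term 1
    have h1 : eLpNorm (fun t => A K t - Aφ K t) 1 μ01 ≤ ENNReal.ofReal r := by
      have heq : (fun t => A K t - Aφ K t)
          = (1 / (K:ℝ)) • ∑ k ∈ Finset.range K,
            (fun t => F (t - (((k : ℝ) / (K : ℝ) : ℝ) : AddCircle (1 : ℝ)))
              - φ (t - (((k : ℝ) / (K : ℝ) : ℝ) : AddCircle (1 : ℝ)))) := by
        funext t
        simp only [hA, hAφ, Pi.smul_apply, Finset.sum_apply, smul_eq_mul]
        rw [← mul_sub, ← Finset.sum_sub_distrib]
      rw [heq, eLpNorm_const_smul]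
      have hsum_le : eLpNorm (∑ k ∈ Finset.range K,
          (fun t => F (t - (((k : ℝ) / (K : ℝ) : ℝ) : AddCircle (1 : ℝ)))
            - φ (t - (((k : ℝ) / (K : ℝ) : ℝ) : AddCircle (1 : ℝ))))) 1 μ01
          ≤ K * ENNReal.ofReal r := by
        refine le_trans (eLpNorm_sum_le (fun k _ =>
          (hDsm.comp_measurable (measurable_id.sub_const _)).aestronglyMeasurable)
          le_rfl) ?_
        have hterm : ∀ k ∈ Finset.range K,
            eLpNorm (fun t => F (t - (((k : ℝ) / (K : ℝ) : ℝ) : AddCircle (1 : ℝ)))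
              - φ (t - (((k : ℝ) / (K : ℝ) : ℝ) : AddCircle (1 : ℝ)))) 1 μ01
            ≤ ENNReal.ofReal r := by
          intro k _
          have : (fun t => F (t - (((k : ℝ) / (K : ℝ) : ℝ) : AddCircle (1 : ℝ)))
              - φ (t - (((k : ℝ) / (K : ℝ) : ℝ) : AddCircle (1 : ℝ))))
              = (fun t => F t - φ t) ∘ (fun t => t - (((k : ℝ) / (K : ℝ) : ℝ) : AddCircle (1 : ℝ))) := rfl
          rw [this, eLpNorm_comp_measurePreserving hDsm.aestronglyMeasurable
            (measurePreserving_sub_right μ01 _)]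
          exact hDe
        calc _ ≤ ∑ _k ∈ Finset.range K, ENNReal.ofReal r := Finset.sum_le_sum hterm
          _ = K * ENNReal.ofReal r := by
            rw [Finset.sum_const, Finset.card_range, nsmul_eq_mul]
      calc ‖(1 / (K:ℝ))‖₊ • eLpNorm _ 1 μ01
          ≤ ‖(1 / (K:ℝ))‖₊ • ((K:ℝ≥0∞) * ENNReal.ofReal r) := by
            exact smul_le_smul_of_nonneg_left hsum_le (by positivity)
        _ = ENNReal.ofReal r := by
            rw [ENNReal.smul_def, smul_eq_mul]
            have : (‖(1 / (K:ℝ))‖₊ : ℝ≥0∞) = ((K:ℝ≥0∞))⁻¹ := by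
              rw [one_div, nnnorm_inv, ENNReal.coe_inv (by simpa using hKne)]
              norm_num
            rw [this, ← mul_assoc, ENNReal.inv_mul_cancel (by exact_mod_cast hKne)
              (ENNReal.natCast_ne_top K), one_mul]
    -- term 2
    have h2 : eLpNorm (fun t => Aφ K t - cφ) 1 μ01 ≤ ENNReal.ofReal r := by
      have hb : ∀ᵐ t ∂μ01, ‖Aφ K t - cφ‖ ≤ r :=
        Filter.Eventually.of_forall fun t => by
          simpa [Real.norm_eq_abs, hAφ, hcφ] using hK₀ K hK t
      refine le_trans (eLpNorm_le_of_ae_bound hb) ?_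
      simp
    -- term 3
    have h3 : eLpNorm (fun _ : AddCircle (1:ℝ) => cφ - c) 1 μ01 ≤ ENNReal.ofReal r := by
      have habs : |cφ - c| ≤ r := by
        have hsub : c - cφ = ∫ x, (F x - φ x) ∂μ01 := (integral_sub hFi hφi).symm
        rw [abs_sub_comm, hsub]
        calc |∫ x, (F x - φ x) ∂μ01| ≤ ∫ x, ‖F x - φ x‖ ∂μ01 := by
              simpa [Real.norm_eq_abs] using norm_integral_le_integral_norm
                (μ := μ01) (f := fun x => F x - φ x)
          _ ≤ r := hφr
      have hb : ∀ᵐ t ∂μ01, ‖(fun _ : AddCircle (1:ℝ) => cφ - c) t‖ ≤ |cφ - c| :=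
        Filter.Eventually.of_forall fun t => by simp [Real.norm_eq_abs]
      have h0 : eLpNorm (fun _ : AddCircle (1:ℝ) => cφ - c) 1 μ01
          ≤ ENNReal.ofReal |cφ - c| := by
        simpa using eLpNorm_le_of_ae_bound hb
      exact le_trans h0 (ENNReal.ofReal_le_ofReal habs)
    -- combine
    have hdec : (A K - fun _ => c)
        = (fun t => (A K t - Aφ K t) + ((Aφ K t - cφ) + (cφ - c))) := by
      funext t; simp only [Pi.sub_apply]; ring
    rw [hdec]
    calc eLpNorm _ 1 μ01
        ≤ eLpNorm (fun t => A K t - Aφ K t) 1 μ01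
          + eLpNorm (fun t => (Aφ K t - cφ) + (cφ - c)) 1 μ01 := by
          exact eLpNorm_add_le ((hAm K).sub hAφm)
            ((hAφm.sub aestronglyMeasurable_const).add aestronglyMeasurable_const) le_rfl
      _ ≤ eLpNorm (fun t => A K t - Aφ K t) 1 μ01
          + (eLpNorm (fun t => Aφ K t - cφ) 1 μ01
            + eLpNorm (fun _ : AddCircle (1:ℝ) => cφ - c) 1 μ01) := by
          gcongr
          exact eLpNorm_add_le (hAφm.sub aestronglyMeasurable_const)
            aestronglyMeasurable_const le_rfl
      _ ≤ ENNReal.ofReal r + (ENNReal.ofReal r + ENNReal.ofReal r) := by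
          gcongr
      _ ≤ ε := by
          rw [← ENNReal.ofReal_add hr0.le hr0.le, ← ENNReal.ofReal_add hr0.le (by positivity)]
          exact hr
  -- convergence in measure, then a.e. along a subsequence
  have hTIM : TendstoInMeasure μ01 A atTop (fun _ => c) :=
    tendstoInMeasure_of_tendsto_eLpNorm one_ne_zero hAm aestronglyMeasurable_const hL1
  obtain ⟨ns, hns, hae⟩ := hTIM.exists_seq_tendsto_ae
  refine ⟨ns, hns, ?_⟩
  filter_upwards [hae] with t ht
  exact ht
end
end

section
/- Every equal norm Parseval frame {f_i}_{i=1}^{Kn} for an n-dimensional Hilbert space (K a positive integer) can be partitioned into K linearly independent spanning sets, each of cardinality exactly n. -/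
/- Proposition 8.4: every equal norm Parseval frame of `Kn` vectors for an
`n`-dimensional Hilbert space can be partitioned into `K` linearly independent
spanning sets, each of cardinality exactly `n`. -/

set_option linter.unusedSectionVars false
open Finset Submodule

section Core
variable {ι : Type*} [DecidableEq ι] {V : Type*} [AddCommGroup V] [Module ℂ V] {f : ι → V}

def spn (f : ι → V) (A : Finset ι) : Submodule ℂ V := Submodule.span ℂ (f '' ↑A)
def indep (f : ι → V) (A : Finset ι) : Prop := LinearIndependent ℂ (fun i : ↑(A : Set ι) => f i)

lemma spn_mono {A B : Finset ι} (h : A ⊆ B) : spn f A ≤ spn f B :=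
  span_mono (Set.image_mono (by exact_mod_cast h))

lemma mem_spn {A : Finset ι} {i : ι} (h : i ∈ A) : f i ∈ spn f A :=
  subset_span ⟨i, by simpa using h⟩

-- key disjointness lemma
lemma spn_disjoint {B S T : Finset ι} (hB : indep f B) (hS : S ⊆ B) (hT : T ⊆ B)
    (hd : Disjoint S T) {v : V} (h1 : v ∈ spn f S) (h2 : v ∈ spn f T) : v = 0 := by
  have hind : LinearIndependent ℂ (fun i : ↑(B : Set ι) => f i) := hB
  set g : ↑(B : Set ι) → V := fun i => f i with hg
  have hsub : ∀ {C : Finset ι}, C ⊆ B → f '' ↑C = g '' {i : ↑(B : Set ι) | ↑i ∈ C} := by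
    intro C hC
    ext w
    constructor
    · rintro ⟨x, hx, rfl⟩
      exact ⟨⟨x, by exact_mod_cast hC (by exact_mod_cast hx)⟩, by simpa using hx, rfl⟩
    · rintro ⟨x, hx, rfl⟩
      exact ⟨↑x, by simpa using hx, rfl⟩
  have hdisj : Disjoint (span ℂ (g '' {i : ↑(B : Set ι) | ↑i ∈ S}))
      (span ℂ (g '' {i : ↑(B : Set ι) | ↑i ∈ T})) := by
    apply hind.disjoint_span_image
    rw [Set.disjoint_iff]
    rintro x ⟨hxS, hxT⟩
    exact absurd (Finset.mem_inter.2 ⟨hxS, hxT⟩) (by simp [Finset.disjoint_iff_inter_eq_empty.1 hd])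
  have h1' : v ∈ span ℂ (g '' {i : ↑(B : Set ι) | ↑i ∈ S}) := by rwa [spn, hsub hS] at h1
  have h2' : v ∈ span ℂ (g '' {i : ↑(B : Set ι) | ↑i ∈ T}) := by rwa [spn, hsub hT] at h2
  exact Submodule.disjoint_def.1 hdisj v h1' h2'

lemma spn_union {S T : Finset ι} : spn f (S ∪ T) = spn f S ⊔ spn f T := by
  rw [spn, spn, spn, ← Submodule.span_union, ← Set.image_union]
  congr 1
  simp

lemma mem_spn_inter {B S T : Finset ι} (hB : indep f B) (hS : S ⊆ B) (hT : T ⊆ B)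
    {v : V} (h1 : v ∈ spn f S) (h2 : v ∈ spn f T) : v ∈ spn f (S ∩ T) := by
  have hsplit : S = (S ∩ T) ∪ (S \ T) := by
    ext x; simp [Finset.mem_inter, Finset.mem_sdiff, Finset.mem_union]; tauto
  rw [hsplit, spn_union] at h1
  rcases Submodule.mem_sup.1 h1 with ⟨u, hu, w, hw, rfl⟩
  have hw2 : w ∈ spn f T ⊔ spn f (S ∩ T) := by
    have : w = (u + w) - u := by abel
    rw [this]
    exact Submodule.sub_mem _ (Submodule.mem_sup_left h2) (Submodule.mem_sup_right hu)
  have hw2' : w ∈ spn f T := by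
    have : spn f T ⊔ spn f (S ∩ T) = spn f T :=
      sup_eq_left.2 (spn_mono (Finset.inter_subset_right))
    rwa [this] at hw2
  have : w = 0 := spn_disjoint hB (Finset.sdiff_subset.trans hS) hT
    (Finset.sdiff_disjoint) hw hw2'
  simp [this] at *
  simpa [this] using hu


lemma indep_mono {A B : Finset ι} (h : A ⊆ B) (hB : indep f B) : indep f A := by
  have : (fun i : ↑(A : Set ι) => f i) =
      (fun i : ↑(B : Set ι) => f i) ∘ (Set.inclusion (by exact_mod_cast h)) := rfl
  rw [indep, this]
  exact hB.comp _ (Set.inclusion_injective _)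


lemma indep_insert {A : Finset ι} {x : ι} (hx : x ∉ A) (hA : indep f A)
    (hs : f x ∉ spn f A) : indep f (insert x A) := by
  have h : LinearIndependent ℂ fun i : ↑(insert x (A : Set ι)) => f i :=
    (linearIndepOn_insert (by simpa using hx)).2 ⟨hA, hs⟩
  have e : ↑(insert x A) = (insert x (A : Set ι)) := by simp
  rw [indep, e]
  exact h

lemma indep_empty : indep f (∅ : Finset ι) := by
  rw [indep]
  have : ((∅ : Finset ι) : Set ι) = ∅ := Finset.coe_empty
  rw [this]
  exact linearIndependent_empty_type


lemma spn_sdiff_aux {B : Finset ι} (hB : indep f B) {v : V} (hv : v ∈ spn f B) :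
    ∀ (B₀ : Finset ι), B₀ ⊆ B → (∀ y ∈ B₀, v ∈ spn f (B.erase y)) → v ∈ spn f (B \ B₀) := by
  intro B₀
  induction B₀ using Finset.induction_on with
  | empty => intro _ _; simpa using hv
  | @insert y B₀ hy IH =>
    intro hsub hall
    have h1 : v ∈ spn f (B \ B₀) := IH (fun a ha => hsub (Finset.mem_insert_of_mem ha))
      (fun a ha => hall a (Finset.mem_insert_of_mem ha))
    have h2 : v ∈ spn f (B.erase y) := hall y (Finset.mem_insert_self _ _)
    have h3 := mem_spn_inter hB (Finset.sdiff_subset) (Finset.erase_subset _ _) h1 h2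
    have he : (B \ B₀) ∩ (B.erase y) = B \ (insert y B₀) := by
      ext a
      simp only [Finset.mem_inter, Finset.mem_sdiff, Finset.mem_erase, Finset.mem_insert]
      tauto
    rwa [he] at h3

lemma mem_spn_circuit {B C : Finset ι} (hB : indep f B) {v : V} (hv : v ∈ spn f B)
    (hC : ∀ y, y ∈ C ↔ y ∈ B ∧ v ∉ spn f (B.erase y)) : v ∈ spn f C := by
  have hCB : C ⊆ B := fun a ha => ((hC a).1 ha).1
  have h := spn_sdiff_aux hB hv (B \ C) (Finset.sdiff_subset) ?_
  · rwa [Finset.sdiff_sdiff_self_left, Finset.inter_eq_right.2 hCB] at h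
  · intro y hy
    rw [Finset.mem_sdiff] at hy
    by_contra hne
    exact hy.2 ((hC y).2 ⟨hy.1, hne⟩)

end Core

section Exch
variable {ι : Type*} [DecidableEq ι] {V : Type*} [AddCommGroup V] [Module ℂ V] {f : ι → V}

/-- iterated exchange -/
def exch (B : Finset ι) : List (ι × ι) → Finset ι
  | [] => B
  | p :: L => exch (insert p.1 (B.erase p.2)) L

lemma spn_image_insert {x : ι} {C : Finset ι} :
    spn f (insert x C) = span ℂ (insert (f x) (f '' ↑C)) := by
  rw [spn, Finset.coe_insert, Set.image_insert_eq]

lemma spn_eq_insert_erase {y : ι} {B : Finset ι} (hy : y ∈ B) :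
    spn f B = span ℂ (insert (f y) (f '' ↑(B.erase y))) := by
  conv_lhs => rw [show B = insert y (B.erase y) from (Finset.insert_erase hy).symm]
  exact spn_image_insert

lemma exch_spec : ∀ (L : List (ι × ι)) (B : Finset ι), indep f B →
    (∀ p ∈ L, p.1 ∉ B ∧ f p.1 ∈ spn f B ∧ f p.1 ∉ spn f (B.erase p.2)) →
    L.Pairwise (fun p q => f p.1 ∈ spn f (B.erase q.2)) →
    indep f (exch B L) ∧ spn f (exch B L) = spn f B := by
  intro L
  induction L with
  | nil => intro B hB _ _; exact ⟨hB, rfl⟩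
  | cons p L' IH =>
    intro B hB hmem htri
    obtain ⟨hx1B, hx1spn, hx1er⟩ := hmem p (List.mem_cons_self)
    have hy1B : p.2 ∈ B := by
      by_contra hy
      rw [Finset.erase_eq_of_notMem hy] at hx1er
      exact hx1er hx1spn
    obtain ⟨htri1, htri'⟩ := List.pairwise_cons.1 htri
    set B₁ : Finset ι := insert p.1 (B.erase p.2) with hB₁def
    have hx1nerase : p.1 ∉ B.erase p.2 := fun h => hx1B (Finset.mem_of_mem_erase h)
    have hindB₁ : indep f B₁ :=
      indep_insert hx1nerase (indep_mono (Finset.erase_subset _ _) hB) hx1er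
    have hspnB₁ : spn f B₁ = spn f B := by
      apply le_antisymm
      · rw [spn_image_insert]
        apply span_le.2
        rintro v hv
        rcases Set.mem_insert_iff.1 hv with rfl | ⟨i, hi, rfl⟩
        · exact hx1spn
        · exact mem_spn (Finset.mem_of_mem_erase (by exact_mod_cast hi))
      · rw [spn_eq_insert_erase hy1B]
        apply span_le.2
        rintro v hv
        rcases Set.mem_insert_iff.1 hv with rfl | ⟨i, hi, rfl⟩
        · have h1 : f p.1 ∈ span ℂ (insert (f p.2) (f '' ↑(B.erase p.2))) := by
            rw [← spn_eq_insert_erase hy1B]; exact hx1spn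
          have := mem_span_insert_exchange h1 (by exact hx1er)
          rw [← spn_image_insert] at this
          exact this
        · exact mem_spn (Finset.mem_insert_of_mem (by exact_mod_cast hi))
    -- facts about later pairs
    have hq2 : ∀ q ∈ L', q.2 ∈ B ∧ q.2 ≠ p.2 ∧ q.2 ≠ p.1 ∧
        spn f (B.erase q.2) ≤ spn f (B₁.erase q.2) ∧
        spn f (B₁.erase q.2) ≤ spn f (B.erase q.2) := by
      intro q hq
      obtain ⟨hxkB, hxkspn, hxker⟩ := hmem q (List.mem_cons_of_mem _ hq)
      have htr : f p.1 ∈ spn f (B.erase q.2) := htri1 q hq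
      have hykB : q.2 ∈ B := by
        by_contra hy
        rw [Finset.erase_eq_of_notMem hy] at hxker
        exact hxker hxkspn
      have hykne : q.2 ≠ p.2 := by
        intro h
        rw [h] at htr
        exact hx1er htr
      have hykne1 : q.2 ≠ p.1 := fun h => hx1B (h ▸ hykB)
      have herase : B₁.erase q.2 = insert p.1 ((B.erase p.2).erase q.2) :=
        Finset.erase_insert_of_ne (fun h => hykne1 h.symm)
      have hcomm : (B.erase p.2).erase q.2 = (B.erase q.2).erase p.2 := Finset.erase_right_comm
      have hsub1 : spn f ((B.erase p.2).erase q.2) ≤ spn f (B.erase p.2) :=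
        spn_mono (Finset.erase_subset _ _)
      have hsub2 : spn f ((B.erase p.2).erase q.2) ≤ spn f (B.erase q.2) := by
        rw [hcomm]; exact spn_mono (Finset.erase_subset _ _)
      have hy1mem : p.2 ∈ B.erase q.2 := Finset.mem_erase.2 ⟨Ne.symm hykne, hy1B⟩
      -- f p.2 ∈ spn (B₁.erase q.2)
      have hp2mem : f p.2 ∈ spn f (B₁.erase q.2) := by
        have h1 : f p.1 ∈ span ℂ (insert (f p.2) (f '' ↑((B.erase q.2).erase p.2))) := by
          rw [← spn_eq_insert_erase hy1mem]; exact htr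
        have h2 : f p.1 ∉ span ℂ (f '' ↑((B.erase q.2).erase p.2)) := by
          intro h
          apply hx1er
          rw [← hcomm] at h
          exact hsub1 h
        have h3 := mem_span_insert_exchange h1 h2
        rw [herase, spn_image_insert, hcomm]
        exact h3
      constructor; · exact hykB
      constructor; · exact hykne
      constructor; · exact hykne1
      constructor
      · -- spn (B.erase q.2) ≤ spn (B₁.erase q.2)
        rw [spn_eq_insert_erase (show p.2 ∈ B.erase q.2 from hy1mem)]
        apply span_le.2
        rintro v hv
        rcases Set.mem_insert_iff.1 hv with rfl | ⟨i, hi, rfl⟩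
        · exact hp2mem
        · have hi' : i ∈ (B.erase q.2).erase p.2 := by exact_mod_cast hi
          rw [herase]
          exact mem_spn (Finset.mem_insert_of_mem (hcomm ▸ hi'))
      · -- spn (B₁.erase q.2) ≤ spn (B.erase q.2)
        rw [herase, spn_image_insert]
        apply span_le.2
        rintro v hv
        rcases Set.mem_insert_iff.1 hv with rfl | ⟨i, hi, rfl⟩
        · exact htr
        · have hi' : i ∈ (B.erase p.2).erase q.2 := by exact_mod_cast hi
          exact hsub2 (mem_spn hi')
    have hmem' : ∀ q ∈ L', q.1 ∉ B₁ ∧ f q.1 ∈ spn f B₁ ∧ f q.1 ∉ spn f (B₁.erase q.2) := by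
      intro q hq
      obtain ⟨hxkB, hxkspn, hxker⟩ := hmem q (List.mem_cons_of_mem _ hq)
      obtain ⟨hykB, hykne, hykne1, hle1, hle2⟩ := hq2 q hq
      have hxkne1 : q.1 ≠ p.1 := by
        rintro h
        exact hxker (h ▸ htri1 q hq)
      refine ⟨?_, by rw [hspnB₁]; exact hxkspn, fun h => hxker (hle2 h)⟩
      intro h
      rcases Finset.mem_insert.1 h with h | h
      · exact hxkne1 h
      · exact hxkB (Finset.mem_of_mem_erase h)
    have htri'' : L'.Pairwise (fun p' q' => f p'.1 ∈ spn f (B₁.erase q'.2)) := by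
      refine htri'.imp_of_mem ?_
      intro a b ha hb hab
      exact (hq2 b hb).2.2.2.1 hab
    have := IH B₁ hindB₁ hmem' htri''
    exact ⟨this.1, by rw [show exch B (p :: L') = exch B₁ L' from rfl, this.2, hspnB₁]⟩

lemma exch_sets : ∀ (L : List (ι × ι)) (B : Finset ι),
    (∀ p ∈ L, p.1 ∉ B ∧ p.2 ∈ B) →
    (L.map Prod.fst).Nodup → (L.map Prod.snd).Nodup →
    (∀ p ∈ L, ∀ q ∈ L, p.1 ≠ q.2) →
    exch B L = (B \ (L.map Prod.snd).toFinset) ∪ (L.map Prod.fst).toFinset := by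
  intro L
  induction L with
  | nil => intro B _ _ _ _; simp [exch]
  | cons p L' IH =>
    intro B hmem hnf hns hcross
    have hx : p.1 ∉ B := (hmem p (List.mem_cons_self)).1
    have hy : p.2 ∈ B := (hmem p (List.mem_cons_self)).2
    have hnf' : (L'.map Prod.fst).Nodup := by simpa using hnf.of_cons
    have hns' : (L'.map Prod.snd).Nodup := by simpa using hns.of_cons
    have hxnotf : p.1 ∉ L'.map Prod.fst := by
      rw [List.map_cons, List.nodup_cons] at hnf
      exact hnf.1
    have hynots : p.2 ∉ L'.map Prod.snd := by
      rw [List.map_cons, List.nodup_cons] at hns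
      exact hns.1
    have hmem' : ∀ q ∈ L', q.1 ∉ insert p.1 (B.erase p.2) ∧ q.2 ∈ insert p.1 (B.erase p.2) := by
      intro q hq
      obtain ⟨h1, h2⟩ := hmem q (List.mem_cons_of_mem _ hq)
      constructor
      · intro h
        rcases Finset.mem_insert.1 h with h | h
        · exact hxnotf (h ▸ List.mem_map_of_mem (f := Prod.fst) hq)
        · exact h1 (Finset.mem_of_mem_erase h)
      · apply Finset.mem_insert_of_mem
        refine Finset.mem_erase.2 ⟨?_, h2⟩
        intro h
        exact hynots (h ▸ List.mem_map_of_mem (f := Prod.snd) hq)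
    have hcross' : ∀ q ∈ L', ∀ q' ∈ L', q.1 ≠ q'.2 := fun q hq q' hq' =>
      hcross q (List.mem_cons_of_mem _ hq) q' (List.mem_cons_of_mem _ hq')
    have hxs : p.1 ∉ (L'.map Prod.snd).toFinset := by
      rw [List.mem_toFinset]
      intro h
      obtain ⟨q, hq, hq2⟩ := List.mem_map.1 h
      exact hcross p (List.mem_cons_self) q (List.mem_cons_of_mem _ hq) hq2.symm
    rw [show exch B (p :: L') = exch (insert p.1 (B.erase p.2)) L' from rfl,
      IH _ hmem' hnf' hns' hcross']
    ext a
    simp only [Finset.mem_union, Finset.mem_sdiff, Finset.mem_insert, Finset.mem_erase,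
      List.map_cons, List.toFinset_cons, List.mem_toFinset] at *
    by_cases hax : a = p.1
    · subst hax
      tauto
    · by_cases hay : a = p.2
      · subst hay
        tauto
      · tauto

end Exch

section RH
variable {ι : Type*} [Fintype ι] [DecidableEq ι] {V : Type*} [AddCommGroup V] [Module ℂ V]
  {f : ι → V}

-- path existence from reflexive transitive closure
lemma exists_chain {arc : ι → ι → Prop} {i0 w : ι} (h : Relation.ReflTransGen arc i0 w) :
    ∃ (m : ℕ) (z : ℕ → ι), z 0 = i0 ∧ (∀ t < m, arc (z t) (z (t + 1))) ∧ z m = w := by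
  induction h with
  | refl => exact ⟨0, fun _ => i0, rfl, by omega, rfl⟩
  | @tail b c hab hbc IH =>
    obtain ⟨m, z, hz0, harc, hzm⟩ := IH
    refine ⟨m + 1, Function.update z (m + 1) c, ?_, ?_, ?_⟩
    · rw [Function.update_of_ne (by omega)]; exact hz0
    · intro t ht
      rcases Nat.lt_or_ge t m with h | h
      · rw [Function.update_of_ne (by omega), Function.update_of_ne (by omega)]
        exact harc t h
      · have : t = m := by omega
        subst this
        rw [Function.update_of_ne (by omega), Function.update_self, hzm]
        exact hbc
    · rw [Function.update_self]

lemma indep_card {A : Finset ι} (hA : indep f A) :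
    A.card = Module.finrank ℂ (spn f A) := by
  have h := finrank_span_eq_card (R := ℂ) hA
  have hr : Set.range (fun i : ↑(A : Set ι) => f i) = f '' ↑A := by
    ext v; constructor
    · rintro ⟨i, rfl⟩; exact ⟨↑i, i.2, rfl⟩
    · rintro ⟨i, hi, rfl⟩; exact ⟨⟨i, hi⟩, rfl⟩
  rw [hr] at h
  rw [spn, h]
  simp

end RH

section Aug
variable {ι : Type*} [Fintype ι] [DecidableEq ι] {V : Type*} [AddCommGroup V] [Module ℂ V]
  {f : ι → V}

def arcP (f : ι → V) {r : ℕ} (A : Fin r → Finset ι) (zz y : ι) : Prop :=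
  ∃ j, y ∈ A j ∧ zz ∉ A j ∧ f zz ∈ spn f (A j) ∧ f zz ∉ spn f ((A j).erase y)

def sinkP (f : ι → V) {r : ℕ} (A : Fin r → Finset ι) (zz : ι) : Prop :=
  ∃ j, f zz ∉ spn f (A j)

lemma augment {r : ℕ} (S' : Finset ι) (i0 : ι) (hi0 : i0 ∉ S') (c' : ι → Fin r)
    (hA : ∀ j, indep f (S'.filter fun i => c' i = j))
    (hcond : ∀ J : Finset ι, J ⊆ insert i0 S' → J.Nonempty →
      J.card ≤ r * Module.finrank ℂ (spn f J)) :
    ∃ c : ι → Fin r, ∀ j, indep f ((insert i0 S').filter fun i => c i = j) := by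
  classical
  set A : Fin r → Finset ι := fun j => S'.filter fun i => c' i = j with hAdef
  have hAS : ∀ j, A j ⊆ S' := fun j => Finset.filter_subset _ _
  have hclass : ∀ z ∈ S', z ∈ A (c' z) := fun z hz => Finset.mem_filter.2 ⟨hz, rfl⟩
  have hclass' : ∀ {z : ι} {j}, z ∈ A j → c' z = j := fun hz => (Finset.mem_filter.1 hz).2
  by_cases hS : ∃ w, Relation.ReflTransGen (arcP f A) i0 w ∧ sinkP f A w
  · -- augmenting path case
    obtain ⟨w, hreach, hsink⟩ := hS
    obtain ⟨m0, z0, hz00, harc0, hzm0⟩ := exists_chain hreach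
    have hex : ∃ m, ∃ z : ℕ → ι, z 0 = i0 ∧ (∀ t < m, arcP f A (z t) (z (t+1))) ∧
        sinkP f A (z m) := ⟨m0, z0, hz00, harc0, by rwa [hzm0]⟩
    set m := Nat.find hex with hm
    obtain ⟨z, hz0, harc, hsinkm⟩ := Nat.find_spec hex
    rw [← hm] at harc hsinkm
    have hmin : ∀ k, k < m → ¬ (∃ z : ℕ → ι, z 0 = i0 ∧ (∀ t < k, arcP f A (z t) (z (t+1))) ∧
        sinkP f A (z k)) := fun k hk => Nat.find_min hex hk
    have hnosink : ∀ t, t < m → ¬ sinkP f A (z t) := by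
      intro t ht hs
      exact hmin t ht ⟨z, hz0, fun s hs' => harc s (by omega), hs⟩
    have hnonsink : ∀ t, t < m → ∀ j, f (z t) ∈ spn f (A j) := by
      intro t ht j
      by_contra h
      exact hnosink t ht ⟨j, h⟩
    have hnoshort : ∀ t u, t + 1 < u → u ≤ m → ¬ arcP f A (z t) (z u) := by
      intro t u h1 h2 hzarc
      apply hmin (m - u + t + 1) (by omega)
      refine ⟨fun s => if s ≤ t then z s else z (s + u - t - 1), by simp [hz0], ?_, ?_⟩
      · intro s hs
        rcases Nat.lt_or_ge s t with h | h
        · have e1 : s ≤ t := by omega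
          have e2 : s + 1 ≤ t := by omega
          simp only [if_pos e1, if_pos e2]
          exact harc s (by omega)
        · rcases Nat.eq_or_lt_of_le h with h' | h'
          · have e1 : s ≤ t := by omega
            have e2 : ¬ (s + 1 ≤ t) := by omega
            simp only [if_pos e1, if_neg e2]
            have e3 : s + 1 + u - t - 1 = u := by omega
            rw [e3]
            have e4 : s = t := h'.symm
            rw [e4]
            exact hzarc
          · have e1 : ¬ (s ≤ t) := by omega
            have e2 : ¬ (s + 1 ≤ t) := by omega
            simp only [if_neg e1, if_neg e2]
            have e3 : s + 1 + u - t - 1 = (s + u - t - 1) + 1 := by omega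
            rw [e3]
            exact harc (s + u - t - 1) (by omega)
      · have e1 : ¬ (m - u + t + 1 ≤ t) := by omega
        simp only [if_neg e1]
        have e2 : m - u + t + 1 + u - t - 1 = m := by omega
        rw [e2]
        exact hsinkm
    have hinj : ∀ t u, t ≤ m → u ≤ m → z t = z u → t = u := by
      have key : ∀ t u, t < u → u ≤ m → z t = z u → False := by
        intro t u htu hum heq
        rcases Nat.eq_or_lt_of_le hum with h' | h'
        · subst h'
          exact hnosink t htu (by rw [heq]; exact hsinkm)
        · rcases Nat.eq_or_lt_of_le (Nat.succ_le_of_lt htu) with h'' | h''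
          · have h3 : u = t + 1 := by omega
            obtain ⟨j', g1, g2, _, _⟩ := harc t (by omega)
            rw [h3] at heq
            rw [← heq] at g1
            exact g2 g1
          · exact hnoshort t (u + 1) (by omega) (by omega) (by rw [heq]; exact harc u h')
      intro t u ht hu heq
      rcases Nat.lt_trichotomy t u with h | h | h
      · exact absurd heq (fun e => key t u h hu e)
      · exact h
      · exact absurd heq.symm (fun e => key u t h ht e)
    -- choose witnesses for arcs
    have harc' : ∀ t, t < m → ∃ j, z (t+1) ∈ A j ∧ z t ∉ A j ∧ f (z t) ∈ spn f (A j) ∧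
        f (z t) ∉ spn f ((A j).erase (z (t+1))) := fun t ht => harc t ht
    choose jA hjA1 hjA2 hjA3 hjA4 using harc'
    obtain ⟨jstar, hjstar⟩ := hsinkm
    set jc : ℕ → Fin r := fun t => if ht : t < m then jA t ht else jstar with hjcdef
    have hjc1 : ∀ t (ht : t < m), z (t+1) ∈ A (jc t) := by
      intro t ht; simp only [hjcdef, dif_pos ht]; exact hjA1 t ht
    have hjc2 : ∀ t (ht : t < m), z t ∉ A (jc t) := by
      intro t ht; simp only [hjcdef, dif_pos ht]; exact hjA2 t ht
    have hjc3 : ∀ t (ht : t < m), f (z t) ∈ spn f (A (jc t)) := by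
      intro t ht; simp only [hjcdef, dif_pos ht]; exact hjA3 t ht
    have hjc4 : ∀ t (ht : t < m), f (z t) ∉ spn f ((A (jc t)).erase (z (t+1))) := by
      intro t ht; simp only [hjcdef, dif_pos ht]; exact hjA4 t ht
    -- the new coloring
    set c : ι → Fin r := fun a => if h : ∃ t, t ≤ m ∧ z t = a then
        (if Nat.find h = m then jstar else jc (Nat.find h)) else c' a with hcdef
    have hcz : ∀ t, t ≤ m → c (z t) = if t = m then jstar else jc t := by
      intro t ht
      have hex2 : ∃ s, s ≤ m ∧ z s = z t := ⟨t, ht, rfl⟩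
      have hfind := Nat.find_spec hex2
      have heq : Nat.find hex2 = t := hinj _ _ hfind.1 ht hfind.2
      simp only [hcdef, dif_pos hex2, heq]
    have hcoff : ∀ a, (¬ ∃ t, t ≤ m ∧ z t = a) → c a = c' a := by
      intro a ha; simp only [hcdef, dif_neg ha]
    -- the exchange lists
    set Lp : Fin r → List (ι × ι) := fun j =>
      ((List.range m).filter (fun t => decide (jc t = j))).map (fun t => (z t, z (t+1)))
      with hLpdef
    have hLmem : ∀ j p, p ∈ Lp j ↔ ∃ t, t < m ∧ jc t = j ∧ p = (z t, z (t+1)) := by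
      intro j p
      simp only [hLpdef, List.mem_map, List.mem_filter, List.mem_range, decide_eq_true_eq]
      constructor
      · rintro ⟨t, ⟨ht, hj⟩, rfl⟩; exact ⟨t, ht, hj, rfl⟩
      · rintro ⟨t, ht, hj, rfl⟩; exact ⟨t, ⟨ht, hj⟩, rfl⟩
    have hsnds : ∀ j a, a ∈ ((Lp j).map Prod.snd).toFinset ↔
        ∃ t, t < m ∧ jc t = j ∧ z (t+1) = a := by
      intro j a
      rw [List.mem_toFinset, List.mem_map]
      constructor
      · rintro ⟨p, hp, rfl⟩
        obtain ⟨t, ht, hj, rfl⟩ := (hLmem j p).1 hp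
        exact ⟨t, ht, hj, rfl⟩
      · rintro ⟨t, ht, hj, rfl⟩
        exact ⟨(z t, z (t+1)), (hLmem j _).2 ⟨t, ht, hj, rfl⟩, rfl⟩
    have hfsts : ∀ j a, a ∈ ((Lp j).map Prod.fst).toFinset ↔
        ∃ t, t < m ∧ jc t = j ∧ z t = a := by
      intro j a
      rw [List.mem_toFinset, List.mem_map]
      constructor
      · rintro ⟨p, hp, rfl⟩
        obtain ⟨t, ht, hj, rfl⟩ := (hLmem j p).1 hp
        exact ⟨t, ht, hj, rfl⟩
      · rintro ⟨t, ht, hj, rfl⟩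
        exact ⟨(z t, z (t+1)), (hLmem j _).2 ⟨t, ht, hj, rfl⟩, rfl⟩
    -- exchange spec hypotheses
    have hexch : ∀ j, indep f (exch (A j) (Lp j)) ∧ spn f (exch (A j) (Lp j)) = spn f (A j) := by
      intro j
      apply exch_spec (Lp j) (A j) (hA j)
      · intro p hp
        obtain ⟨t, ht, hj, rfl⟩ := (hLmem j p).1 hp
        exact ⟨hj ▸ hjc2 t ht, hj ▸ hjc3 t ht, hj ▸ hjc4 t ht⟩
      · rw [hLpdef]
        rw [List.pairwise_map]
        refine ((List.pairwise_lt_range (n := m)).filter _).imp_of_mem ?_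
        intro t u htm hum htu
        rw [List.mem_filter, List.mem_range, decide_eq_true_eq] at htm hum
        have hns := hnoshort t (u+1) (by omega) (by omega)
        by_contra hcon
        exact hns ⟨j, hum.2 ▸ hjc1 u hum.1, htm.2 ▸ hjc2 t htm.1, htm.2 ▸ hjc3 t htm.1, hcon⟩
    have hform : ∀ j, exch (A j) (Lp j) =
        (A j \ ((Lp j).map Prod.snd).toFinset) ∪ ((Lp j).map Prod.fst).toFinset := by
      intro j
      apply exch_sets
      · intro p hp
        obtain ⟨t, ht, hj, rfl⟩ := (hLmem j p).1 hp
        exact ⟨hj ▸ hjc2 t ht, hj ▸ hjc1 t ht⟩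
      · rw [hLpdef, List.map_map]
        have : (Prod.fst ∘ fun t => (z t, z (t+1))) = fun t => z t := rfl
        rw [this]
        refine List.Nodup.map_on ?_ ((List.nodup_range (n := m)).filter _)
        intro x hx y hy hxy
        rw [List.mem_filter, List.mem_range] at hx hy
        exact hinj x y (by omega) (by omega) hxy
      · rw [hLpdef, List.map_map]
        have : (Prod.snd ∘ fun t => (z t, z (t+1))) = fun t => z (t+1) := rfl
        rw [this]
        refine List.Nodup.map_on ?_ ((List.nodup_range (n := m)).filter _)
        intro x hx y hy hxy
        rw [List.mem_filter, List.mem_range] at hx hy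
        have := hinj (x+1) (y+1) (by omega) (by omega) hxy
        omega
      · intro p hp q hq
        obtain ⟨t, ht, hjt, rfl⟩ := (hLmem j p).1 hp
        obtain ⟨u, hu, hju, rfl⟩ := (hLmem j q).1 hq
        intro hcon
        have : t = u + 1 := hinj t (u+1) (by omega) (by omega) hcon
        subst this
        exact (hjt ▸ hjc2 (u+1) ht) (hju ▸ hjc1 u hu)
    -- path membership facts
    have hztA : ∀ t, 1 ≤ t → t ≤ m → z t ∈ A (jc (t-1)) := by
      intro t h1 h2
      have := hjc1 (t-1) (by omega)
      have e : t - 1 + 1 = t := by omega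
      rwa [e] at this
    have hztS : ∀ t, t ≤ m → z t ∈ insert i0 S' := by
      intro t ht
      rcases Nat.eq_zero_or_pos t with rfl | h1
      · rw [hz0]; exact Finset.mem_insert_self _ _
      · exact Finset.mem_insert_of_mem (hAS _ (hztA t h1 ht))
    have hi0nA : ∀ j, i0 ∉ A j := fun j h => hi0 (hAS j h)
    have hzmnA : z m ∉ A jstar := fun h => hjstar (mem_spn h)
    -- the class identity
    have hclsmem : ∀ j a, a ∈ (insert i0 S').filter (fun i => c i = j) ↔
        ((a ∈ A j ∧ a ∉ ((Lp j).map Prod.snd).toFinset) ∨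
          a ∈ ((Lp j).map Prod.fst).toFinset ∨ (j = jstar ∧ a = z m)) := by
      intro j a
      rw [Finset.mem_filter, hfsts, hsnds]
      by_cases hpath : ∃ t, t ≤ m ∧ z t = a
      · obtain ⟨t, ht, rfl⟩ := hpath
        rw [hcz t ht]
        constructor
        · rintro ⟨-, hcj⟩
          rcases Nat.eq_or_lt_of_le ht with rfl | htm
          · rw [if_pos rfl] at hcj
            exact Or.inr (Or.inr ⟨hcj.symm, rfl⟩)
          · rw [if_neg (by omega)] at hcj
            exact Or.inr (Or.inl ⟨t, htm, hcj, rfl⟩)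
        · intro h
          refine ⟨hztS t ht, ?_⟩
          rcases h with ⟨hA1, hA2⟩ | ⟨u, hu, hju, hzu⟩ | ⟨hj, hzm⟩
          · -- a ∈ A j minus snds: impossible
            exfalso
            rcases Nat.eq_zero_or_pos t with rfl | h1
            · exact hi0nA j (hz0 ▸ hA1)
            · have : j = jc (t-1) := by
                have := hztA t h1 ht
                exact (hclass' hA1).symm.trans (hclass' this)
              apply hA2
              refine ⟨t - 1, by omega, this.symm, ?_⟩
              have e : t - 1 + 1 = t := by omega
              rw [e]
          · have : u = t := hinj u t (by omega) ht hzu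
            subst this
            rw [if_neg (by omega)]
            exact hju
          · have : t = m := hinj t m ht (le_refl m) hzm
            subst this
            rw [if_pos rfl]
            exact hj.symm
      · push_neg at hpath
        rw [hcoff a (by push_neg; exact hpath)]
        have hnotsnd : ¬ ∃ u, u < m ∧ jc u = j ∧ z (u+1) = a :=
          fun ⟨u, hu, _, hzu⟩ => hpath (u+1) (by omega) hzu
        have hnotfst : ¬ ∃ u, u < m ∧ jc u = j ∧ z u = a :=
          fun ⟨u, hu, _, hzu⟩ => hpath u (by omega) hzu
        have hnotzm : a ≠ z m := fun h => hpath m (le_refl m) h.symm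
        have hnoti0 : a ≠ i0 := fun h => hpath 0 (by omega) (by rw [hz0, h])
        constructor
        · rintro ⟨hmem, hcj⟩
          rcases Finset.mem_insert.1 hmem with rfl | hS'
          · exact absurd rfl hnoti0
          · exact Or.inl ⟨hcj ▸ hclass a hS', hnotsnd⟩
        · intro h
          rcases h with ⟨hA1, -⟩ | hf | ⟨-, hzm⟩
          · exact ⟨Finset.mem_insert_of_mem (hAS j hA1), hclass' hA1⟩
          · exact absurd hf hnotfst
          · exact absurd hzm hnotzm
    -- finish
    refine ⟨c, fun j => ?_⟩
    have hclseq : (insert i0 S').filter (fun i => c i = j) =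
        if j = jstar then insert (z m) (exch (A j) (Lp j)) else exch (A j) (Lp j) := by
      ext a
      rw [hclsmem j a]
      by_cases hj : j = jstar
      · rw [if_pos hj, Finset.mem_insert, hform j, Finset.mem_union, Finset.mem_sdiff]
        constructor
        · rintro (h | h | h)
          · exact Or.inr (Or.inl h)
          · exact Or.inr (Or.inr h)
          · exact Or.inl h.2
        · rintro (h | h | h)
          · exact Or.inr (Or.inr ⟨hj, h⟩)
          · exact Or.inl h
          · exact Or.inr (Or.inl h)
      · rw [if_neg hj, hform j, Finset.mem_union, Finset.mem_sdiff]
        constructor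
        · rintro (h | h | h)
          · exact Or.inl h
          · exact Or.inr h
          · exact absurd h.1 hj
        · rintro (h | h)
          · exact Or.inl h
          · exact Or.inr (Or.inl h)
    rw [hclseq]
    by_cases hj : j = jstar
    · rw [if_pos hj]
      have hzmnot : z m ∉ exch (A j) (Lp j) := by
        rw [hform j, Finset.mem_union, Finset.mem_sdiff]
        rintro (⟨h, -⟩ | h)
        · exact hzmnA (hj ▸ h)
        · rw [hfsts] at h
          obtain ⟨t, ht, -, hzt⟩ := h
          have : t = m := hinj t m (by omega) (le_refl m) hzt
          omega
      apply indep_insert hzmnot (hexch j).1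
      rw [(hexch j).2, hj]
      exact hjstar
    · rw [if_neg hj]
      exact (hexch j).1
  · -- blocking case: contradiction
    exfalso
    push_neg at hS
    set R : Finset ι := Finset.univ.filter (fun w => Relation.ReflTransGen (arcP f A) i0 w)
      with hRdef
    have hmemR : ∀ {w : ι}, w ∈ R ↔ Relation.ReflTransGen (arcP f A) i0 w := by
      intro w; simp [hRdef]
    have hi0R : i0 ∈ R := hmemR.2 Relation.ReflTransGen.refl
    have hnon : ∀ w ∈ R, ∀ j, f w ∈ spn f (A j) := by
      intro w hw j
      by_contra h
      exact hS w (hmemR.1 hw) ⟨j, h⟩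
    have hkey : ∀ w ∈ R, ∀ j, f w ∈ spn f (A j ∩ R) := by
      intro w hw j
      by_cases hwa : w ∈ A j
      · exact mem_spn (Finset.mem_inter.2 ⟨hwa, hw⟩)
      · have hcirc := mem_spn_circuit (hA j) (hnon w hw j)
          (C := (A j).filter fun y => f w ∉ spn f ((A j).erase y)) (fun y => Finset.mem_filter)
        refine spn_mono ?_ hcirc
        intro y hy
        rw [Finset.mem_filter] at hy
        refine Finset.mem_inter.2 ⟨hy.1, hmemR.2 ?_⟩
        exact (hmemR.1 hw).tail ⟨j, hy.1, hwa, hnon w hw j, hy.2⟩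
    have hTR : ∀ j, spn f (A j ∩ R) = spn f R := by
      intro j
      apply le_antisymm (spn_mono Finset.inter_subset_right)
      apply Submodule.span_le.2
      rintro v ⟨w, hw, rfl⟩
      exact hkey w (by exact_mod_cast hw) j
    have hcard : ∀ j, (A j ∩ R).card = Module.finrank ℂ (spn f R) := by
      intro j
      rw [indep_card (indep_mono Finset.inter_subset_left (hA j)), hTR j]
    have hRS : ∀ z ∈ R, z ≠ i0 → z ∈ S' := by
      intro w hw hne
      rcases (hmemR.1 hw).cases_tail with h | ⟨u, _, harc⟩
      · exact absurd h hne
      · obtain ⟨j, hzA, _⟩ := harc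
        exact hAS j hzA
    have hcard2 : (R.erase i0).card = ∑ j : Fin r, (A j ∩ R).card := by
      rw [Finset.card_eq_sum_card_fiberwise (f := c') (t := Finset.univ)
        (fun x _ => Finset.mem_univ _)]
      apply Finset.sum_congr rfl
      intro j _
      congr 1
      ext a
      simp only [Finset.mem_filter, Finset.mem_erase, Finset.mem_inter]
      constructor
      · rintro ⟨⟨hne, haR⟩, hc⟩
        exact ⟨hc ▸ hclass a (hRS a haR hne), haR⟩
      · rintro ⟨haA, haR⟩
        have haS : a ∈ S' := hAS j haA
        exact ⟨⟨fun h => hi0 (h ▸ haS), haR⟩, hclass' haA⟩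
    have hRcard : R.card = 1 + r * Module.finrank ℂ (spn f R) := by
      rw [← Finset.card_erase_add_one hi0R, hcard2]
      rw [Finset.sum_congr rfl (fun j _ => hcard j), Finset.sum_const, Finset.card_univ,
        Fintype.card_fin, smul_eq_mul]
      omega
    have hle := hcond R (fun a ha => by
      rcases eq_or_ne a i0 with rfl | hne
      · exact Finset.mem_insert_self _ _
      · exact Finset.mem_insert_of_mem (hRS a ha hne)) ⟨i0, hi0R⟩
    omega

end Aug

section RHMain
variable {ι : Type*} [Fintype ι] [DecidableEq ι] {V : Type*} [AddCommGroup V] [Module ℂ V]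
  {f : ι → V}

theorem radoHorn {r : ℕ} (hr : 0 < r) (f : ι → V) :
    ∀ S : Finset ι, (∀ J ⊆ S, J.Nonempty → J.card ≤ r * Module.finrank ℂ (spn f J)) →
    ∃ c : ι → Fin r, ∀ j, indep f (S.filter fun i => c i = j) := by
  intro S
  induction S using Finset.strongInduction with
  | _ S IH =>
    intro hcond
    rcases S.eq_empty_or_nonempty with rfl | ⟨i0, hi0⟩
    · refine ⟨fun _ => ⟨0, hr⟩, fun j => ?_⟩
      rw [Finset.filter_empty]
      exact indep_empty
    · have hsub : S.erase i0 ⊂ S := Finset.erase_ssubset hi0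
      obtain ⟨c', hc'⟩ := IH (S.erase i0) hsub
        (fun J hJ hne => hcond J (hJ.trans (Finset.erase_subset _ _)) hne)
      have hins : insert i0 (S.erase i0) = S := Finset.insert_erase hi0
      obtain ⟨c, hc⟩ := augment (S.erase i0) i0 (Finset.notMem_erase _ _) c' hc'
        (by rw [hins]; exact hcond)
      rw [hins] at hc
      exact ⟨c, hc⟩

end RHMain

section Parseval

lemma onb_sum_sq {E : Type*} [NormedAddCommGroup E] [InnerProductSpace ℂ E] {k : ℕ}
    (b : OrthonormalBasis (Fin k) ℂ E) (v : E) :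
    ∑ a, ‖(inner ℂ (b a) v : ℂ)‖ ^ 2 = ‖v‖ ^ 2 := by
  have h1 : ‖b.repr v‖ = ‖v‖ := b.repr.norm_map v
  rw [← h1, EuclideanSpace.norm_eq, Real.sq_sqrt (by positivity)]
  refine Finset.sum_congr rfl fun a _ => ?_
  rw [OrthonormalBasis.repr_apply_apply]

end Parseval


theorem equal_norm_parseval_partition
    {H : Type*} [NormedAddCommGroup H] [InnerProductSpace ℂ H]
    (n K : ℕ) (hK : 0 < K) (hdim : Module.finrank ℂ H = n)
    (f : Fin (K * n) → H)
    (hparseval : ∀ x : H, ∑ i, ‖(inner ℂ (f i) x : ℂ)‖ ^ 2 = ‖x‖ ^ 2)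
    (hequal : ∀ i j, ‖f i‖ = ‖f j‖) :
    ∃ part : Fin K → Finset (Fin (K * n)),
      (∀ j k, j ≠ k → Disjoint (part j) (part k)) ∧
      Finset.univ.biUnion part = Finset.univ ∧
      ∀ j, LinearIndependent ℂ (fun i : (part j : Set (Fin (K * n))) => f i) ∧
        Submodule.span ℂ (f '' (part j : Set (Fin (K * n)))) = ⊤ ∧
        (part j).card = n := by
  classical
  rcases Nat.eq_zero_or_pos n with rfl | hn
  · -- trivial case: H is zero-dimensional
    have hsub : ∀ x : H, x = 0 := by
      intro x
      have h0 : ‖x‖ ^ 2 = 0 := by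
        rw [← hparseval x]
        apply Finset.sum_eq_zero
        intro i _
        exact absurd i.is_lt (by simp)
      have : ‖x‖ = 0 := by nlinarith [norm_nonneg x]
      simpa using this
    refine ⟨fun _ => ∅, fun _ _ _ => Finset.disjoint_empty_left _, ?_, fun j => ?_⟩
    · ext i
      exact absurd (i.2) (by simp)
    · refine ⟨?_, ?_, rfl⟩
      · have : ((∅ : Finset (Fin (K * 0))) : Set (Fin (K * 0))) = ∅ := Finset.coe_empty
        rw [this]
        exact linearIndependent_empty_type
      · apply Submodule.eq_top_iff'.2
        intro x
        rw [hsub x]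
        exact Submodule.zero_mem _
  · -- main case
    have hfd : FiniteDimensional ℂ H := FiniteDimensional.of_finrank_pos (by omega)
    have hKn : 0 < K * n := Nat.mul_pos hK hn
    -- total norm
    have htot : ∑ i, ‖f i‖ ^ 2 = (n : ℝ) := by
      have b := stdOrthonormalBasis ℂ H
      rw [hdim] at b
      have h1 : ∀ i, ∑ a, ‖(inner ℂ (f i) (b a) : ℂ)‖ ^ 2 = ‖f i‖ ^ 2 := by
        intro i
        rw [← onb_sum_sq b (f i)]
        refine Finset.sum_congr rfl fun a _ => ?_
        rw [← norm_inner_symm]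
      calc ∑ i, ‖f i‖ ^ 2 = ∑ i, ∑ a, ‖(inner ℂ (f i) (b a) : ℂ)‖ ^ 2 :=
            Finset.sum_congr rfl fun i _ => (h1 i).symm
        _ = ∑ a, ∑ i, ‖(inner ℂ (f i) (b a) : ℂ)‖ ^ 2 := Finset.sum_comm
        _ = ∑ a : Fin n, ‖b a‖ ^ 2 := Finset.sum_congr rfl fun a _ => hparseval (b a)
        _ = ∑ a : Fin n, 1 := Finset.sum_congr rfl fun a _ => by
            rw [b.orthonormal.1 a]; norm_num
        _ = (n : ℝ) := by simp
    have hnormsq : ∀ i, ‖f i‖ ^ 2 = (n : ℝ) / (K * n) := by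
      intro i
      have hconst : ∀ j, ‖f j‖ ^ 2 = ‖f i‖ ^ 2 := fun j => by rw [hequal j i]
      have : ∑ j, ‖f j‖ ^ 2 = (K * n : ℕ) * ‖f i‖ ^ 2 := by
        rw [Finset.sum_congr rfl fun j _ => hconst j, Finset.sum_const, Finset.card_univ,
          Fintype.card_fin, nsmul_eq_mul]
      rw [this] at htot
      have hKn' : ((K : ℝ) * n) ≠ 0 := by positivity
      rw [eq_div_iff hKn']
      push_cast at htot
      linear_combination htot
    -- frame condition
    have hcond : ∀ J : Finset (Fin (K * n)), J ⊆ Finset.univ → J.Nonempty →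
        J.card ≤ K * Module.finrank ℂ (spn f J) := by
      intro J _ hne
      set W := spn f J with hW
      have hWfd : FiniteDimensional ℂ W := inferInstance
      set d := Module.finrank ℂ W with hd
      have bW := stdOrthonormalBasis ℂ W
      rw [← hd] at bW
      have hfiW : ∀ i ∈ J, f i ∈ W := fun i hi => mem_spn hi
      -- per-vector Parseval inside W
      have hinW : ∀ i ∈ J, ∑ a, ‖(inner ℂ (f i) ((bW a : W) : H) : ℂ)‖ ^ 2 = ‖f i‖ ^ 2 := by
        intro i hi
        have : ∀ a, (inner ℂ (f i) ((bW a : W) : H) : ℂ) =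
            (inner ℂ ((⟨f i, hfiW i hi⟩ : W)) (bW a) : ℂ) := fun a => rfl
        rw [Finset.sum_congr rfl fun a _ => by rw [this a]]
        have h2 : ∀ a, ‖(inner ℂ ((⟨f i, hfiW i hi⟩ : W)) (bW a) : ℂ)‖ =
            ‖(inner ℂ (bW a) ((⟨f i, hfiW i hi⟩ : W)) : ℂ)‖ := fun a => norm_inner_symm _ _
        rw [Finset.sum_congr rfl fun a _ => by rw [h2 a]]
        rw [onb_sum_sq bW]
        rfl
      -- total over W basis
      have hd_eq : ∑ a : Fin d, ∑ i, ‖(inner ℂ (f i) ((bW a : W) : H) : ℂ)‖ ^ 2 = (d : ℝ) := by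
        rw [Finset.sum_congr rfl fun a _ => hparseval ((bW a : W) : H)]
        have : ∀ a : Fin d, ‖((bW a : W) : H)‖ ^ 2 = 1 := by
          intro a
          have := bW.orthonormal.1 a
          rw [show ‖((bW a : W) : H)‖ = ‖bW a‖ from rfl, this]
          norm_num
        rw [Finset.sum_congr rfl fun a _ => this a]
        simp
      have hineq : (J.card : ℝ) * ((n : ℝ) / (K * n)) ≤ (d : ℝ) := by
        have h3 : ∑ i ∈ J, ‖f i‖ ^ 2 = (J.card : ℝ) * ((n : ℝ) / (K * n)) := by
          rw [Finset.sum_congr rfl fun i hi => hnormsq i, Finset.sum_const, nsmul_eq_mul]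
        rw [← h3, ← hd_eq]
        rw [Finset.sum_comm]
        have h4 : ∀ i ∈ J, ‖f i‖ ^ 2 = ∑ a, ‖(inner ℂ (f i) ((bW a : W) : H) : ℂ)‖ ^ 2 :=
          fun i hi => (hinW i hi).symm
        rw [Finset.sum_congr rfl h4]
        apply Finset.sum_le_sum_of_subset_of_nonneg (Finset.subset_univ J)
        intro i _ _
        positivity
      -- convert to ℕ
      have hKd : (J.card : ℝ) ≤ (K : ℝ) * d := by
        have hc : (n : ℝ) / (K * n) = 1 / K := by
          rw [div_eq_div_iff (by positivity) (by positivity)]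
          ring
        rw [hc] at hineq
        have hKpos : (0 : ℝ) < K := by positivity
        calc (J.card : ℝ) = ((J.card : ℝ) * (1 / K)) * K := by field_simp
          _ ≤ (d : ℝ) * K := by
              apply mul_le_mul_of_nonneg_right hineq (le_of_lt hKpos)
          _ = (K : ℝ) * d := by ring
      exact_mod_cast hKd
    obtain ⟨c, hc⟩ := radoHorn hK f Finset.univ hcond
    set part : Fin K → Finset (Fin (K * n)) := fun j => Finset.univ.filter fun i => c i = j
      with hpart
    have hcards : ∑ j, (part j).card = K * n := by
      rw [hpart]
      rw [← Finset.card_eq_sum_card_fiberwise (f := c) (t := Finset.univ)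
        (fun x _ => Finset.mem_univ _)]
      simp
    have hcard_le : ∀ j, (part j).card ≤ n := by
      intro j
      rw [indep_card (hc j)]
      calc Module.finrank ℂ (spn f (part j)) ≤ Module.finrank ℂ H := Submodule.finrank_le _
        _ = n := hdim
    have hcard_eq : ∀ j, (part j).card = n := by
      by_contra hcon
      push_neg at hcon
      obtain ⟨j0, hj0⟩ := hcon
      have hlt : (part j0).card < n := lt_of_le_of_ne (hcard_le j0) hj0
      have : ∑ j, (part j).card < ∑ j : Fin K, n := by
        apply Finset.sum_lt_sum (fun j _ => hcard_le j) ⟨j0, Finset.mem_univ _, hlt⟩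
      rw [hcards] at this
      simp only [Finset.sum_const, Finset.card_univ, Fintype.card_fin, smul_eq_mul] at this
      omega
    refine ⟨part, ?_, ?_, fun j => ⟨hc j, ?_, hcard_eq j⟩⟩
    · intro j k hjk
      rw [Finset.disjoint_left]
      intro a haj hak
      rw [hpart] at haj hak
      rw [Finset.mem_filter] at haj hak
      exact hjk (haj.2 ▸ hak.2 ▸ rfl)
    · ext i
      simp only [Finset.mem_biUnion, Finset.mem_univ, iff_true]
      exact ⟨c i, trivial, by rw [hpart]; exact Finset.mem_filter.2 ⟨Finset.mem_univ _, rfl⟩⟩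
    · -- spanning
      have h1 : Module.finrank ℂ (spn f (part j)) = n := by
        rw [← indep_card (hc j), hcard_eq j]
      have : spn f (part j) = ⊤ := Submodule.eq_top_of_finrank_eq (by rw [h1, hdim])
      exact this
end

section
/- Let {f_i}_{i=1}^M be unit-norm vectors in ℓ₂ⁿ forming a Bessel sequence with bound B, so that Σ_{m=1}^M |⟨f_i, f_m⟩|² ≤ B for each i. Fix S ∈ ℕ and δ > 0, and choose k with √(BS/k) ≤ δ. If {A_j}_{j=1}^r is a partition of {1,...,M} such that Σ_{m∈A_j, m≠i} |⟨f_i, f_m⟩|² ≤ B/k for all i ∈ A_j and all j, then for each j, every subset T ⊆ A_j with |T| ≤ S and all scalars {a_i}_{i∈T} satisfy (1-δ) Σ_{i∈T}|a_i|² ≤ ‖Σ_{i∈T} a_i f_i‖² ≤ (1+δ) Σ_{i∈T}|a_i|². -/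
/- From the proof of Theorem 8.16: a Bessel sequence of unit vectors whose Gram
matrix has small off-diagonal row sums on each block of a partition has small
`S`-restricted isometry constants on each block. -/

theorem restricted_isometry_from_row_bounds
    (n M : ℕ) (f : Fin M → EuclideanSpace ℂ (Fin n))
    (hnorm : ∀ i, ‖f i‖ = 1)
    (B : ℝ)
    (hBessel : ∀ g : EuclideanSpace ℂ (Fin n),
      ∑ i, ‖(inner ℂ g (f i) : ℂ)‖ ^ 2 ≤ B * ‖g‖ ^ 2)
    (hrow : ∀ i, ∑ m, ‖(inner ℂ (f i) (f m) : ℂ)‖ ^ 2 ≤ B)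
    (S : ℕ) (δ : ℝ) (hδ : 0 < δ)
    (k : ℕ) (hk : 0 < k) (hkδ : Real.sqrt (B * S / k) ≤ δ)
    (r : ℕ) (part : Fin r → Finset (Fin M))
    (hdisj : ∀ j l, j ≠ l → Disjoint (part j) (part l))
    (hcover : Finset.univ.biUnion part = Finset.univ)
    (hblock : ∀ j, ∀ i ∈ part j,
      ∑ m ∈ (part j).erase i, ‖(inner ℂ (f i) (f m) : ℂ)‖ ^ 2 ≤ B / k) :
    ∀ j, ∀ T ⊆ part j, T.card ≤ S → ∀ a : Fin M → ℂ,
      (1 - δ) * ∑ i ∈ T, ‖a i‖ ^ 2 ≤ ‖∑ i ∈ T, a i • f i‖ ^ 2 ∧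
      ‖∑ i ∈ T, a i • f i‖ ^ 2 ≤ (1 + δ) * ∑ i ∈ T, ‖a i‖ ^ 2 := by
  intro j T hT hTS a
  set N : ℝ := ∑ i ∈ T, ‖a i‖ ^ 2 with hNdef
  have hN0 : 0 ≤ N := Finset.sum_nonneg fun i _ => by positivity
  set g : EuclideanSpace ℂ (Fin n) := ∑ i ∈ T, a i • f i with hgdef
  set E : ℂ := ∑ i ∈ T, ∑ m ∈ T.erase i,
      (starRingEnd ℂ) (a i) * (a m * (inner ℂ (f i) (f m) : ℂ)) with hEdef
  have hinner : (inner ℂ g g : ℂ) = (N : ℂ) + E := by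
    rw [hgdef, sum_inner]
    have : ∀ i ∈ T, (inner ℂ (a i • f i) (∑ m ∈ T, a m • f m) : ℂ)
        = ∑ m ∈ T, (starRingEnd ℂ) (a i) * (a m * (inner ℂ (f i) (f m) : ℂ)) := by
      intro i _
      rw [inner_sum]
      refine Finset.sum_congr rfl fun m _ => ?_
      rw [inner_smul_left, inner_smul_right]
      try ring
    rw [Finset.sum_congr rfl this]
    have hsplit : ∀ i ∈ T,
        ∑ m ∈ T, (starRingEnd ℂ) (a i) * (a m * (inner ℂ (f i) (f m) : ℂ))
        = ((‖a i‖ : ℂ) ^ 2) + ∑ m ∈ T.erase i,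
            (starRingEnd ℂ) (a i) * (a m * (inner ℂ (f i) (f m) : ℂ)) := by
      intro i hi
      rw [← Finset.add_sum_erase T _ hi]
      congr 1
      rw [inner_self_eq_norm_sq_to_K, hnorm i]
      push_cast
      rw [one_pow, mul_one, RCLike.conj_mul]
      norm_cast
    rw [Finset.sum_congr rfl hsplit, Finset.sum_add_distrib, hEdef, hNdef]
    push_cast
    ring
  have hnormg : ‖g‖ ^ 2 = N + E.re := by
    rw [← @inner_self_eq_norm_sq ℂ, hinner]
    simp
  -- bound on ‖E‖
  have hrowT : ∀ i ∈ T,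
      ∑ m ∈ T.erase i, ‖(inner ℂ (f i) (f m) : ℂ)‖ ^ 2 ≤ B / k := by
    intro i hi
    refine le_trans (Finset.sum_le_sum_of_subset_of_nonneg
      (Finset.erase_subset_erase i hT) fun m _ _ => by positivity) (hblock j i (hT hi))
  have hEbound : ‖E‖ ≤ δ * N := by
    have step1 : ‖E‖ ≤ ∑ i ∈ T, ∑ m ∈ T.erase i,
        ‖a i‖ * (‖a m‖ * ‖(inner ℂ (f i) (f m) : ℂ)‖) := by
      refine le_trans (norm_sum_le _ _) (Finset.sum_le_sum fun i _ => ?_)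
      refine le_trans (norm_sum_le _ _) (Finset.sum_le_sum fun m _ => ?_)
      simp [norm_mul]
    have step2 : ∀ i ∈ T, ∑ m ∈ T.erase i, ‖a m‖ * ‖(inner ℂ (f i) (f m) : ℂ)‖
        ≤ Real.sqrt N * Real.sqrt (B / k) := by
      intro i hi
      refine le_trans (Real.sum_mul_le_sqrt_mul_sqrt _ _ _) ?_
      have h1 : ∑ m ∈ T.erase i, ‖a m‖ ^ 2 ≤ N := by
        rw [hNdef]
        exact Finset.sum_le_sum_of_subset_of_nonneg
          (Finset.erase_subset i T) fun m _ _ => by positivity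
      exact mul_le_mul (Real.sqrt_le_sqrt h1) (Real.sqrt_le_sqrt (hrowT i hi))
        (Real.sqrt_nonneg _) (Real.sqrt_nonneg _)
    have step3 : ∑ i ∈ T, ‖a i‖ ≤ Real.sqrt (S : ℝ) * Real.sqrt N := by
      have := Real.sum_mul_le_sqrt_mul_sqrt T (fun i => ‖a i‖) (fun _ => 1)
      simp only [mul_one, one_pow, Finset.sum_const, nsmul_eq_mul] at this
      refine le_trans this ?_
      rw [mul_comm]
      have : Real.sqrt (T.card : ℝ) ≤ Real.sqrt (S : ℝ) :=
        Real.sqrt_le_sqrt (by exact_mod_cast hTS)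
      exact mul_le_mul_of_nonneg_right this (Real.sqrt_nonneg _)
    calc ‖E‖ ≤ ∑ i ∈ T, ∑ m ∈ T.erase i,
        ‖a i‖ * (‖a m‖ * ‖(inner ℂ (f i) (f m) : ℂ)‖) := step1
      _ ≤ ∑ i ∈ T, ‖a i‖ * (Real.sqrt N * Real.sqrt (B / k)) := by
          refine Finset.sum_le_sum fun i hi => ?_
          rw [← Finset.mul_sum]
          exact mul_le_mul_of_nonneg_left (step2 i hi) (norm_nonneg _)
      _ = (∑ i ∈ T, ‖a i‖) * (Real.sqrt N * Real.sqrt (B / k)) := by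
          rw [Finset.sum_mul]
      _ ≤ (Real.sqrt (S : ℝ) * Real.sqrt N) * (Real.sqrt N * Real.sqrt (B / k)) := by
          refine mul_le_mul_of_nonneg_right step3 (by positivity)
      _ = (Real.sqrt (S : ℝ) * Real.sqrt (B / k)) * (Real.sqrt N * Real.sqrt N) := by ring
      _ = Real.sqrt (B * S / k) * N := by
          rw [Real.mul_self_sqrt hN0, ← Real.sqrt_mul (by positivity)]
          congr 2
          ring
      _ ≤ δ * N := mul_le_mul_of_nonneg_right hkδ hN0
  have hre : |E.re| ≤ δ * N := le_trans (Complex.abs_re_le_norm E) hEbound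
  rw [abs_le] at hre
  constructor <;> (rw [hnormg]; nlinarith [hre.1, hre.2])
end
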